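/- arXiv:2501.08679 — 12 statements merged into one kernel-verified Lean document; each statement's English description precedes it below -/
import Mathlib

section
/- Perturbation bound for the perturbed two-layer dynamics: let t₀ ≥ 0 and suppose |h(t)| ≤ κ for all t ≥ t₀, where κ > 0. Then (i) if t₀ ≤ s ≤ t and |z − θ(u)| ≥ κ for all u ∈ [s, t], then |z − θ(t)| ≤ |z − θ(s)| (i.e. |z − θ| is non-increasing while it stays ≥ κ); and (ii) if |z − θ(t₁)| ≤ κ for some t₁ ≥ t₀, then |z − θ(t)| ≤ κ for all t ≥ t₁. -/
open Real Set Filter Topology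

private lemma aux_abs_of_sq (x y : ℝ) (hy : 0 ≤ y) (hxy : x ^ 2 ≤ y ^ 2) : |x| ≤ y := by
  have := Real.sqrt_le_sqrt hxy
  rwa [Real.sqrt_sq_eq_abs, Real.sqrt_sq hy] at this

private lemma aux_sq_of_abs (x y : ℝ) (hxy : |x| ≤ y) : x ^ 2 ≤ y ^ 2 := by
  nlinarith [abs_nonneg x, sq_abs x]

/-- Perturbation bound for the perturbed two-layer dynamics:
`|z - θ|` is non-increasing while it stays `≥ κ`, and once `≤ κ` it stays `≤ κ`. -/
theorem stmt_0 (lam z κ t₀ : ℝ) (h a β : ℝ → ℝ)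
    (hlam : 0 < lam) (hh : ContinuousOn h (Ici 0))
    (ha0 : a 0 = Real.sqrt lam) (hβ0 : β 0 = 0)
    (hode : ∀ t ∈ Ici (0 : ℝ),
      HasDerivWithinAt β (a t * (z - a t * β t + h t)) (Ici 0) t ∧
      HasDerivWithinAt a (β t * (z - a t * β t + h t)) (Ici 0) t)
    (hκ : 0 < κ) (ht₀ : 0 ≤ t₀) (hhb : ∀ t, t₀ ≤ t → |h t| ≤ κ) :
    (∀ s t : ℝ, t₀ ≤ s → s ≤ t →
        (∀ u ∈ Icc s t, κ ≤ |z - a u * β u|) →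
        |z - a t * β t| ≤ |z - a s * β s|) ∧
    (∀ t₁ : ℝ, t₀ ≤ t₁ → |z - a t₁ * β t₁| ≤ κ →
        ∀ t : ℝ, t₁ ≤ t → |z - a t * β t| ≤ κ) := by
  set F : ℝ → ℝ := fun u => (z - a u * β u) ^ 2 with hFdef
  set D : ℝ → ℝ := fun u =>
    -2 * ((a u) ^ 2 + (β u) ^ 2) * ((z - a u * β u) * (z - a u * β u + h u)) with hDdef
  -- derivative of F within Ici 0
  have hF : ∀ t ∈ Ici (0 : ℝ), HasDerivWithinAt F (D t) (Ici 0) t := by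
    intro t ht
    obtain ⟨hb, ha⟩ := hode t ht
    have hθ : HasDerivWithinAt (fun u => a u * β u)
        (β t * (z - a t * β t + h t) * β t + a t * (a t * (z - a t * β t + h t)))
        (Ici 0) t := ha.mul hb
    have hg : HasDerivWithinAt (fun u => z - a u * β u)
        (0 - (β t * (z - a t * β t + h t) * β t + a t * (a t * (z - a t * β t + h t))))
        (Ici 0) t := (hasDerivWithinAt_const t (Ici 0) z).sub hθ
    have : HasDerivWithinAt (fun u => (z - a u * β u) ^ 2) _ (Ici 0) t := hg.fun_pow 2
    convert this using 1
    simp only [hDdef]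
    ring
  have hFc : ContinuousOn F (Ici 0) := fun t ht => (hF t ht).continuousWithinAt
  -- nonpositivity of D
  have hD : ∀ u : ℝ, t₀ ≤ u → κ ≤ |z - a u * β u| → D u ≤ 0 := by
    intro u hu hge
    have hhu := hhb u hu
    have hgg : 0 ≤ (z - a u * β u) * (z - a u * β u + h u) := by
      nlinarith [sq_abs (z - a u * β u), abs_mul (z - a u * β u) (h u),
        neg_abs_le ((z - a u * β u) * h u), abs_nonneg (h u), abs_nonneg (z - a u * β u)]
    have hs : (0:ℝ) ≤ (a u) ^ 2 + (β u) ^ 2 := by positivity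
    simp only [hDdef]
    nlinarith [mul_nonneg hs hgg]
  -- Part (i)
  have part1 : ∀ s t : ℝ, t₀ ≤ s → s ≤ t →
      (∀ u ∈ Icc s t, κ ≤ |z - a u * β u|) →
      |z - a t * β t| ≤ |z - a s * β s| := by
    intro s t hs hst hge
    rcases eq_or_lt_of_le hst with rfl | hlt
    · exact le_refl _
    have h0s : (0:ℝ) ≤ s := le_trans ht₀ hs
    have hsub : Icc s t ⊆ Ici (0:ℝ) := fun u hu => le_trans h0s hu.1
    have hda : ∀ u ∈ interior (Icc s t), HasDerivAt F (D u) u := by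
      intro u hu
      rw [interior_Icc] at hu
      have hu0 : (0:ℝ) < u := lt_of_le_of_lt h0s hu.1
      exact (hF u hu0.le).hasDerivAt (Ici_mem_nhds hu0)
    have hmono : AntitoneOn F (Icc s t) := by
      apply antitoneOn_of_deriv_nonpos (convex_Icc s t) (hFc.mono hsub)
      · intro u hu
        exact (hda u hu).differentiableAt.differentiableWithinAt
      · intro u hu
        rw [(hda u hu).deriv]
        rw [interior_Icc] at hu
        exact hD u (le_trans hs hu.1.le) (hge u ⟨hu.1.le, hu.2.le⟩)
    have hFF : F t ≤ F s := hmono ⟨le_refl s, hst⟩ ⟨hst, le_refl t⟩ hst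
    have : |z - a t * β t| ≤ |z - a s * β s| := by
      rw [← Real.sqrt_sq_eq_abs, ← Real.sqrt_sq_eq_abs]
      exact Real.sqrt_le_sqrt hFF
    exact this
  refine ⟨part1, ?_⟩
  -- Part (ii)
  intro t₁ ht₁ hg1 t ht
  by_contra hcon
  push_neg at hcon
  have h0t₁ : (0:ℝ) ≤ t₁ := le_trans ht₀ ht₁
  have hFt₁ : F t₁ ≤ κ ^ 2 := aux_sq_of_abs _ _ hg1
  have hFt : κ ^ 2 < F t := by
    have h1 : κ ^ 2 < |z - a t * β t| ^ 2 := by nlinarith [abs_nonneg (z - a t * β t)]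
    rwa [sq_abs] at h1
  set S : Set ℝ := Icc t₁ t ∩ F ⁻¹' Iic (κ ^ 2) with hSdef
  have hne : S.Nonempty := ⟨t₁, ⟨le_refl _, ht⟩, hFt₁⟩
  have hbdd : BddAbove S := ⟨t, fun u hu => hu.1.2⟩
  have hsubI : Icc t₁ t ⊆ Ici (0:ℝ) := fun u hu => le_trans h0t₁ hu.1
  have hclosed : IsClosed S :=
    ContinuousOn.preimage_isClosed_of_isClosed (hFc.mono hsubI) isClosed_Icc isClosed_Iic
  set T := sSup S with hTdef
  have hT : T ∈ S := hclosed.csSup_mem hne hbdd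
  have hTub : ∀ u ∈ S, u ≤ T := fun u hu => le_csSup hbdd hu
  have hTlt : T < t := by
    rcases lt_or_eq_of_le hT.1.2 with h' | h'
    · exact h'
    · exfalso; have := hT.2; rw [h'] at this; exact absurd this (not_le.mpr hFt)
  -- κ² ≤ F T
  have hFTge : κ ^ 2 ≤ F T := by
    by_contra h'
    push_neg at h'
    have hT0 : (0:ℝ) ≤ T := le_trans h0t₁ hT.1.1
    have hcw : ContinuousWithinAt F (Ici 0) T := hFc T hT0
    have hle : 𝓝[>] T ≤ 𝓝[Ici (0:ℝ)] T :=
      nhdsWithin_mono T (fun u hu => le_trans hT0 (le_of_lt hu))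
    have hev1 : ∀ᶠ u in 𝓝[>] T, F u < κ ^ 2 := hle (hcw (Iio_mem_nhds h'))
    have hev2 : ∀ᶠ u in 𝓝[>] T, u ∈ Ioc T t :=
      Ioc_mem_nhdsGT_of_mem ⟨le_refl T, hTlt⟩
    obtain ⟨u, hu1, hu2⟩ := (hev1.and hev2).exists
    have huS : u ∈ S := ⟨⟨le_trans hT.1.1 hu2.1.le, hu2.2⟩, le_of_lt hu1⟩
    exact absurd (hTub u huS) (not_le.mpr hu2.1)
  have hall : ∀ u ∈ Icc T t, κ ≤ |z - a u * β u| := by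
    intro u hu
    rcases eq_or_lt_of_le hu.1 with rfl | hlt
    · have := Real.sqrt_le_sqrt hFTge
      rwa [Real.sqrt_sq hκ.le, Real.sqrt_sq_eq_abs] at this
    · have huS : u ∉ S := fun hS => absurd (hTub u hS) (not_le.mpr hlt)
      have huI : u ∈ Icc t₁ t := ⟨le_trans hT.1.1 hlt.le, hu.2⟩
      have : ¬ F u ≤ κ ^ 2 := fun hF' => huS ⟨huI, hF'⟩
      push_neg at this
      have := Real.sqrt_le_sqrt this.le
      rwa [Real.sqrt_sq hκ.le, Real.sqrt_sq_eq_abs] at this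
  have hkey := part1 T t (le_trans ht₁ hT.1.1) hTlt.le hall
  have hTk : |z - a T * β T| ≤ κ := aux_abs_of_sq _ _ hκ.le hT.2
  exact absurd (le_trans hkey hTk) (not_le.mpr hcon)
end

section
/- Approaching from below (large κ) for the perturbed two-layer dynamics: assume z ≥ 0, let t₀ ≥ 0, suppose |h(t)| ≤ κ for all t ≥ t₀ for some κ > 0, and suppose z − M ≤ θ(t₀) ≤ z for some M ≥ 0. Then |z − θ(t)| ≤ 2κ for all t ≥ t₀ + T̄, where T̄ = κ⁻¹ [2 + (1/2) ln⁺(M/λ) + (1/2) ln⁺((z − 2κ)/λ)]. -/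
open Real Set

lemma key_arsinh_le (lam x : ℝ) (hlam : 0 < lam) (hx : 0 ≤ x) :
    Real.arsinh (2 * x / lam) ≤ 2 + max (Real.log (x / lam)) 0 := by
  set u := x / lam with hu
  have hu0 : 0 ≤ u := div_nonneg hx hlam.le
  have h2u : 2 * x / lam = 2 * u := by rw [hu]; ring
  rw [h2u, Real.arsinh]
  have hsqrt : Real.sqrt (1 + (2 * u) ^ 2) ≤ 1 + 2 * u := by
    rw [show (1 : ℝ) + 2 * u = Real.sqrt ((1 + 2 * u) ^ 2) from
      (Real.sqrt_sq (by linarith)).symm]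
    apply Real.sqrt_le_sqrt; nlinarith
  have hpos : (0:ℝ) < 2 * u + Real.sqrt (1 + (2 * u) ^ 2) := by
    have : (1:ℝ) ≤ Real.sqrt (1 + (2*u)^2) := by
      nlinarith [Real.sq_sqrt (show (0:ℝ) ≤ 1 + (2*u)^2 by positivity),
        Real.sqrt_nonneg (1 + (2*u)^2)]
    linarith
  have hlog1 : Real.log (2 * u + Real.sqrt (1 + (2 * u) ^ 2)) ≤ Real.log (4 * u + 1) :=
    Real.log_le_log hpos (by linarith)
  have hlog5 : Real.log 5 ≤ 2 := by
    rw [show (2:ℝ) = Real.log (Real.exp 2) from (Real.log_exp 2).symm]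
    apply Real.log_le_log (by norm_num)
    have h1 : (2.7182818283 : ℝ) < Real.exp 1 := Real.exp_one_gt_d9
    have : Real.exp 2 = Real.exp 1 * Real.exp 1 := by
      rw [← Real.exp_add]; norm_num
    nlinarith [Real.exp_pos 1]
  rcases le_or_gt u 1 with hle | hgt
  · have : Real.log (4 * u + 1) ≤ Real.log 5 := Real.log_le_log (by linarith) (by linarith)
    linarith [le_max_right (Real.log u) (0:ℝ)]
  · have : Real.log (4 * u + 1) ≤ Real.log (5 * u) := Real.log_le_log (by linarith) (by linarith)
    rw [Real.log_mul (by norm_num) (by linarith)] at this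
    linarith [le_max_left (Real.log u) (0:ℝ)]

set_option maxHeartbeats 1000000 in
/-- Approaching from below (large κ) for the perturbed two-layer dynamics. -/
theorem stmt_1 (lam z κ t₀ M : ℝ) (h a β : ℝ → ℝ)
    (hlam : 0 < lam) (hh : ContinuousOn h (Ici 0))
    (ha0 : a 0 = Real.sqrt lam) (hβ0 : β 0 = 0)
    (hode : ∀ t ∈ Ici (0 : ℝ),
      HasDerivWithinAt β (a t * (z - a t * β t + h t)) (Ici 0) t ∧
      HasDerivWithinAt a (β t * (z - a t * β t + h t)) (Ici 0) t)
    (hz : 0 ≤ z) (ht₀ : 0 ≤ t₀) (hκ : 0 < κ)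
    (hhb : ∀ t, t₀ ≤ t → |h t| ≤ κ) (hM : 0 ≤ M)
    (hlow : z - M ≤ a t₀ * β t₀) (hhigh : a t₀ * β t₀ ≤ z) :
    ∀ t : ℝ, t₀ + κ⁻¹ * (2 + (1 / 2) * max (Real.log (M / lam)) 0
        + (1 / 2) * max (Real.log ((z - 2 * κ) / lam)) 0) ≤ t →
      |z - a t * β t| ≤ 2 * κ := by
  intro t ht
  set E : ℝ := 2 + (1 / 2) * max (Real.log (M / lam)) 0
      + (1 / 2) * max (Real.log ((z - 2 * κ) / lam)) 0 with hE
  set T : ℝ := t₀ + κ⁻¹ * E with hT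
  have hE2 : 2 ≤ E := by
    have h1 := le_max_right (Real.log (M / lam)) (0:ℝ)
    have h2 := le_max_right (Real.log ((z - 2 * κ) / lam)) (0:ℝ)
    rw [hE]; linarith
  have hTt₀ : t₀ ≤ T := by
    have : 0 ≤ κ⁻¹ * E := mul_nonneg (inv_nonneg.2 hκ.le) (by linarith)
    rw [hT]; linarith
  have ht₀t : t₀ ≤ t := le_trans hTt₀ ht
  -- derivative of θ = a * β
  have hθd : ∀ s ∈ Ici (0:ℝ), HasDerivWithinAt (fun u => a u * β u)
      ((a s * a s + β s * β s) * (z - a s * β s + h s)) (Ici 0) s := by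
    intro s hs
    have := (hode s hs).2.fun_mul (hode s hs).1
    exact this.congr_deriv (by ring)
  have hθc : ContinuousOn (fun u => a u * β u) (Ici (0:ℝ)) :=
    fun s hs => (hθd s hs).continuousWithinAt
  -- conservation law  a² - β² = lam
  have hcons : ∀ s ∈ Ici (0:ℝ), a s * a s - β s * β s = lam := by
    have hg : ∀ x ∈ Ici (0:ℝ),
        HasDerivWithinAt (fun u => a u * a u - β u * β u) 0 (Ici 0) x := by
      intro x hx
      have h1 := (hode x hx).2
      have h2 := (hode x hx).1
      have := (h1.fun_mul h1).fun_sub (h2.fun_mul h2)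
      exact this.congr_deriv (by ring)
    intro s hs
    have hgc : ContinuousOn (fun u => a u * a u - β u * β u) (Ici (0:ℝ)) :=
      fun x hx => (hg x hx).continuousWithinAt
    have := constant_of_has_deriv_right_zero
      (f := fun u => a u * a u - β u * β u) (a := 0) (b := s)
      (hgc.mono (Icc_subset_Ici_self))
      (fun x hx => (hg x hx.1).mono (Ici_subset_Ici.2 hx.1))
      s (right_mem_Icc.2 hs)
    have h2 : a s * a s - β s * β s = a 0 * a 0 - β 0 * β 0 := this
    rw [h2, ha0, hβ0, Real.mul_self_sqrt hlam.le]; ring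
  -- bounds on S = a² + β²
  have hSlam : ∀ s ∈ Ici (0:ℝ), lam ≤ a s * a s + β s * β s := by
    intro s hs
    have := hcons s hs
    nlinarith [mul_self_nonneg (β s)]
  have hSpos : ∀ s ∈ Ici (0:ℝ), 0 < a s * a s + β s * β s :=
    fun s hs => lt_of_lt_of_le hlam (hSlam s hs)
  have hSsqrt : ∀ s ∈ Ici (0:ℝ),
      Real.sqrt (1 + (2 * (a s * β s) / lam) ^ 2) = (a s * a s + β s * β s) / lam := by
    intro s hs
    have hc := hcons s hs
    have h1 : 1 + (2 * (a s * β s) / lam) ^ 2 = ((a s * a s + β s * β s) / lam) ^ 2 := by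
      field_simp
      linear_combination (-(a s * a s - β s * β s + lam)) * hc
    rw [h1, Real.sqrt_sq (div_nonneg (hSpos s hs).le hlam.le)]
  -- derivative of ψ = arsinh (2θ/lam)
  have hψd : ∀ s ∈ Ici (0:ℝ), HasDerivWithinAt (fun u => Real.arsinh (2 * (a u * β u) / lam))
      (2 * (z - a s * β s + h s)) (Ici 0) s := by
    intro s hs
    have hin : HasDerivWithinAt (fun u => 2 * (a u * β u) / lam)
        (2 * ((a s * a s + β s * β s) * (z - a s * β s + h s)) / lam) (Ici 0) s :=
      ((hθd s hs).const_mul 2).div_const lam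
    have := hin.arsinh
    convert this using 1
    rw [smul_eq_mul, hSsqrt s hs]
    have hS := hSpos s hs
    field_simp
    have hS' : a s ^ 2 + β s ^ 2 ≠ 0 := by nlinarith
    field_simp
  have hψc : ContinuousOn (fun u => Real.arsinh (2 * (a u * β u) / lam)) (Ici (0:ℝ)) :=
    fun s hs => (hψd s hs).continuousWithinAt
  -- upper barrier: θ ≤ z + 2κ for all s ≥ t₀
  have hupper : ∀ s, t₀ ≤ s → a s * β s ≤ z + 2 * κ := by
    intro s hst
    have hsub : Icc t₀ s ⊆ Ici (0:ℝ) := fun x hx => le_trans ht₀ hx.1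
    have := image_le_of_deriv_right_lt_deriv_boundary'
      (f := fun u => a u * β u)
      (f' := fun u => (a u * a u + β u * β u) * (z - a u * β u + h u))
      (a := t₀) (b := s)
      (hθc.mono hsub)
      (fun x hx => (hθd x (le_trans ht₀ hx.1)).mono (Ici_subset_Ici.2 (le_trans ht₀ hx.1)))
      (B := fun _ => z + 2 * κ) (B' := fun _ => 0)
      (by show a t₀ * β t₀ ≤ z + 2 * κ; linarith)
      continuousOn_const
      (fun x _ => hasDerivWithinAt_const x _ _)
      ?_ (right_mem_Icc.2 hst)
    · exact this
    · intro x hx hfB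
      have hfB' : a x * β x = z + 2 * κ := hfB
      have hhx := abs_le.1 (hhb x hx.1)
      have : z - a x * β x + h x < 0 := by
        rw [hfB']; linarith
      exact mul_neg_of_pos_of_neg (hSpos x (le_trans ht₀ hx.1)) this
  -- lower barrier invariance
  have hlower : ∀ s, t₀ ≤ s → z - 2 * κ ≤ a s * β s →
      ∀ u, s ≤ u → z - 2 * κ ≤ a u * β u := by
    intro s hst hcs u hsu
    have h0s : (0:ℝ) ≤ s := le_trans ht₀ hst
    have hsub : Icc s u ⊆ Ici (0:ℝ) := fun x hx => le_trans h0s hx.1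
    have := image_le_of_deriv_right_lt_deriv_boundary'
      (f := fun x => -(a x * β x))
      (f' := fun x => -((a x * a x + β x * β x) * (z - a x * β x + h x)))
      (a := s) (b := u)
      ((hθc.mono hsub).neg)
      (fun x hx => ((hθd x (le_trans h0s hx.1)).mono (Ici_subset_Ici.2 (le_trans h0s hx.1))).neg)
      (B := fun _ => -(z - 2 * κ)) (B' := fun _ => 0)
      (by show -(a s * β s) ≤ -(z - 2 * κ); linarith)
      continuousOn_const
      (fun x _ => hasDerivWithinAt_const x _ _)
      ?_ (right_mem_Icc.2 hsu)
    · have h' : -(a u * β u) ≤ -(z - 2 * κ) := this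
      linarith
    · intro x hx hfB
      have hfB' : -(a x * β x) = -(z - 2 * κ) := hfB
      have hθx : a x * β x = z - 2 * κ := by linarith
      have hhx := abs_le.1 (hhb x (le_trans hst hx.1))
      have hp : 0 < z - a x * β x + h x := by rw [hθx]; linarith
      have h2 := mul_pos (hSpos x (le_trans h0s hx.1)) hp
      show -((a x * a x + β x * β x) * (z - a x * β x + h x)) < 0
      linarith
  -- hitting + invariance: θ ≥ z - 2κ for all u ≥ T
  have hlow2 : ∀ u, T ≤ u → z - 2 * κ ≤ a u * β u := by
    intro u hu
    by_cases hex : ∃ s ∈ Icc t₀ u, z - 2 * κ ≤ a s * β s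
    · obtain ⟨s, hs, hcs⟩ := hex
      exact hlower s hs.1 hcs u hs.2
    · exfalso
      push_neg at hex
      have hsub : Icc t₀ T ⊆ Ici (0:ℝ) := fun x hx => le_trans ht₀ hx.1
      have key := image_le_of_deriv_right_le_deriv_boundary
        (f := fun x => 2 * κ * (x - t₀) + Real.arsinh (2 * (a t₀ * β t₀) / lam))
        (f' := fun _ => 2 * κ) (a := t₀) (b := T)
        (Continuous.continuousOn
          (((continuous_const.mul (continuous_id.sub continuous_const)).add continuous_const)))
        (fun x _ => by
          have : HasDerivWithinAt (fun x : ℝ => 2 * κ * (x - t₀)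
              + Real.arsinh (2 * (a t₀ * β t₀) / lam)) (2 * κ * 1) (Ici x) x :=
            (((hasDerivWithinAt_id x (Ici x)).sub_const t₀).const_mul (2 * κ)).add_const _
          simpa using this)
        (B := fun x => Real.arsinh (2 * (a x * β x) / lam))
        (B' := fun x => 2 * (z - a x * β x + h x))
        (by simp)
        (hψc.mono hsub)
        (fun x hx => (hψd x (le_trans ht₀ hx.1)).mono (Ici_subset_Ici.2 (le_trans ht₀ hx.1)))
        ?_ (right_mem_Icc.2 hTt₀)
      · -- derive contradiction from key
        have key2 : 2 * κ * (T - t₀) + Real.arsinh (2 * (a t₀ * β t₀) / lam)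
            ≤ Real.arsinh (2 * (a T * β T) / lam) := key
        have hTsub : 2 * κ * (T - t₀) = 2 * E := by
          rw [hT]; field_simp; ring
        rw [hTsub] at key2
        -- θ T < z - 2κ
        have hθT : a T * β T < z - 2 * κ := hex T ⟨hTt₀, hu⟩
        have hmono1 : Real.arsinh (2 * (a T * β T) / lam)
            < Real.arsinh (2 * (z - 2 * κ) / lam) := by
          rw [Real.arsinh_lt_arsinh, div_lt_div_iff₀ hlam hlam]
          nlinarith
        have hψt₀ : -Real.arsinh (2 * M / lam) ≤ Real.arsinh (2 * (a t₀ * β t₀) / lam) := by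
          rw [← Real.arsinh_neg, Real.arsinh_le_arsinh, neg_div', div_le_div_iff₀ hlam hlam]
          nlinarith
        have harsM : Real.arsinh (2 * M / lam) ≤ 2 + max (Real.log (M / lam)) 0 :=
          key_arsinh_le lam M hlam hM
        have harsc : Real.arsinh (2 * (z - 2 * κ) / lam)
            ≤ 2 + max (Real.log ((z - 2 * κ) / lam)) 0 := by
          rcases le_or_gt 0 (z - 2 * κ) with hc0 | hc0
          · exact key_arsinh_le lam (z - 2 * κ) hlam hc0
          · have h1 : 2 * (z - 2 * κ) / lam ≤ 0 :=
              div_nonpos_of_nonpos_of_nonneg (by linarith) hlam.le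
            have h2 : Real.arsinh (2 * (z - 2 * κ) / lam) ≤ 0 :=
              Real.arsinh_nonpos_iff.2 h1
            linarith [le_max_right (Real.log ((z - 2 * κ) / lam)) (0:ℝ)]
        linarith
      · intro x hx
        show (2 * κ : ℝ) ≤ 2 * (z - a x * β x + h x)
        have hθx := hex x ⟨hx.1, le_trans hx.2.le hu⟩
        have hhx := abs_le.1 (hhb x hx.1)
        linarith
  -- conclusion
  have h1 := hlow2 t ht
  have h2 := hupper t ht₀t
  rw [abs_le]
  constructor <;> linarith
end

section
/- Signal time from below (small κ) for the perturbed two-layer dynamics: let t₀ ≥ 0, suppose |h(t)| ≤ κ for all t ≥ t₀ for some κ > 0, suppose z − M ≤ θ(t₀) ≤ z for some M ≥ 0, and assume z ≥ 2κ. Then θ(t) ≥ z/4 for all t ≥ t₀ + T̄sig, where T̄sig = 4 z⁻¹ [2 + (1/2) ln⁺(M/λ) + (1/2) ln⁺(z/(4λ))]. -/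
open Real Set

lemma arsinh_aux (w : ℝ) (hw : 0 ≤ w) :
    Real.arsinh (2 * w) < 2 + max (Real.log w) 0 := by
  have hsqrt : Real.sqrt (1 + (2 * w) ^ 2) ≤ 2 * w + 1 := by
    rw [show (1 : ℝ) + (2 * w) ^ 2 = (2*w+1)^2 - 4*w by ring]
    calc Real.sqrt ((2*w+1)^2 - 4*w) ≤ Real.sqrt ((2*w+1)^2) := by
          apply Real.sqrt_le_sqrt; nlinarith
      _ = 2*w+1 := Real.sqrt_sq (by linarith)
  have h1 : Real.arsinh (2 * w) ≤ Real.log (4 * w + 1) := by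
    rw [Real.arsinh]
    apply Real.log_le_log (by positivity)
    linarith
  have hlog5 : Real.log 5 < 2 := by
    rw [Real.log_lt_iff_lt_exp (by norm_num)]
    have h := Real.exp_one_gt_d9
    have : Real.exp 2 = Real.exp 1 * Real.exp 1 := by
      rw [← Real.exp_add]; norm_num
    nlinarith
  rcases le_or_gt w 1 with hw1 | hw1
  · have : Real.log (4 * w + 1) ≤ Real.log 5 :=
      Real.log_le_log (by positivity) (by linarith)
    have h0 : (0:ℝ) ≤ max (Real.log w) 0 := le_max_right _ _
    linarith
  · have h2 : Real.log (4 * w + 1) ≤ Real.log (5 * w) :=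
      Real.log_le_log (by positivity) (by linarith)
    have h3 : Real.log (5 * w) = Real.log 5 + Real.log w :=
      Real.log_mul (by norm_num) (by linarith)
    have h4 : Real.log w ≤ max (Real.log w) 0 := le_max_left _ _
    linarith

/-- Signal time from below (small κ) for the perturbed two-layer dynamics. -/
theorem stmt_2 (lam z κ t₀ M : ℝ) (h a β : ℝ → ℝ)
    (hlam : 0 < lam) (hh : ContinuousOn h (Ici 0))
    (ha0 : a 0 = Real.sqrt lam) (hβ0 : β 0 = 0)
    (hode : ∀ t ∈ Ici (0 : ℝ),
      HasDerivWithinAt β (a t * (z - a t * β t + h t)) (Ici 0) t ∧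
      HasDerivWithinAt a (β t * (z - a t * β t + h t)) (Ici 0) t)
    (ht₀ : 0 ≤ t₀) (hκ : 0 < κ)
    (hhb : ∀ t, t₀ ≤ t → |h t| ≤ κ) (hM : 0 ≤ M)
    (hlow : z - M ≤ a t₀ * β t₀) (hhigh : a t₀ * β t₀ ≤ z)
    (hz : 2 * κ ≤ z) :
    ∀ t : ℝ, t₀ + 4 * z⁻¹ * (2 + (1 / 2) * max (Real.log (M / lam)) 0
        + (1 / 2) * max (Real.log (z / (4 * lam))) 0) ≤ t →
      z / 4 ≤ a t * β t := by
  have hz0 : 0 < z := lt_of_lt_of_le (by linarith) hz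
  set θ : ℝ → ℝ := fun t => a t * β t with hθdef
  set Tb : ℝ := 4 * z⁻¹ * (2 + (1 / 2) * max (Real.log (M / lam)) 0
      + (1 / 2) * max (Real.log (z / (4 * lam))) 0) with hTbdef
  have hTbpos : 0 < Tb := by
    have h1 : (0:ℝ) ≤ max (Real.log (M / lam)) 0 := le_max_right _ _
    have h2 : (0:ℝ) ≤ max (Real.log (z / (4 * lam))) 0 := le_max_right _ _
    have : 0 < z⁻¹ := inv_pos.2 hz0
    nlinarith
  -- continuity
  have hacont : ContinuousOn a (Ici 0) := fun t ht => (hode t ht).2.continuousWithinAt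
  have hβcont : ContinuousOn β (Ici 0) := fun t ht => (hode t ht).1.continuousWithinAt
  have hθcont : ContinuousOn θ (Ici 0) := hacont.mul hβcont
  -- derivative of θ within Ici 0
  have hθd : ∀ t ∈ Ici (0:ℝ), HasDerivWithinAt θ
      ((a t * a t + β t * β t) * (z - θ t + h t)) (Ici 0) t := by
    intro t ht
    have : HasDerivWithinAt (fun y => a y * β y) (β t * (z - a t * β t + h t) * β t + a t * (a t * (z - a t * β t + h t))) (Ici 0) t := (hode t ht).2.mul (hode t ht).1
    convert this using 1
    show (a t * a t + β t * β t) * (z - a t * β t + h t) = _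
    ring
  -- invariant a² - β² = lam
  have hinv : ∀ t, 0 ≤ t → a t * a t - β t * β t = lam := by
    intro t ht
    have hcont : ContinuousOn (fun s => a s * a s - β s * β s) (Icc 0 t) :=
      ((hacont.mul hacont).sub (hβcont.mul hβcont)).mono (Icc_subset_Ici_self)
    have hder : ∀ x ∈ Ico (0:ℝ) t, HasDerivWithinAt (fun s => a s * a s - β s * β s)
        0 (Ici x) x := by
      intro x hx
      have hx0 : x ∈ Ici (0:ℝ) := hx.1
      have h1 := ((hode x hx0).2.mul (hode x hx0).2).sub ((hode x hx0).1.mul (hode x hx0).1)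
      have h2 : β x * (z - a x * β x + h x) * a x + a x * (β x * (z - a x * β x + h x)) -
          (a x * (z - a x * β x + h x) * β x + β x * (a x * (z - a x * β x + h x))) = 0 := by
        ring
      rw [h2] at h1
      exact h1.mono (Ici_subset_Ici.2 hx.1)
    have := constant_of_has_deriv_right_zero hcont hder t (right_mem_Icc.2 ht)
    rw [this, ha0, hβ0, Real.mul_self_sqrt hlam.le]
    ring
  -- lower bound on a² + β²
  have hS : ∀ t, 0 ≤ t → lam ≤ a t * a t + β t * β t := by
    intro t ht
    nlinarith [hinv t ht, mul_self_nonneg (β t)]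
  -- sqrt identity
  have hsq : ∀ t, 0 ≤ t → Real.sqrt (1 + (2 * θ t / lam) ^ 2)
      = (a t * a t + β t * β t) / lam := by
    intro t ht
    have e2 : (a t * a t + β t * β t) ^ 2 = lam ^ 2 + (2 * (a t * β t)) ^ 2 := by
      linear_combination (a t * a t - β t * β t + lam) * hinv t ht
    have e : 1 + (2 * θ t / lam) ^ 2 = ((a t * a t + β t * β t) / lam) ^ 2 := by
      simp only [hθdef]
      field_simp
      linarith [e2]
    rw [e, Real.sqrt_sq (div_nonneg (le_trans hlam.le (hS t ht)) hlam.le)]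
  -- HasDerivAt at interior points
  have hθat : ∀ x, 0 < x → HasDerivAt θ ((a x * a x + β x * β x) * (z - θ x + h x)) x :=
    fun x hx => (hθd x (le_of_lt hx)).hasDerivAt (Ici_mem_nhds hx)
  -- persistence
  have hpers : ∀ s, t₀ ≤ s → z / 4 ≤ θ s → ∀ t, s ≤ t → z / 4 ≤ θ t := by
    intro s hs hθs t hst
    by_contra hlt
    push_neg at hlt
    have hsne : s < t := by
      rcases lt_or_eq_of_le hst with h' | h'
      · exact h'
      · exfalso; rw [h'] at hθs; linarith
    set Sset : Set ℝ := Icc s t ∩ θ ⁻¹' (Ici (z/4)) with hSdef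
    have hclosed : IsClosed Sset := by
      apply ContinuousOn.preimage_isClosed_of_isClosed
        (hθcont.mono (fun x hx => le_trans (le_trans ht₀ hs) hx.1))
        isClosed_Icc isClosed_Ici
    have hne : Sset.Nonempty := ⟨s, ⟨left_mem_Icc.2 hst, hθs⟩⟩
    have hbdd : BddAbove Sset := (bddAbove_Icc).mono (inter_subset_left)
    set u : ℝ := sSup Sset with hudef
    have hu : u ∈ Sset := hclosed.csSup_mem hne hbdd
    have hut : u < t := by
      rcases lt_or_eq_of_le hu.1.2 with h' | h'
      · exact h'
      · exfalso; have := hu.2; rw [h'] at this; exact absurd this (not_le.2 hlt)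
    have hsu : s ≤ u := hu.1.1
    have hub : ∀ r, u < r → r ≤ t → θ r < z / 4 := by
      intro r h1 h2
      by_contra hc
      push_neg at hc
      have : r ∈ Sset := ⟨⟨le_trans hsu h1.le, h2⟩, hc⟩
      have := le_csSup hbdd this
      linarith
    have hmono : StrictMonoOn θ (Icc u t) := by
      apply strictMonoOn_of_hasDerivWithinAt_pos (convex_Icc u t)
        (hθcont.mono (fun x hx => le_trans (le_trans (le_trans ht₀ hs) hsu) hx.1))
        (f' := fun x => (a x * a x + β x * β x) * (z - θ x + h x))
      · intro x hx
        rw [interior_Icc] at hx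
        have hx0 : 0 < x := lt_of_le_of_lt (le_trans (le_trans ht₀ hs) hsu) hx.1
        exact (hθat x hx0).hasDerivWithinAt
      · intro x hx
        rw [interior_Icc] at hx
        have hxt₀ : t₀ ≤ x := le_trans (le_trans hs hsu) hx.1.le
        have hθx : θ x < z / 4 := hub x hx.1 hx.2.le
        have hhx : -κ ≤ h x := neg_le_of_abs_le (hhb x hxt₀)
        have h1 : 0 < z - θ x + h x := by linarith
        have h2 : 0 < a x * a x + β x * β x :=
          lt_of_lt_of_le hlam (hS x (le_trans ht₀ hxt₀))
        exact mul_pos h2 h1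
    have huθ : z / 4 ≤ θ u := hu.2
    have := hmono (left_mem_Icc.2 hut.le) (right_mem_Icc.2 hut.le) hut
    linarith
  -- escape
  have hesc : ∃ s ∈ Icc t₀ (t₀ + Tb), z / 4 ≤ θ s := by
    by_contra hcon
    push_neg at hcon
    -- G := Ψ ∘ θ - id is monotone on [t₀, t₀+Tb]
    set G : ℝ → ℝ := fun t => 2 / z * Real.arsinh (2 * θ t / lam) - t with hGdef
    have hGat : ∀ x ∈ Ioo t₀ (t₀ + Tb), HasDerivAt G
        (2 / z * ((Real.sqrt (1 + (2 * θ x / lam) ^ 2))⁻¹ *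
          (2 * ((a x * a x + β x * β x) * (z - θ x + h x)) / lam)) - 1) x := by
      intro x hx
      have hx0 : 0 < x := lt_of_le_of_lt ht₀ hx.1
      have h1 : HasDerivAt (fun t => 2 * θ t / lam)
          (2 * ((a x * a x + β x * β x) * (z - θ x + h x)) / lam) x :=
        ((hθat x hx0).const_mul 2).div_const lam
      have h2 := (Real.hasDerivAt_arsinh (2 * θ x / lam)).comp x h1
      exact ((h2.const_mul (2/z)).sub (hasDerivAt_id x))
    have hGval : ∀ x ∈ Ioo t₀ (t₀ + Tb),
        (0:ℝ) ≤ 2 / z * ((Real.sqrt (1 + (2 * θ x / lam) ^ 2))⁻¹ *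
          (2 * ((a x * a x + β x * β x) * (z - θ x + h x)) / lam)) - 1 := by
      intro x hx
      have hx0 : (0:ℝ) ≤ x := le_trans ht₀ hx.1.le
      rw [hsq x hx0]
      have hSpos : 0 < a x * a x + β x * β x := lt_of_lt_of_le hlam (hS x hx0)
      have heq : ((a x * a x + β x * β x) / lam)⁻¹ *
          (2 * ((a x * a x + β x * β x) * (z - θ x + h x)) / lam)
          = 2 * (z - θ x + h x) := by
        rw [inv_div, div_mul_div_comm, div_eq_iff (mul_pos hSpos hlam).ne']
        ring
      rw [heq]
      have hθx : θ x < z / 4 := hcon x ⟨hx.1.le, hx.2.le⟩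
      have hhx : -κ ≤ h x := neg_le_of_abs_le (hhb x hx.1.le)
      have hΦ : z / 4 ≤ z - θ x + h x := by linarith
      rw [show 2 / z * (2 * (z - θ x + h x)) = 4 * (z - θ x + h x) / z from by ring,
        sub_nonneg, le_div_iff₀ hz0]
      linarith
    have hmono : MonotoneOn G (Icc t₀ (t₀ + Tb)) := by
      apply monotoneOn_of_deriv_nonneg (convex_Icc _ _)
      · have h1 : ContinuousOn (fun t => 2 * θ t / lam) (Icc t₀ (t₀ + Tb)) :=
          (continuousOn_const.mul (hθcont.mono (fun x hx => le_trans ht₀ hx.1))).div_const lam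
        exact (continuousOn_const.mul h1.arsinh).sub continuousOn_id
      · intro x hx
        rw [interior_Icc] at hx
        exact (hGat x hx).differentiableAt.differentiableWithinAt
      · intro x hx
        rw [interior_Icc] at hx
        rw [(hGat x hx).deriv]
        exact hGval x hx
    have hkey := hmono (left_mem_Icc.2 (by linarith)) (right_mem_Icc.2 (by linarith))
      (by linarith)
    simp only [hGdef] at hkey
    -- bound arsinh terms
    have hθT : θ (t₀ + Tb) < z / 4 := hcon _ (right_mem_Icc.2 (by linarith))
    have hθt₀ : -M ≤ θ t₀ := le_trans (by linarith) hlow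
    have hA1 : Real.arsinh (2 * θ (t₀ + Tb) / lam) ≤ Real.arsinh (2 * (z / (4 * lam))) := by
      rw [Real.arsinh_le_arsinh,
        show 2 * (z / (4 * lam)) = (z / 2) / lam from by ring,
        show 2 * θ (t₀ + Tb) / lam = (2 * θ (t₀ + Tb)) / lam from by ring,
        div_le_div_iff_of_pos_right hlam]
      linarith
    have hA2 : -Real.arsinh (2 * (M / lam)) ≤ Real.arsinh (2 * θ t₀ / lam) := by
      rw [← Real.arsinh_neg, Real.arsinh_le_arsinh,
        show -(2 * (M / lam)) = (-(2 * M)) / lam from by ring,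
        show 2 * θ t₀ / lam = (2 * θ t₀) / lam from by ring,
        div_le_div_iff_of_pos_right hlam]
      linarith
    have hB1 : Real.arsinh (2 * (z / (4 * lam))) < 2 + max (Real.log (z / (4 * lam))) 0 :=
      arsinh_aux _ (by positivity)
    have hB2 : Real.arsinh (2 * (M / lam)) < 2 + max (Real.log (M / lam)) 0 :=
      arsinh_aux _ (div_nonneg hM hlam.le)
    have h2z : (0:ℝ) < 2 / z := by positivity
    have hq : Tb ≤ 2 / z * Real.arsinh (2 * θ (t₀ + Tb) / lam)
        - 2 / z * Real.arsinh (2 * θ t₀ / lam) := by linarith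
    have h' : Real.arsinh (2 * θ (t₀ + Tb) / lam) - Real.arsinh (2 * θ t₀ / lam)
        ≤ Real.arsinh (2 * (z / (4 * lam))) + Real.arsinh (2 * (M / lam)) := by linarith
    have hstep : 2 / z * Real.arsinh (2 * θ (t₀ + Tb) / lam)
        - 2 / z * Real.arsinh (2 * θ t₀ / lam)
        ≤ 2 / z * (Real.arsinh (2 * (z / (4 * lam))) + Real.arsinh (2 * (M / lam))) := by
      rw [show 2 / z * Real.arsinh (2 * θ (t₀ + Tb) / lam)
          - 2 / z * Real.arsinh (2 * θ t₀ / lam)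
          = 2 / z * (Real.arsinh (2 * θ (t₀ + Tb) / lam)
            - Real.arsinh (2 * θ t₀ / lam)) from by ring]
      exact mul_le_mul_of_nonneg_left h' h2z.le
    have hstrict : 2 / z * (Real.arsinh (2 * (z / (4 * lam))) + Real.arsinh (2 * (M / lam)))
        < 2 / z * (4 + max (Real.log (M / lam)) 0 + max (Real.log (z / (4 * lam))) 0) :=
      mul_lt_mul_of_pos_left (by linarith) h2z
    have hTbeq : 2 / z * (4 + max (Real.log (M / lam)) 0 + max (Real.log (z / (4 * lam))) 0)
        = Tb := by rw [hTbdef]; ring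
    linarith
  obtain ⟨s, hsmem, hsθ⟩ := hesc
  intro t ht
  exact hpers s hsmem.1 hsθ t (le_trans hsmem.2 ht)
end

section
/- Approaching from above for the perturbed two-layer dynamics: assume z ≥ 0, let t₀ ≥ 0, suppose |h(t)| ≤ κ for all t ≥ t₀ for some κ > 0, and suppose θ(t₀) ≥ z. Then |z − θ(t)| ≤ 2·max(z, 2κ) for all t ≥ t₀ + (max(z, 2κ))⁻¹. -/
open Real Set Filter Topology

lemma barrier_lemma (f F : ℝ → ℝ) (s c : ℝ) (hs : 0 ≤ s)
    (hder : ∀ t ∈ Ici (0:ℝ), HasDerivWithinAt f (F t) (Ici 0) t)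
    (hfs : f s ≤ c)
    (hF : ∀ t, s ≤ t → c ≤ f t → F t < 0) :
    ∀ t, s ≤ t → f t ≤ c := by
  intro t₁ hst₁
  by_contra hgt
  push_neg at hgt
  have hcont : ContinuousOn f (Ici 0) := fun x hx => (hder x hx).continuousWithinAt
  have hs1 : s < t₁ := hst₁.lt_of_ne (by rintro rfl; exact absurd hfs hgt.not_ge)
  have hsub : Icc s t₁ ⊆ Ici (0:ℝ) := fun x hx => le_trans hs hx.1
  set S : Set ℝ := Icc s t₁ ∩ f ⁻¹' (Iic c) with hSdef
  have hsS : s ∈ S := ⟨⟨le_refl s, hs1.le⟩, hfs⟩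
  have hSne : S.Nonempty := ⟨s, hsS⟩
  have hSbdd : BddAbove S := ⟨t₁, fun x hx => hx.1.2⟩
  have hScl : IsClosed S :=
    (hcont.mono hsub).preimage_isClosed_of_isClosed isClosed_Icc isClosed_Iic
  set T := sSup S with hTdef
  have hTS : T ∈ S := hScl.csSup_mem hSne hSbdd
  have hsT : s ≤ T := hTS.1.1
  have hfT : f T ≤ c := hTS.2
  have hTt₁ : T < t₁ := hTS.1.2.lt_of_ne (by
    rintro h; rw [h] at hfT; exact absurd hfT hgt.not_ge)
  have hT0 : (0:ℝ) ≤ T := le_trans hs hsT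
  have hne : (𝓝[Ioi T] T).NeBot := nhdsGT_neBot T
  have hlt₁ : ∀ᶠ x in 𝓝[Ioi T] T, x < t₁ :=
    eventually_nhdsWithin_of_eventually_nhds (tendsto_id.eventually_lt_const hTt₁)
  have hmemIoi : ∀ᶠ x in 𝓝[Ioi T] T, T < x :=
    eventually_mem_nhdsWithin
  have key : ∃ x, T < x ∧ x ≤ t₁ ∧ f x ≤ c := by
    rcases lt_or_eq_of_le hfT with hlt | heq
    · have hc : Tendsto f (𝓝[Ici 0] T) (𝓝 (f T)) := hcont T hT0
      have h1 : ∀ᶠ x in 𝓝[Ici 0] T, f x < c := hc.eventually_lt_const hlt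
      have h1' : ∀ᶠ x in 𝓝[Ioi T] T, f x < c :=
        h1.filter_mono (nhdsWithin_mono T (fun x hx => le_trans hT0 (le_of_lt hx)))
      obtain ⟨x, hx1, hx2, hx3⟩ := (h1'.and (hlt₁.and hmemIoi)).exists
      exact ⟨x, hx3, hx2.le, hx1.le⟩
    · have hFT : F T < 0 := hF T hsT heq.ge
      have hslope : Tendsto (slope f T) (𝓝[Ici 0 \ {T}] T) (𝓝 (F T)) :=
        hasDerivWithinAt_iff_tendsto_slope.1 (hder T hT0)
      have hsl : ∀ᶠ x in 𝓝[Ici 0 \ {T}] T, slope f T x < 0 :=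
        hslope.eventually_lt_const hFT
      have hsl' : ∀ᶠ x in 𝓝[Ioi T] T, slope f T x < 0 :=
        hsl.filter_mono (nhdsWithin_mono T (fun x (hx : T < x) =>
          (⟨le_trans hT0 (le_of_lt hx), ne_of_gt hx⟩ : x ∈ Ici 0 ∧ x ≠ T)))
      obtain ⟨x, hx1, hx2, hx3⟩ := (hsl'.and (hlt₁.and hmemIoi)).exists
      refine ⟨x, hx3, hx2.le, ?_⟩
      have hxT : 0 < x - T := sub_pos.mpr hx3
      rw [slope_def_field] at hx1
      have := (div_neg_iff.mp hx1)
      rcases this with ⟨h1, h2⟩ | ⟨h1, h2⟩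
      · linarith
      · linarith [heq ▸ h1]
  obtain ⟨x, hTx, hxt₁, hfx⟩ := key
  exact absurd (le_csSup hSbdd ⟨⟨le_trans hsT hTx.le, hxt₁⟩, hfx⟩) hTx.not_ge

/-- Approaching from above for the perturbed two-layer dynamics. -/
theorem stmt_3 (lam z κ t₀ : ℝ) (h a β : ℝ → ℝ)
    (hlam : 0 < lam) (hh : ContinuousOn h (Ici 0))
    (ha0 : a 0 = Real.sqrt lam) (hβ0 : β 0 = 0)
    (hode : ∀ t ∈ Ici (0 : ℝ),
      HasDerivWithinAt β (a t * (z - a t * β t + h t)) (Ici 0) t ∧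
      HasDerivWithinAt a (β t * (z - a t * β t + h t)) (Ici 0) t)
    (hz : 0 ≤ z) (ht₀ : 0 ≤ t₀) (hκ : 0 < κ)
    (hhb : ∀ t, t₀ ≤ t → |h t| ≤ κ)
    (hinit : z ≤ a t₀ * β t₀) :
    ∀ t : ℝ, t₀ + (max z (2 * κ))⁻¹ ≤ t →
      |z - a t * β t| ≤ 2 * max z (2 * κ) := by
  set m := max z (2 * κ) with hm
  have hm2κ : 2 * κ ≤ m := le_max_right _ _
  have hmz : z ≤ m := le_max_left _ _
  have hmpos : 0 < m := lt_of_lt_of_le (by linarith) hm2κ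
  -- derivative of θ = a * β
  set Q : ℝ → ℝ := fun t => z - a t * β t + h t with hQdef
  set P : ℝ → ℝ := fun t => a t * a t + β t * β t with hPdef
  have hθ : ∀ t ∈ Ici (0:ℝ),
      HasDerivWithinAt (fun t => a t * β t) (P t * Q t) (Ici 0) t := by
    intro t ht
    have := (hode t ht).2.mul (hode t ht).1
    refine this.congr_deriv ?_
    simp only [hPdef, hQdef]; ring
  have hθcont : ContinuousOn (fun t => a t * β t) (Ici 0) :=
    fun x hx => (hθ x hx).continuousWithinAt
  -- conservation: a² - β² = lam
  have hcons : ∀ t ∈ Ici (0:ℝ), a t * a t - β t * β t = lam := by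
    intro t ht
    have hder : ∀ x ∈ Ici (0:ℝ),
        HasDerivWithinAt (fun t => a t * a t - β t * β t) 0 (Ici 0) x := by
      intro x hx
      have h2 := ((hode x hx).2.mul (hode x hx).2).sub ((hode x hx).1.mul (hode x hx).1)
      refine h2.congr_deriv ?_
      ring
    have hcont : ContinuousOn (fun t => a t * a t - β t * β t) (Ici 0) :=
      fun x hx => (hder x hx).continuousWithinAt
    have := constant_of_has_deriv_right_zero (f := fun t => a t * a t - β t * β t)
      (hcont.mono (Icc_subset_Ici_self : Icc (0:ℝ) t ⊆ Ici 0))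
      (fun x hx => (hder x hx.1).mono (Ici_subset_Ici.mpr hx.1)) t ⟨ht, le_refl t⟩
    rw [this, ha0, hβ0]
    simp [Real.mul_self_sqrt hlam.le]
  have hPlam : ∀ t ∈ Ici (0:ℝ), lam ≤ P t := by
    intro t ht
    have := hcons t ht
    have h1 : 0 ≤ β t * β t := mul_self_nonneg _
    simp only [hPdef]; linarith
  -- Step 1: lower bound θ ≥ z - 2κ for t ≥ t₀
  have step1 : ∀ t, t₀ ≤ t → z - 2 * κ ≤ a t * β t := by
    have := barrier_lemma (fun t => -(a t * β t)) (fun t => -(P t * Q t)) t₀ (2 * κ - z)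
      ht₀ (fun t ht => (hθ t ht).neg)
      (by linarith)
      (by
        intro t ht hc
        have hht := abs_le.mp (hhb t ht)
        have hQ : κ ≤ Q t := by simp only [hQdef]; linarith
        have hP : lam ≤ P t := hPlam t (le_trans ht₀ ht)
        have : 0 < P t * Q t := mul_pos (lt_of_lt_of_le hlam hP) (by linarith)
        linarith)
    intro t ht
    have := this t ht
    linarith
  -- Step 2: there is t₁ ∈ [t₀, t₀ + m⁻¹] with θ t₁ ≤ z + m
  have step2 : ∃ t₁ ∈ Icc t₀ (t₀ + m⁻¹), a t₁ * β t₁ ≤ z + m := by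
    by_contra hbad
    push_neg at hbad
    set D := Icc t₀ (t₀ + m⁻¹) with hDdef
    have hDsub : D ⊆ Ici (0:ℝ) := fun x hx => le_trans ht₀ hx.1
    have hintD : interior D = Ioo t₀ (t₀ + m⁻¹) := interior_Icc
    set φ : ℝ → ℝ := fun t => (a t * β t - z)⁻¹ - t with hφdef
    have hne : ∀ x ∈ D, a x * β x - z ≠ 0 := by
      intro x hx
      have := hbad x hx
      intro hcontra
      nlinarith
    have hφcont : ContinuousOn φ D := by
      apply ContinuousOn.sub
      · exact (((hθcont.mono hDsub).sub continuousOn_const).inv₀ hne)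
      · exact continuousOn_id
    have hmono : MonotoneOn φ D := by
      apply monotoneOn_of_hasDerivWithinAt_nonneg (convex_Icc _ _) hφcont
        (f' := fun x => -(P x * Q x) / (a x * β x - z) ^ 2 - 1)
      · intro x hx
        rw [hintD] at hx
        have hx0 : x ∈ Ici (0:ℝ) := le_trans ht₀ hx.1.le
        have h1 : HasDerivWithinAt (fun t => a t * β t - z) (P x * Q x) (interior D) x :=
          ((hθ x hx0).mono (by rw [hintD]; intro y hy; exact le_trans ht₀ hy.1.le)).sub_const z
        have h2 := h1.inv (hne x (interior_subset (hintD ▸ hx : x ∈ interior D)))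
        exact h2.sub (hasDerivWithinAt_id x _)
      · intro x hx
        rw [hintD] at hx
        have hxD : x ∈ D := Ioo_subset_Icc_self hx
        have hu : z + m < a x * β x := hbad x hxD
        have hht := abs_le.mp (hhb x hx.1.le)
        set u := a x * β x - z with hudef
        have hupos : m < u := by simp only [hudef]; linarith
        have husq : (0:ℝ) < u ^ 2 := pow_pos (by linarith) 2
        have hkey : u ^ 2 ≤ -(P x * Q x) := by
          have hab : 0 ≤ (a x - β x) ^ 2 := sq_nonneg _
          have hP2 : 2 * (a x * β x) ≤ P x := by simp only [hPdef]; nlinarith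
          have hQle : Q x ≤ κ - u := by simp only [hQdef, hudef]; linarith
          have hP0 : 0 ≤ P x := by simp only [hPdef]; nlinarith [mul_self_nonneg (a x), mul_self_nonneg (β x)]
          nlinarith [mul_le_mul_of_nonneg_left hQle hP0,
            mul_le_mul_of_nonpos_right hP2 (by linarith : κ - u ≤ 0)]
        have h1 : 1 ≤ -(P x * Q x) / (a x * β x - z) ^ 2 :=
          (one_le_div husq).mpr hkey
        linarith
    have hmemL : t₀ ∈ D := ⟨le_refl _, by linarith [inv_pos.mpr hmpos]⟩
    have hmemR : t₀ + m⁻¹ ∈ D := ⟨by linarith [inv_pos.mpr hmpos], le_refl _⟩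
    have hφle := hmono hmemL hmemR (by linarith [inv_pos.mpr hmpos])
    simp only [hφdef] at hφle
    have huL : m < a t₀ * β t₀ - z := by linarith [hbad t₀ hmemL]
    have huR : m < a (t₀ + m⁻¹) * β (t₀ + m⁻¹) - z := by linarith [hbad _ hmemR]
    have h1 : (a (t₀ + m⁻¹) * β (t₀ + m⁻¹) - z)⁻¹ < m⁻¹ :=
      inv_strictAnti₀ hmpos huR
    have h2 : 0 < (a t₀ * β t₀ - z)⁻¹ := inv_pos.mpr (by linarith)
    linarith
  obtain ⟨t₁, ht₁D, ht₁le⟩ := step2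
  -- Step 3: θ stays ≤ z + m after t₁
  have step3 : ∀ t, t₁ ≤ t → a t * β t ≤ z + m := by
    apply barrier_lemma (fun t => a t * β t) (fun t => P t * Q t) t₁ (z + m)
      (le_trans ht₀ ht₁D.1) hθ ht₁le
    intro t ht hc
    have htt₀ : t₀ ≤ t := le_trans ht₁D.1 ht
    have hht := abs_le.mp (hhb t htt₀)
    have hQ : Q t ≤ -κ := by simp only [hQdef]; linarith
    have hP : lam ≤ P t := hPlam t (le_trans ht₀ htt₀)
    exact mul_neg_of_pos_of_neg (lt_of_lt_of_le hlam hP) (by linarith)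
  -- conclusion
  intro t ht
  have htt₀ : t₀ ≤ t := by linarith [inv_pos.mpr hmpos]
  have htt₁ : t₁ ≤ t := le_trans ht₁D.2 ht
  have h1 := step1 t htt₀
  have h2 := step3 t htt₁
  rw [abs_le]
  constructor <;> linarith
end

section
/- Approximation time near z for the perturbed two-layer dynamics: assume z ≥ 0, let t₀ ≥ 0, suppose |h(t)| ≤ κ for all t ≥ t₀ for some κ > 0, and suppose z/4 ≤ θ(t₀) ≤ 3z. Then for any δ > 0, |z − θ(t)| ≤ κ + δ for all t ≥ t₀ + 4z⁻¹ ln⁺((|z − θ(t₀)| − κ)/δ). -/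
open Real Set

lemma invLow (f f' : ℝ → ℝ) (c s : ℝ) (hs : 0 ≤ s)
    (hf : ∀ t ∈ Ici (0:ℝ), HasDerivWithinAt f (f' t) (Ici 0) t)
    (hsign : ∀ t, s ≤ t → f t < c → 0 ≤ f' t) :
    ∀ t, s ≤ t → min (f s) c ≤ f t := by
  intro t₁ ht₁
  by_contra hlt
  push_neg at hlt
  set m := min (f s) c with hm
  have hcont : ContinuousOn f (Ici 0) := fun x hx => (hf x hx).continuousWithinAt
  set S := Icc s t₁ ∩ f ⁻¹' (Ici m) with hS
  have hsub : Icc s t₁ ⊆ Ici (0:ℝ) := fun x hx => le_trans hs hx.1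
  have hS_closed : IsClosed S :=
    (hcont.mono hsub).preimage_isClosed_of_isClosed isClosed_Icc isClosed_Ici
  have hne : S.Nonempty := ⟨s, ⟨le_refl s, ht₁⟩, (min_le_left _ _ : m ≤ f s)⟩
  have hbdd : BddAbove S := (BddAbove.mono (inter_subset_left) (bddAbove_Icc))
  have hσmem : sSup S ∈ S := hS_closed.csSup_mem hne hbdd
  set σ := sSup S with hσ
  obtain ⟨⟨hσs, hσt₁⟩, hσf⟩ := hσmem
  have hσt₁' : σ < t₁ := lt_of_le_of_ne hσt₁ (fun he => absurd hσf (by rw [he]; exact not_le.mpr hlt))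
  have hlt' : ∀ r ∈ Ioc σ t₁, f r < m := by
    intro r hr
    by_contra hge
    push_neg at hge
    have : r ∈ S := ⟨⟨le_trans hσs hr.1.le, hr.2⟩, hge⟩
    exact absurd (le_csSup hbdd this) (not_le.mpr hr.1)
  have hmono : MonotoneOn f (Icc σ t₁) := by
    apply monotoneOn_of_deriv_nonneg (convex_Icc σ t₁)
    · exact hcont.mono (fun x hx => le_trans (le_trans hs hσs) hx.1)
    · intro x hx
      rw [interior_Icc] at hx
      have hx0 : (0:ℝ) < x := lt_of_le_of_lt (le_trans hs hσs) hx.1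
      exact ((hf x hx0.le).hasDerivAt (Ici_mem_nhds hx0)).differentiableAt.differentiableWithinAt
    · intro x hx
      rw [interior_Icc] at hx
      have hx0 : (0:ℝ) < x := lt_of_le_of_lt (le_trans hs hσs) hx.1
      rw [((hf x hx0.le).hasDerivAt (Ici_mem_nhds hx0)).deriv]
      exact hsign x (le_trans hσs hx.1.le) (lt_of_lt_of_le (hlt' x ⟨hx.1, hx.2.le⟩) (min_le_right _ _))
  have := hmono ⟨le_refl σ, hσt₁⟩ ⟨hσt₁, le_refl t₁⟩ hσt₁
  exact absurd (le_trans hσf this) (not_le.mpr hlt)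


set_option maxHeartbeats 1000000 in
/-- Approximation time near z for the perturbed two-layer dynamics. -/
theorem stmt_4 (lam z κ t₀ : ℝ) (h a β : ℝ → ℝ)
    (hlam : 0 < lam) (hh : ContinuousOn h (Ici 0))
    (ha0 : a 0 = Real.sqrt lam) (hβ0 : β 0 = 0)
    (hode : ∀ t ∈ Ici (0 : ℝ),
      HasDerivWithinAt β (a t * (z - a t * β t + h t)) (Ici 0) t ∧
      HasDerivWithinAt a (β t * (z - a t * β t + h t)) (Ici 0) t)
    (hz : 0 ≤ z) (ht₀ : 0 ≤ t₀) (hκ : 0 < κ)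
    (hhb : ∀ t, t₀ ≤ t → |h t| ≤ κ)
    (hlow : z / 4 ≤ a t₀ * β t₀) (hhigh : a t₀ * β t₀ ≤ 3 * z) :
    ∀ δ : ℝ, 0 < δ →
      ∀ t : ℝ, t₀ + 4 * z⁻¹ * max (Real.log ((|z - a t₀ * β t₀| - κ) / δ)) 0 ≤ t →
        |z - a t * β t| ≤ κ + δ := by
  intro δ hδ t ht
  set θ : ℝ → ℝ := fun s => a s * β s with hθdef
  have hfold : ∀ s, a s * β s = θ s := fun s => rfl
  simp only [hfold] at hlow hhigh ht ⊢
  set θ' : ℝ → ℝ := fun s => (a s ^ 2 + β s ^ 2) * (z - θ s + h s) with hθ'def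
  have hθ : ∀ s ∈ Ici (0:ℝ), HasDerivWithinAt θ (θ' s) (Ici 0) s := by
    intro s hs
    have h1 : HasDerivWithinAt (fun y => a y * β y) (β s * (z - a s * β s + h s) * β s + a s * (a s * (z - a s * β s + h s))) (Ici 0) s := (hode s hs).2.mul (hode s hs).1
    convert h1 using 1
    show (a s ^ 2 + β s ^ 2) * (z - a s * β s + h s) = _
    ring
  have hθc : ContinuousOn θ (Ici 0) := fun x hx => (hθ x hx).continuousWithinAt
  have ht0t : t₀ ≤ t := by
    have h0 : (0:ℝ) ≤ 4 * z⁻¹ * max (Real.log ((|z - θ t₀| - κ) / δ)) 0 :=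
      mul_nonneg (mul_nonneg (by norm_num) (inv_nonneg.mpr hz)) (le_max_right _ _)
    linarith
  -- generic lower invariance
  have hLowGen : ∀ s, t₀ ≤ s → ∀ t', s ≤ t' → min (θ s) (z - κ) ≤ θ t' := by
    intro s hs
    refine invLow θ θ' (z - κ) s (le_trans ht₀ hs) hθ ?_
    intro r hr hfr
    have hhr := abs_le.1 (hhb r (le_trans hs hr))
    have hP : 0 ≤ z - θ r + h r := by linarith [hhr.1]
    exact mul_nonneg (by positivity) hP
  -- generic upper invariance
  have hUpGen : ∀ s, t₀ ≤ s → ∀ t', s ≤ t' → θ t' ≤ max (θ s) (z + κ) := by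
    intro s hs t' ht'
    have hkey := invLow (fun r => -θ r) (fun r => -θ' r) (-(z + κ)) s (le_trans ht₀ hs)
      (fun r hr => (hθ r hr).neg) ?_ t' ht'
    · have hkey' : min (-θ s) (-(z + κ)) ≤ -θ t' := hkey
      rw [min_neg_neg] at hkey'
      linarith [hkey']
    · intro r hr hfr
      have hfr' : -θ r < -(z + κ) := hfr
      have hhr := abs_le.1 (hhb r (le_trans hs hr))
      have hθr : z + κ < θ r := by linarith
      have hP : z - θ r + h r ≤ 0 := by linarith [hhr.2]
      have h2 : 0 ≤ (a r ^ 2 + β r ^ 2) * (-(z - θ r + h r)) :=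
        mul_nonneg (by positivity) (by linarith)
      rw [mul_neg] at h2
      exact h2
  have hθlb : ∀ t', t₀ ≤ t' → min (θ t₀) (z - κ) ≤ θ t' := hLowGen t₀ le_rfl
  have hθub : ∀ t', t₀ ≤ t' → θ t' ≤ max (θ t₀) (z + κ) := hUpGen t₀ le_rfl
  -- global bound on |z - θ|
  have hBnd : ∀ t', t₀ ≤ t' → |z - θ t'| ≤ max (|z - θ t₀|) κ := by
    intro t' ht'
    have h1 := hθlb t' ht'
    have h2 := hθub t' ht'
    have hg1 : z - θ t₀ ≤ |z - θ t₀| := le_abs_self _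
    have hg2 : θ t₀ - z ≤ |z - θ t₀| := by rw [abs_sub_comm]; exact le_abs_self _
    rw [abs_le]
    constructor
    · rcases le_total (θ t₀) (z + κ) with hc | hc
      · rw [max_eq_right hc] at h2
        have := le_max_right (|z - θ t₀|) κ
        linarith
      · rw [max_eq_left hc] at h2
        have := le_max_left (|z - θ t₀|) κ
        linarith
    · rcases le_total (θ t₀) (z - κ) with hc | hc
      · rw [min_eq_left hc] at h1
        have := le_max_left (|z - θ t₀|) κ
        linarith
      · rw [min_eq_right hc] at h1
        have := le_max_right (|z - θ t₀|) κ
        linarith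
  rcases le_or_gt (|z - θ t₀|) (κ + δ) with hA | hB
  · -- easy case
    have := hBnd t ht0t
    rcases le_total (|z - θ t₀|) κ with hc | hc
    · rw [max_eq_right hc] at this; linarith
    · rw [max_eq_left hc] at this; linarith
  -- hard case
  set u₀ : ℝ := |z - θ t₀| - κ with hu₀def
  have hu₀ : δ < u₀ := by simp only [hu₀def]; linarith
  have hu₀pos : 0 < u₀ := lt_trans hδ hu₀
  have hzpos : 0 < z := by
    rcases le_or_gt (θ t₀) z with hc | hc
    · rw [abs_of_nonneg (by linarith : (0:ℝ) ≤ z - θ t₀)] at hB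
      linarith
    · rw [abs_of_nonpos (by linarith : z - θ t₀ ≤ 0)] at hB
      linarith
  -- exponential bound from the time hypothesis
  have hlogpos : 0 < Real.log (u₀ / δ) := Real.log_pos ((one_lt_div hδ).2 hu₀)
  have hmax : max (Real.log ((|z - θ t₀| - κ) / δ)) 0 = Real.log (u₀ / δ) := by
    rw [hu₀def] at hlogpos ⊢
    exact max_eq_left hlogpos.le
  rw [hmax] at ht
  have hlogle : Real.log (u₀ / δ) ≤ z / 4 * (t - t₀) := by
    have h1 : 4 * z⁻¹ * Real.log (u₀ / δ) ≤ t - t₀ := by linarith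
    have h2 : Real.log (u₀ / δ) = z / 4 * (4 * z⁻¹ * Real.log (u₀ / δ)) := by
      field_simp
    have hz4 : (0:ℝ) ≤ z / 4 := by linarith
    rw [h2]
    exact mul_le_mul_of_nonneg_left h1 hz4
  have hEt : (0:ℝ) < Real.exp (z / 4 * (t - t₀)) := Real.exp_pos _
  have hexp2 : u₀ / δ ≤ Real.exp (z / 4 * (t - t₀)) := by
    calc u₀ / δ = Real.exp (Real.log (u₀ / δ)) := (Real.exp_log (by positivity)).symm
    _ ≤ _ := Real.exp_le_exp.2 hlogle
  have hfin : (Real.exp (z / 4 * (t - t₀)))⁻¹ * u₀ ≤ δ := by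
    rw [inv_mul_le_iff₀ hEt]
    linarith [(div_le_iff₀ hδ).1 hexp2]
  -- the two sides
  rcases le_or_gt (θ t₀) z with hside | hside
  · -- θ t₀ below z
    have habs : |z - θ t₀| = z - θ t₀ := abs_of_nonneg (by linarith)
    have hu₀' : u₀ = z - θ t₀ - κ := by rw [hu₀def, habs]
    have hθ₀lt : θ t₀ < z - κ - δ := by rw [hu₀'] at hu₀; linarith
    by_cases hcross : ∃ s ∈ Icc t₀ t, z - κ - δ ≤ θ s
    · obtain ⟨s, ⟨hs1, hs2⟩, hs3⟩ := hcross
      have h1 := hLowGen s hs1 t hs2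
      have h2 := hθub t ht0t
      rw [max_eq_right (by linarith : θ t₀ ≤ z + κ)] at h2
      rw [abs_le]
      constructor
      · linarith
      · rcases le_total (θ s) (z - κ) with hc | hc
        · rw [min_eq_left hc] at h1; linarith
        · rw [min_eq_right hc] at h1; linarith
    · exfalso
      push_neg at hcross
      set v : ℝ → ℝ := fun s => (z - κ - θ s) * Real.exp (z / 4 * (s - t₀)) with hvdef
      have hθlow2 : ∀ x ∈ Icc t₀ t, z / 4 ≤ θ x := by
        intro x hx
        have := hθlb x hx.1
        rw [min_eq_left (by linarith : θ t₀ ≤ z - κ)] at this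
        linarith
      have hexpd : ∀ x : ℝ, HasDerivAt (fun s => Real.exp (z / 4 * (s - t₀)))
          (Real.exp (z / 4 * (x - t₀)) * (z / 4)) x := by
        intro x
        have hlin : HasDerivAt (fun s : ℝ => z / 4 * (s - t₀)) (z / 4) x := by
          simpa using ((hasDerivAt_id x).sub_const t₀).const_mul (z / 4)
        exact hlin.exp
      have hanti : AntitoneOn v (Icc t₀ t) := by
        apply antitoneOn_of_deriv_nonpos (convex_Icc t₀ t)
        · apply ContinuousOn.mul
          · exact continuousOn_const.sub (hθc.mono (fun x hx => le_trans ht₀ hx.1))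
          · exact (Real.continuous_exp.comp
              (continuous_const.mul (continuous_id.sub continuous_const))).continuousOn
        · intro x hx
          rw [interior_Icc] at hx
          have hx0 : (0:ℝ) < x := lt_of_le_of_lt ht₀ hx.1
          have hθx : HasDerivAt θ (θ' x) x := (hθ x hx0.le).hasDerivAt (Ici_mem_nhds hx0)
          exact (((hasDerivAt_const x (z - κ)).sub hθx).mul (hexpd x)).differentiableAt.differentiableWithinAt
        · intro x hx
          rw [interior_Icc] at hx
          have hx0 : (0:ℝ) < x := lt_of_le_of_lt ht₀ hx.1
          have hxI : x ∈ Icc t₀ t := ⟨hx.1.le, hx.2.le⟩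
          have hθx : HasDerivAt θ (θ' x) x := (hθ x hx0.le).hasDerivAt (Ici_mem_nhds hx0)
          have hv' : HasDerivAt v
              ((0 - θ' x) * Real.exp (z / 4 * (x - t₀)) +
                (z - κ - θ x) * (Real.exp (z / 4 * (x - t₀)) * (z / 4))) x :=
            ((hasDerivAt_const x (z - κ)).sub hθx).mul (hexpd x)
          rw [hv'.deriv]
          have hE : (0:ℝ) < Real.exp (z / 4 * (x - t₀)) := Real.exp_pos _
          have hu : δ < z - κ - θ x := by have := hcross x hxI; linarith
          have hhr := abs_le.1 (hhb x hxI.1)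
          have hθxe : θ x = a x * β x := rfl
          have hA2 : z / 4 ≤ a x ^ 2 + β x ^ 2 := by
            have h4 := hθlow2 x hxI
            nlinarith [sq_nonneg (a x - β x)]
          have hupos : (0:ℝ) < z - κ - θ x := lt_trans hδ hu
          have hPu : z - κ - θ x ≤ z - θ x + h x := by linarith [hhr.1]
          have h3 : z / 4 * (z - κ - θ x) ≤ θ' x := by
            have e1 : z / 4 * (z - κ - θ x) ≤ (a x ^ 2 + β x ^ 2) * (z - κ - θ x) :=
              mul_le_mul_of_nonneg_right hA2 hupos.le
            have e2 : (a x ^ 2 + β x ^ 2) * (z - κ - θ x) ≤ (a x ^ 2 + β x ^ 2) * (z - θ x + h x) :=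
              mul_le_mul_of_nonneg_left hPu (by positivity)
            have e3 : θ' x = (a x ^ 2 + β x ^ 2) * (z - θ x + h x) := rfl
            linarith
          nlinarith [mul_le_mul_of_nonneg_right h3 hE.le]
      have hvt : v t ≤ v t₀ := hanti (left_mem_Icc.2 ht0t) (right_mem_Icc.2 ht0t) ht0t
      have hv0 : v t₀ = u₀ := by
        show (z - κ - θ t₀) * Real.exp (z / 4 * (t₀ - t₀)) = u₀
        rw [hu₀', sub_self, mul_zero, Real.exp_zero, mul_one]
        ring
      rw [hv0] at hvt
      have hvt2 : (z - κ - θ t) * Real.exp (z / 4 * (t - t₀)) ≤ u₀ := hvt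
      have hut : δ < z - κ - θ t := by have := hcross t (right_mem_Icc.2 ht0t); linarith
      have h5 := mul_le_mul_of_nonneg_right hvt2 (inv_nonneg.2 hEt.le)
      rw [mul_assoc, mul_inv_cancel₀ (ne_of_gt hEt), mul_one, mul_comm] at h5
      linarith
  · -- θ t₀ above z
    have habs : |z - θ t₀| = θ t₀ - z := by
      rw [abs_of_nonpos (by linarith : z - θ t₀ ≤ 0)]; ring
    have hu₀' : u₀ = θ t₀ - z - κ := by rw [hu₀def, habs]
    have hθ₀gt : z + κ + δ < θ t₀ := by rw [hu₀'] at hu₀; linarith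
    by_cases hcross : ∃ s ∈ Icc t₀ t, θ s ≤ z + κ + δ
    · obtain ⟨s, ⟨hs1, hs2⟩, hs3⟩ := hcross
      have h1 := hUpGen s hs1 t hs2
      have h2 := hθlb t ht0t
      rw [min_eq_right (by linarith : z - κ ≤ θ t₀)] at h2
      rw [abs_le]
      constructor
      · rcases le_total (θ s) (z + κ) with hc | hc
        · rw [max_eq_right hc] at h1; linarith
        · rw [max_eq_left hc] at h1; linarith
      · linarith
    · exfalso
      push_neg at hcross
      set v : ℝ → ℝ := fun s => (θ s - z - κ) * Real.exp (z / 4 * (s - t₀)) with hvdef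
      have hexpd : ∀ x : ℝ, HasDerivAt (fun s => Real.exp (z / 4 * (s - t₀)))
          (Real.exp (z / 4 * (x - t₀)) * (z / 4)) x := by
        intro x
        have hlin : HasDerivAt (fun s : ℝ => z / 4 * (s - t₀)) (z / 4) x := by
          simpa using ((hasDerivAt_id x).sub_const t₀).const_mul (z / 4)
        exact hlin.exp
      have hanti : AntitoneOn v (Icc t₀ t) := by
        apply antitoneOn_of_deriv_nonpos (convex_Icc t₀ t)
        · apply ContinuousOn.mul
          · exact ((hθc.mono (fun x hx => le_trans ht₀ hx.1)).sub continuousOn_const).sub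
              continuousOn_const
          · exact (Real.continuous_exp.comp
              (continuous_const.mul (continuous_id.sub continuous_const))).continuousOn
        · intro x hx
          rw [interior_Icc] at hx
          have hx0 : (0:ℝ) < x := lt_of_le_of_lt ht₀ hx.1
          have hθx : HasDerivAt θ (θ' x) x := (hθ x hx0.le).hasDerivAt (Ici_mem_nhds hx0)
          exact (((hθx.sub_const z).sub_const κ).mul (hexpd x)).differentiableAt.differentiableWithinAt
        · intro x hx
          rw [interior_Icc] at hx
          have hx0 : (0:ℝ) < x := lt_of_le_of_lt ht₀ hx.1
          have hxI : x ∈ Icc t₀ t := ⟨hx.1.le, hx.2.le⟩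
          have hθx : HasDerivAt θ (θ' x) x := (hθ x hx0.le).hasDerivAt (Ici_mem_nhds hx0)
          have hv' : HasDerivAt v
              (θ' x * Real.exp (z / 4 * (x - t₀)) +
                (θ x - z - κ) * (Real.exp (z / 4 * (x - t₀)) * (z / 4))) x :=
            ((hθx.sub_const z).sub_const κ).mul (hexpd x)
          rw [hv'.deriv]
          have hE : (0:ℝ) < Real.exp (z / 4 * (x - t₀)) := Real.exp_pos _
          have hu : δ < θ x - z - κ := by have := hcross x hxI; linarith
          have hhr := abs_le.1 (hhb x hxI.1)
          have hθxe : θ x = a x * β x := rfl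
          have hA2 : z / 4 ≤ a x ^ 2 + β x ^ 2 := by
            nlinarith [sq_nonneg (a x - β x)]
          have hupos : (0:ℝ) < θ x - z - κ := lt_trans hδ hu
          have hPu : z - θ x + h x ≤ -(θ x - z - κ) := by linarith [hhr.2]
          have h3 : θ' x ≤ -(z / 4 * (θ x - z - κ)) := by
            have e1 : (a x ^ 2 + β x ^ 2) * (z - θ x + h x) ≤
                (a x ^ 2 + β x ^ 2) * (-(θ x - z - κ)) :=
              mul_le_mul_of_nonneg_left hPu (by positivity)
            have e2 : (a x ^ 2 + β x ^ 2) * (-(θ x - z - κ)) ≤ z / 4 * (-(θ x - z - κ)) :=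
              mul_le_mul_of_nonpos_right hA2 (by linarith)
            have e3 : θ' x = (a x ^ 2 + β x ^ 2) * (z - θ x + h x) := rfl
            nlinarith [e1, e2, e3]
          nlinarith [mul_le_mul_of_nonneg_right h3 hE.le]
      have hvt : v t ≤ v t₀ := hanti (left_mem_Icc.2 ht0t) (right_mem_Icc.2 ht0t) ht0t
      have hv0 : v t₀ = u₀ := by
        show (θ t₀ - z - κ) * Real.exp (z / 4 * (t₀ - t₀)) = u₀
        rw [hu₀', sub_self, mul_zero, Real.exp_zero, mul_one]
      rw [hv0] at hvt
      have hvt2 : (θ t - z - κ) * Real.exp (z / 4 * (t - t₀)) ≤ u₀ := hvt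
      have hut : δ < θ t - z - κ := by have := hcross t (right_mem_Icc.2 ht0t); linarith
      have h5 := mul_le_mul_of_nonneg_right hvt2 (inv_nonneg.2 hEt.le)
      rw [mul_assoc, mul_inv_cancel₀ (ne_of_gt hEt), mul_one, mul_comm] at h5
      linarith
end

section
/- Approaching from above to within 4κ for the perturbed two-layer dynamics: assume z ≥ 0, let t₀ ≥ 0, suppose |h(t)| ≤ κ for all t ≥ t₀ for some κ > 0, and suppose θ(t₀) ≥ z. Then |z − θ(t)| ≤ 4κ for all t ≥ t₀ + κ⁻¹ (1 + ln⁺(|z − θ(t₀)|/κ)). -/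
open Real Set

/-- Approaching from above to within 4κ for the perturbed two-layer dynamics. -/
theorem stmt_5 (lam z κ t₀ : ℝ) (h a β : ℝ → ℝ)
    (hlam : 0 < lam) (hh : ContinuousOn h (Ici 0))
    (ha0 : a 0 = Real.sqrt lam) (hβ0 : β 0 = 0)
    (hode : ∀ t ∈ Ici (0 : ℝ),
      HasDerivWithinAt β (a t * (z - a t * β t + h t)) (Ici 0) t ∧
      HasDerivWithinAt a (β t * (z - a t * β t + h t)) (Ici 0) t)
    (hz : 0 ≤ z) (ht₀ : 0 ≤ t₀) (hκ : 0 < κ)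
    (hhb : ∀ t, t₀ ≤ t → |h t| ≤ κ)
    (hinit : z ≤ a t₀ * β t₀) :
    ∀ t : ℝ, t₀ + κ⁻¹ * (1 + max (Real.log (|z - a t₀ * β t₀| / κ)) 0) ≤ t →
      |z - a t * β t| ≤ 4 * κ := by
  intro t ht
  have hκ' : (0:ℝ) < κ⁻¹ := by positivity
  have htt₀ : t₀ ≤ t := by
    have h0 : (0:ℝ) ≤ max (Real.log (|z - a t₀ * β t₀| / κ)) 0 := le_max_right _ _
    nlinarith
  -- derivative of θ = a * β
  have hθ' : ∀ s ∈ Ici (0:ℝ), HasDerivWithinAt (fun x => a x * β x)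
      ((a s ^ 2 + β s ^ 2) * (z - a s * β s + h s)) (Ici 0) s := by
    intro s hs
    have := ((hode s hs).2).mul ((hode s hs).1)
    refine this.congr_deriv ?_
    ring
  have hθc : ContinuousOn (fun x => a x * β x) (Ici 0) :=
    fun s hs => (hθ' s hs).continuousWithinAt
  -- invariant : a² - β² = lam
  have hinv : ∀ s ∈ Ici (0:ℝ), a s ^ 2 - β s ^ 2 = lam := by
    intro s hs
    have key : ∀ x ∈ Icc (0:ℝ) s, a x ^ 2 - β x ^ 2 = a 0 ^ 2 - β 0 ^ 2 := by
      apply constant_of_has_deriv_right_zero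
      · have ca : ContinuousOn a (Ici 0) := fun y hy => ((hode y hy).2).continuousWithinAt
        have cb : ContinuousOn β (Ici 0) := fun y hy => ((hode y hy).1).continuousWithinAt
        exact ((ca.pow 2).sub (cb.pow 2)).mono Icc_subset_Ici_self
      · intro x hx
        have Hx : x ∈ Ici (0:ℝ) := hx.1
        have := ((hode x Hx).2.mul (hode x Hx).2).sub ((hode x Hx).1.mul (hode x Hx).1)
        have h2 : HasDerivWithinAt (fun y => a y ^ 2 - β y ^ 2) 0 (Ici 0) x := by
          have e : (fun y => a y ^ 2 - β y ^ 2) = a * a - β * β := by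
            funext y; simp only [Pi.mul_apply, Pi.sub_apply]; ring
          rw [e]; refine this.congr_deriv ?_
          ring
        exact h2.mono (Ici_subset_Ici.2 hx.1)
    have := key s ⟨hs, le_refl s⟩
    rw [this, ha0, hβ0, Real.sq_sqrt hlam.le]
    ring
  have hab2 : ∀ s, 0 ≤ s → lam ≤ a s ^ 2 + β s ^ 2 := by
    intro s hs
    have := hinv s hs
    nlinarith [sq_nonneg (β s)]
  -- lower barrier : z - θ s ≤ 2κ for s ≥ t₀
  have Llow : ∀ s, t₀ ≤ s → z - a s * β s ≤ 2 * κ := by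
    intro s hs
    have key := image_le_of_deriv_right_lt_deriv_boundary
      (f := fun x => z - a x * β x) (f' := fun x => -((a x ^ 2 + β x ^ 2) * (z - a x * β x + h x)))
      (a := t₀) (b := s) (B := fun _ => 2 * κ) (B' := fun _ => 0)
      (hf := (continuousOn_const.sub (hθc.mono (fun y hy => ht₀.trans hy.1))))
      (hf' := ?_) (ha := by show z - a t₀ * β t₀ ≤ 2*κ; nlinarith) (hB := fun x => hasDerivAt_const x (2*κ)) (bound := ?_)
    · exact key ⟨hs, le_refl s⟩
    · intro x hx
      have hx0 : (0:ℝ) ≤ x := le_trans ht₀ hx.1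
      exact ((hθ' x hx0).const_sub z).mono (Ici_subset_Ici.2 hx0)
    · intro x hx hcontact
      have hx0 : (0:ℝ) ≤ x := le_trans ht₀ hx.1
      have hS := hab2 x hx0
      have hhx := abs_le.1 (hhb x hx.1)
      have hg : κ ≤ z - a x * β x + h x := by
        linarith [hhx.1]
      have : 0 < (a x ^ 2 + β x ^ 2) * (z - a x * β x + h x) := by
        apply mul_pos (by linarith) (by linarith)
      simpa using by linarith
  -- upper barrier : θ s - z ≤ 2κ + D exp(-2κ(s - t₀))
  set D : ℝ := a t₀ * β t₀ - z with hDdef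
  have hD : 0 ≤ D := by simp only [hDdef]; linarith
  have hBd : ∀ x : ℝ, HasDerivAt (fun y => 2*κ + D * Real.exp (-(2*κ)*(y - t₀)))
      (D * (Real.exp (-(2*κ)*(x - t₀)) * (-(2*κ)))) x := by
    intro x
    have h1 : HasDerivAt (fun y : ℝ => -(2*κ)*(y - t₀)) (-(2*κ)) x := by
      simpa using ((hasDerivAt_id x).sub_const t₀).const_mul (-(2*κ))
    exact ((h1.exp.const_mul D).const_add (2*κ))
  have Uup : a t * β t - z ≤ 2*κ + D * Real.exp (-(2*κ)*(t - t₀)) := by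
    have key := image_le_of_deriv_right_lt_deriv_boundary
      (f := fun x => a x * β x - z) (f' := fun x => (a x ^ 2 + β x ^ 2) * (z - a x * β x + h x))
      (a := t₀) (b := t) (B := fun y => 2*κ + D * Real.exp (-(2*κ)*(y - t₀)))
      (B' := fun x => D * (Real.exp (-(2*κ)*(x - t₀)) * (-(2*κ))))
      (hf := ((hθc.mono (fun y hy => ht₀.trans hy.1)).sub continuousOn_const))
      (hf' := ?_) (ha := by
        show a t₀ * β t₀ - z ≤ 2*κ + D * Real.exp (-(2*κ)*(t₀ - t₀))
        rw [sub_self, mul_zero, Real.exp_zero, mul_one, hDdef]; linarith) (hB := hBd) (bound := ?_)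
    · exact key ⟨htt₀, le_refl t⟩
    · intro x hx
      have hx0 : (0:ℝ) ≤ x := le_trans ht₀ hx.1
      exact ((hθ' x hx0).sub_const z).mono (Ici_subset_Ici.2 hx0)
    · intro x hx hcontact
      have hx0 : (0:ℝ) ≤ x := le_trans ht₀ hx.1
      have hhx := abs_le.1 (hhb x hx.1)
      set u : ℝ := a x * β x - z with hudef
      set E : ℝ := Real.exp (-(2*κ)*(x - t₀)) with hEdef
      have hEpos : 0 < E := Real.exp_pos _
      have hcon : u = 2*κ + D * E := hcontact
      have hu2κ : 2*κ ≤ u := by nlinarith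
      have hS2u : 2*u ≤ a x ^ 2 + β x ^ 2 := by nlinarith [sq_nonneg (a x - β x)]
      have hgle : z - a x * β x + h x ≤ -u + κ := by
        simp only [hudef]; linarith [hhx.2]
      have hgneg : z - a x * β x + h x ≤ 0 := by linarith
      have step1 : (a x ^ 2 + β x ^ 2) * (z - a x * β x + h x) ≤ 2*u * (z - a x * β x + h x) :=
        mul_le_mul_of_nonpos_right hS2u hgneg
      have step2 : 2*u * (z - a x * β x + h x) ≤ 2*u*(-u + κ) := by
        apply mul_le_mul_of_nonneg_left hgle (by linarith)
      have step3 : 2*u*(-u + κ) < D * (E * (-(2*κ))) := by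
        have : D * E = u - 2*κ := by linarith
        nlinarith [sq_nonneg (u - κ)]
      calc (a x ^ 2 + β x ^ 2) * (z - a x * β x + h x) ≤ 2*u * (z - a x * β x + h x) := step1
        _ ≤ 2*u*(-u + κ) := step2
        _ < D * (E * (-(2*κ))) := step3
  -- final computation
  have habs : |z - a t₀ * β t₀| = D := by
    rw [abs_of_nonpos (by linarith)]; simp only [hDdef]; ring
  have hDE : D * Real.exp (-(2*κ)*(t - t₀)) ≤ 2*κ := by
    by_cases hD2 : D ≤ 2*κ
    · have hE1 : Real.exp (-(2*κ)*(t - t₀)) ≤ 1 := by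
        apply Real.exp_le_one_iff.2
        nlinarith
      nlinarith [Real.exp_pos (-(2*κ)*(t - t₀))]
    · push_neg at hD2
      have hDpos : 0 < D := by linarith
      have hlogpos : 0 ≤ Real.log (D / κ) := by
        apply Real.log_nonneg
        rw [le_div_iff₀ hκ]; linarith
      have hmax : max (Real.log (|z - a t₀ * β t₀| / κ)) 0 = Real.log (D / κ) := by
        rw [habs]; exact max_eq_left hlogpos
      rw [hmax] at ht
      have hkt : 1 + Real.log (D / κ) ≤ κ * (t - t₀) := by
        have : κ⁻¹ * (1 + Real.log (D / κ)) ≤ t - t₀ := by linarith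
        calc 1 + Real.log (D / κ) = κ * (κ⁻¹ * (1 + Real.log (D / κ))) := by
              field_simp
          _ ≤ κ * (t - t₀) := by
              apply mul_le_mul_of_nonneg_left this hκ.le
      have hlog2 : Real.log (D / (2*κ)) ≤ Real.log (D / κ) := by
        apply Real.log_le_log (by positivity)
        apply div_le_div_of_nonneg_left hDpos.le hκ (by linarith)
      have hexp : D / (2*κ) ≤ Real.exp ((2*κ)*(t - t₀)) := by
        calc D / (2*κ) = Real.exp (Real.log (D / (2*κ))) :=
              (Real.exp_log (by positivity)).symm
          _ ≤ Real.exp ((2*κ)*(t - t₀)) := by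
              apply Real.exp_le_exp.2
              linarith
      have hexp' : D ≤ 2*κ * Real.exp ((2*κ)*(t - t₀)) := by
        rw [div_le_iff₀ (by positivity : (0:ℝ) < 2*κ)] at hexp
        linarith [hexp]
      have hrw2 : Real.exp (-(2*κ)*(t - t₀)) * Real.exp ((2*κ)*(t - t₀)) = 1 := by
        rw [← Real.exp_add]
        rw [show -(2*κ)*(t - t₀) + (2*κ)*(t - t₀) = 0 by ring]
        exact Real.exp_zero
      calc D * Real.exp (-(2*κ)*(t - t₀))
          ≤ (2*κ * Real.exp ((2*κ)*(t - t₀))) * Real.exp (-(2*κ)*(t - t₀)) :=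
            mul_le_mul_of_nonneg_right hexp' (Real.exp_pos _).le
        _ = 2*κ * (Real.exp (-(2*κ)*(t - t₀)) * Real.exp ((2*κ)*(t - t₀))) := by ring
        _ = 2*κ := by rw [hrw2, mul_one]
  have h1 := Llow t htt₀
  rw [abs_le]
  constructor
  · nlinarith
  · linarith
end

section
/- Approximation bound (small κ) for the perturbed two-layer dynamics: assume z ≥ 0, let t₀ ≥ 0, suppose |h(t)| ≤ κ for all t ≥ t₀ for some κ > 0, and assume z ≥ 2κ. Then for every δ > 0, |z − θ(t)| ≤ κ + δ for all t ≥ t₀ + T̄app(δ), where T̄app(δ) = 4z⁻¹ [2 + (1/2) ln⁺(|z − θ(t₀)|/λ) + (1/2) ln⁺(z/(4λ)) + ln⁺(2z/δ)]. -/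
open Real Set

lemma lnp_nonneg (x : ℝ) : (0:ℝ) ≤ max (Real.log x) 0 := le_max_right _ _

lemma lnp_mono {x y : ℝ} (hx : 0 ≤ x) (hxy : x ≤ y) :
    max (Real.log x) 0 ≤ max (Real.log y) 0 := by
  rcases eq_or_lt_of_le hx with hx0 | hx0
  · rw [← hx0, Real.log_zero]
    simpa using lnp_nonneg y
  · exact max_le_max (Real.log_le_log hx0 hxy) le_rfl

lemma lnp_mul {x y : ℝ} (hx : 0 ≤ x) (hy : 0 ≤ y) :
    max (Real.log (x * y)) 0 ≤ max (Real.log x) 0 + max (Real.log y) 0 := by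
  rcases eq_or_lt_of_le hx with hx0 | hx0
  · rw [← hx0, zero_mul, Real.log_zero]
    simpa using add_le_add (lnp_nonneg x) (lnp_nonneg y)
  rcases eq_or_lt_of_le hy with hy0 | hy0
  · rw [← hy0, mul_zero, Real.log_zero]
    simpa using add_le_add (lnp_nonneg x) (lnp_nonneg y)
  rw [Real.log_mul (ne_of_gt hx0) (ne_of_gt hy0)]
  exact max_le (add_le_add (le_max_left _ _) (le_max_left _ _)) (by positivity)

/-- Strict comparison primitive. -/
lemma tool_comp {g g' B B' : ℝ → ℝ} {s t : ℝ} (hst : s ≤ t)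
    (hg : ∀ τ, s ≤ τ → HasDerivWithinAt g (g' τ) (Ici s) τ)
    (hB : ∀ τ, HasDerivAt B (B' τ) τ)
    (h0 : g s ≤ B s)
    (hcontact : ∀ τ, s ≤ τ → τ < t → g τ = B τ → g' τ < B' τ) :
    g t ≤ B t := by
  have hcg : ContinuousOn g (Icc s t) := fun τ hτ =>
    ((hg τ hτ.1).continuousWithinAt).mono Icc_subset_Ici_self
  have := image_le_of_deriv_right_lt_deriv_boundary (f := g) (f' := g') (a := s) (b := t)
    hcg (fun x hx => (hg x hx.1).mono (Ici_subset_Ici.2 hx.1)) h0 hB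
    (fun x hx heq => hcontact x hx.1 hx.2 heq)
  exact this (right_mem_Icc.2 hst)

/-- Invariance: if g' ≤ 0 whenever g ≥ c, then g stays below max c (g s). -/
lemma tool_inv {g g' : ℝ → ℝ} {s c : ℝ}
    (hg : ∀ τ, s ≤ τ → HasDerivWithinAt g (g' τ) (Ici s) τ)
    (hyp : ∀ τ, s ≤ τ → c ≤ g τ → g' τ ≤ 0) :
    ∀ t, s ≤ t → g t ≤ max c (g s) := by
  intro t ht
  set M := max c (g s) with hM
  have key : ∀ ε : ℝ, 0 < ε → g t ≤ M + ε * (1 + (t - s)) := by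
    intro ε hε
    have hBd : ∀ τ : ℝ, HasDerivAt (fun τ : ℝ => M + ε * (1 + (τ - s))) ε τ := by
      intro τ
      have h1 : HasDerivAt (fun τ : ℝ => M + ε * (1 + (τ - s))) (ε * 1) τ :=
        ((((hasDerivAt_id τ).sub_const s).const_add 1).const_mul ε).const_add M
      simpa using h1
    have hcmp := tool_comp (B := fun τ : ℝ => M + ε * (1 + (τ - s))) (B' := fun _ => ε) ht hg hBd
      ?_ ?_
    · linarith
    · nlinarith [le_max_right c (g s)]
    · intro τ hsτ _ heq
      have hge : c ≤ g τ := by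
        have h2 : M ≤ g τ := by nlinarith
        exact le_trans (le_max_left _ _) h2
      exact lt_of_le_of_lt (hyp τ hsτ hge) hε
  by_contra hcon
  push_neg at hcon
  have h1 : (0:ℝ) < 1 + (t - s) := by linarith
  have h2 := key ((g t - M) / (2 * (1 + (t - s)))) (div_pos (by linarith) (by linarith))
  have h3 : (g t - M) / (2 * (1 + (t - s))) * (1 + (t - s)) = (g t - M) / 2 := by
    field_simp
  nlinarith

lemma eps_limit {gv M Δ : ℝ} (hΔ : 0 ≤ Δ) (key : ∀ ε : ℝ, 0 < ε → gv ≤ M + ε * (1 + Δ)) :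
    gv ≤ M := by
  by_contra hcon
  push_neg at hcon
  have h1 : (0:ℝ) < 1 + Δ := by linarith
  have h2 := key ((gv - M) / (2 * (1 + Δ))) (div_pos (by linarith) (by linarith))
  have h3 : (gv - M) / (2 * (1 + Δ)) * (1 + Δ) = (gv - M) / 2 := by
    field_simp
  nlinarith

/-- Linear decay: if g' ≤ -m whenever g ≥ A, then g reaches A by time s + (B₀-A)/m. -/
lemma tool_lin {g g' : ℝ → ℝ} {s A B₀ m : ℝ} (hm : 0 < m) (hAB : A ≤ B₀)
    (hg : ∀ τ, s ≤ τ → HasDerivWithinAt g (g' τ) (Ici s) τ)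
    (hyp : ∀ τ, s ≤ τ → A ≤ g τ → g' τ ≤ -m)
    (h0 : g s ≤ B₀) :
    ∀ t, s + (B₀ - A) / m ≤ t → g t ≤ A := by
  set t₁ := s + (B₀ - A) / m with ht₁def
  clear_value t₁
  have hst₁ : s ≤ t₁ := by
    have : 0 ≤ (B₀ - A)/m := div_nonneg (by linarith) hm.le
    linarith
  have hm1 : m * (t₁ - s) = B₀ - A := by
    rw [ht₁def]; field_simp; try ring
  have hkey : g t₁ ≤ A := by
    have kk : ∀ ε : ℝ, 0 < ε → g t₁ ≤ (B₀ - m * (t₁ - s)) + ε * (1 + (t₁ - s)) := by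
      intro ε hε
      have hBd : ∀ τ : ℝ, HasDerivAt
          (fun τ : ℝ => (B₀ - m * (τ - s)) + ε * (1 + (τ - s))) (-m + ε) τ := by
        intro τ
        have h1 : HasDerivAt (fun τ : ℝ => (B₀ - m * (τ - s)) + ε * (1 + (τ - s)))
            (-(m * 1) + ε * 1) τ :=
          ((((hasDerivAt_id τ).sub_const s).const_mul m).const_sub B₀).add
            ((((hasDerivAt_id τ).sub_const s).const_add 1).const_mul ε)
        simpa using h1
      have hcmp := tool_comp
        (B := fun τ : ℝ => (B₀ - m * (τ - s)) + ε * (1 + (τ - s)))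
        (B' := fun _ => -m + ε) hst₁ hg hBd ?_ ?_
      · exact hcmp
      · nlinarith
      · intro τ hsτ hτt heq
        have hge : A ≤ g τ := by nlinarith
        exact lt_of_le_of_lt (hyp τ hsτ hge) (show -m < -m + ε by linarith)
    have := eps_limit (by linarith : (0:ℝ) ≤ t₁ - s) kk
    linarith [hm1, this]
  intro t ht
  have h2 := tool_inv (s := t₁) (c := A) (g := g) (g' := g')
    (fun τ hτ => (hg τ (hst₁.trans hτ)).mono (Ici_subset_Ici.2 hst₁))
    (fun τ hτ hA => le_trans (hyp τ (hst₁.trans hτ) hA) (by linarith))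
    t (by rw [ht₁def]; linarith)
  rw [max_eq_left hkey] at h2
  exact h2

/-- Exponential decay to a positive level. -/
lemma tool_exp_reach {g g' : ℝ → ℝ} {s c r G : ℝ} (hr : 0 < r) (hc : 0 < c)
    (hg : ∀ τ, s ≤ τ → HasDerivWithinAt g (g' τ) (Ici s) τ)
    (hyp : ∀ τ, s ≤ τ → c ≤ g τ → g' τ ≤ -(r * g τ))
    (h0 : g s ≤ G) :
    ∀ t, s + r⁻¹ * max (Real.log (G / c)) 0 ≤ t → g t ≤ c := by
  intro t ht
  have hts : s ≤ t := le_trans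
    (by nlinarith [lnp_nonneg (G/c), inv_nonneg.2 hr.le]) ht
  have hinv0 : ∀ τ, s ≤ τ → c ≤ g τ → g' τ ≤ 0 := fun τ hτ hcg =>
    le_trans (hyp τ hτ hcg) (by nlinarith)
  rcases le_or_gt G c with hGc | hGc
  · calc g t ≤ max c (g s) := tool_inv hg hinv0 t hts
    _ ≤ c := max_le le_rfl (h0.trans hGc)
  · have hG0 : 0 < G := hc.trans hGc
    have hlog : 0 < Real.log (G / c) := Real.log_pos (by rw [lt_div_iff₀ hc]; linarith)
    set t₁ := s + r⁻¹ * Real.log (G / c) with ht₁def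
    clear_value t₁
    have hst₁ : s ≤ t₁ := by nlinarith [inv_nonneg.2 hr.le]
    have hrt : r * (t₁ - s) = Real.log (G / c) := by
      rw [ht₁def]; field_simp; try ring
    have hexp : G * Real.exp (-(r * (t₁ - s))) = c := by
      rw [hrt, Real.exp_neg, Real.exp_log (by positivity)]
      field_simp
      try ring
    have hkey : g t₁ ≤ c := by
      have kk : ∀ ε : ℝ, 0 < ε →
          g t₁ ≤ G * Real.exp (-(r * (t₁ - s))) + ε * (1 + (t₁ - s)) := by
        intro ε hε
        have hBd : ∀ τ : ℝ, HasDerivAt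
            (fun τ : ℝ => G * Real.exp (-(r * (τ - s))) + ε * (1 + (τ - s)))
            (G * (Real.exp (-(r * (τ - s))) * (-r)) + ε) τ := by
          intro τ
          have hin : HasDerivAt (fun τ : ℝ => -(r * (τ - s))) (-(r * 1)) τ :=
            (((hasDerivAt_id τ).sub_const s).const_mul r).neg
          have h2 : HasDerivAt (fun τ : ℝ => Real.exp (-(r * (τ - s))))
              (Real.exp (-(r * (τ - s))) * (-(r * 1))) τ := hin.exp
          have h3 := (h2.const_mul G).add
            ((((hasDerivAt_id τ).sub_const s).const_add 1).const_mul ε)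
          exact h3.congr_deriv (by ring)
        have hcmp := tool_comp
          (B := fun τ : ℝ => G * Real.exp (-(r * (τ - s))) + ε * (1 + (τ - s)))
          (B' := fun τ : ℝ => G * (Real.exp (-(r * (τ - s))) * (-r)) + ε)
          hst₁ hg hBd ?_ ?_
        · exact hcmp
        · rw [sub_self, mul_zero, neg_zero, Real.exp_zero]
          nlinarith
        · intro τ hsτ hτt heq
          have hmono : Real.exp (-(r * (t₁ - s))) ≤ Real.exp (-(r * (τ - s))) :=
            Real.exp_le_exp.2 (by nlinarith)
          have e1 : G * Real.exp (-(r * (t₁ - s))) ≤ G * Real.exp (-(r * (τ - s))) :=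
            mul_le_mul_of_nonneg_left hmono hG0.le
          have e2 : 0 ≤ ε * (1 + (τ - s)) := mul_nonneg hε.le (by linarith)
          have hge : c ≤ g τ := by linarith [hexp]
          have h4 := hyp τ hsτ hge
          rw [heq] at h4
          have e3 : 0 ≤ r * (ε * (1 + (τ - s))) := mul_nonneg hr.le e2
          nlinarith [e3]
      have := eps_limit (by linarith : (0:ℝ) ≤ t₁ - s) kk
      linarith [hexp, this]
    have htt₁ : t₁ ≤ t := by
      rw [max_eq_left hlog.le] at ht
      rw [ht₁def]; linarith
    have h2 := tool_inv (s := t₁) (c := c) (g := g) (g' := g')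
      (fun τ hτ => (hg τ (hst₁.trans hτ)).mono (Ici_subset_Ici.2 hst₁))
      (fun τ hτ hcg => hinv0 τ (hst₁.trans hτ) hcg)
      t htt₁
    rw [max_eq_left hkey] at h2
    exact h2

/-- Lower invariance. -/
lemma tool_inv' {g g' : ℝ → ℝ} {s c : ℝ}
    (hg : ∀ τ, s ≤ τ → HasDerivWithinAt g (g' τ) (Ici s) τ)
    (hyp : ∀ τ, s ≤ τ → g τ ≤ c → 0 ≤ g' τ) :
    ∀ t, s ≤ t → min c (g s) ≤ g t := by
  intro t ht
  have h2 := tool_inv (g := fun τ => -g τ) (g' := fun τ => -(g' τ)) (s := s) (c := -c)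
    (fun τ hτ => (hg τ hτ).neg)
    (fun τ hτ hcg => neg_nonpos.2 (hyp τ hτ (by linarith)))
    t ht
  rcases le_total c (g s) with hcs | hcs
  · rw [min_eq_left hcs]
    rw [max_eq_left (by linarith : -(g s) ≤ -c)] at h2
    linarith
  · rw [min_eq_right hcs]
    rw [max_eq_right (by linarith : -c ≤ -(g s))] at h2
    linarith

/-- Exponential growth up to a cap. -/
lemma tool_grow {g g' : ℝ → ℝ} {s c r G : ℝ} (hr : 0 < r) (hG : 0 < G)
    (hg : ∀ τ, s ≤ τ → HasDerivWithinAt g (g' τ) (Ici s) τ)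
    (hyp0 : ∀ τ, s ≤ τ → g τ ≤ c → 0 ≤ g' τ)
    (hypr : ∀ τ, s ≤ τ → 0 < g τ → g τ ≤ c → r * g τ < g' τ)
    (h0 : G ≤ g s) :
    ∀ t, s + r⁻¹ * max (Real.log (c / G)) 0 ≤ t → c ≤ g t := by
  intro t ht
  have hts : s ≤ t := le_trans
    (by nlinarith [lnp_nonneg (c/G), inv_nonneg.2 hr.le]) ht
  rcases le_or_gt c G with hcG | hcG
  · have h2 := tool_inv' hg hyp0 t hts
    calc c = min c G := (min_eq_left hcG).symm
    _ ≤ min c (g s) := min_le_min le_rfl h0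
    _ ≤ g t := h2
  · have hc0 : 0 < c := hG.trans hcG
    have hlog : 0 < Real.log (c / G) := Real.log_pos (by rw [lt_div_iff₀ hG]; linarith)
    set t₁ := s + r⁻¹ * Real.log (c / G) with ht₁def
    clear_value t₁
    have hst₁ : s ≤ t₁ := by nlinarith [inv_nonneg.2 hr.le]
    have hrt : r * (t₁ - s) = Real.log (c / G) := by
      rw [ht₁def]; field_simp; try ring
    have hexp : G * Real.exp (r * (t₁ - s)) = c := by
      rw [hrt, Real.exp_log (by positivity)]
      field_simp
      try ring
    have hkey : c ≤ g t₁ := by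
      have hBd : ∀ τ : ℝ, HasDerivAt
          (fun τ : ℝ => -(G * Real.exp (r * (τ - s))))
          (-(G * (Real.exp (r * (τ - s)) * r))) τ := by
        intro τ
        have hin : HasDerivAt (fun τ : ℝ => r * (τ - s)) (r * 1) τ :=
          ((hasDerivAt_id τ).sub_const s).const_mul r
        have h2 : HasDerivAt (fun τ : ℝ => Real.exp (r * (τ - s)))
            (Real.exp (r * (τ - s)) * (r * 1)) τ := hin.exp
        have h3 := (h2.const_mul G).neg
        exact h3.congr_deriv (by ring)
      have hcmp := tool_comp (g := fun τ => -g τ) (g' := fun τ => -(g' τ))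
        (B := fun τ : ℝ => -(G * Real.exp (r * (τ - s))))
        (B' := fun τ : ℝ => -(G * (Real.exp (r * (τ - s)) * r)))
        hst₁ (fun τ hτ => (hg τ hτ).neg) hBd ?_ ?_
      · nlinarith [hexp, hcmp]
      · rw [sub_self, mul_zero, Real.exp_zero]
        nlinarith
      · intro τ hsτ hτt heq
        have hgτ : g τ = G * Real.exp (r * (τ - s)) := by linarith
        have hpos : 0 < g τ := by rw [hgτ]; positivity
        have hle : g τ ≤ c := by
          have h5 : Real.exp (r * (τ - s)) ≤ Real.exp (r * (t₁ - s)) :=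
            Real.exp_le_exp.2 (by nlinarith)
          nlinarith [hexp]
        have h6 := hypr τ hsτ hpos hle
        rw [hgτ] at h6
        nlinarith
    have htt₁ : t₁ ≤ t := by
      rw [max_eq_left hlog.le] at ht
      rw [ht₁def]; linarith
    have h7 := tool_inv' (s := t₁) (g := g) (g' := g')
      (fun τ hτ => (hg τ (hst₁.trans hτ)).mono (Ici_subset_Ici.2 hst₁))
      (fun τ hτ h8 => hyp0 τ (hst₁.trans hτ) h8)
      t htt₁
    calc c = min c (g t₁) := (min_eq_left hkey).symm
    _ ≤ g t := h7
set_option maxHeartbeats 1600000 in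
/-- Approximation bound (small κ) for the perturbed two-layer dynamics. -/
theorem stmt_6 (lam z κ t₀ : ℝ) (h a β : ℝ → ℝ)
    (hlam : 0 < lam) (hh : ContinuousOn h (Ici 0))
    (ha0 : a 0 = Real.sqrt lam) (hβ0 : β 0 = 0)
    (hode : ∀ t ∈ Ici (0 : ℝ),
      HasDerivWithinAt β (a t * (z - a t * β t + h t)) (Ici 0) t ∧
      HasDerivWithinAt a (β t * (z - a t * β t + h t)) (Ici 0) t)
    (hz : 0 ≤ z) (ht₀ : 0 ≤ t₀) (hκ : 0 < κ)
    (hhb : ∀ t, t₀ ≤ t → |h t| ≤ κ)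
    (hz2 : 2 * κ ≤ z) :
    ∀ δ : ℝ, 0 < δ →
      ∀ t : ℝ, t₀ + 4 * z⁻¹ * (2
          + (1 / 2) * max (Real.log (|z - a t₀ * β t₀| / lam)) 0
          + (1 / 2) * max (Real.log (z / (4 * lam))) 0
          + max (Real.log (2 * z / δ)) 0) ≤ t →
        |z - a t * β t| ≤ κ + δ := by
  intro δ hδ t htT
  have hzpos : 0 < z := by linarith only [hκ, hz2]
  have hzi : (0:ℝ) ≤ z⁻¹ := inv_nonneg.2 hzpos.le
  -- derivative of θ = a*β
  have hθd : ∀ τ, (0:ℝ) ≤ τ → HasDerivWithinAt (fun τ => a τ * β τ)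
      ((a τ * a τ + β τ * β τ) * (z - a τ * β τ + h τ)) (Ici 0) τ := by
    intro τ hτ
    have h1 := (hode τ hτ).2.mul (hode τ hτ).1
    rw [show (a τ * a τ + β τ * β τ) * (z - a τ * β τ + h τ)
      = β τ * (z - a τ * β τ + h τ) * β τ + a τ * (a τ * (z - a τ * β τ + h τ)) from by ring]
    exact h1
  -- conservation law
  have hEc : ∀ τ, (0:ℝ) ≤ τ → a τ * a τ - β τ * β τ = lam := by
    intro τ hτ
    have hca : ContinuousOn a (Icc 0 τ) := fun x hx =>
      ((hode x hx.1).2.continuousWithinAt).mono Icc_subset_Ici_self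
    have hcb : ContinuousOn β (Icc 0 τ) := fun x hx =>
      ((hode x hx.1).1.continuousWithinAt).mono Icc_subset_Ici_self
    have hder : ∀ x ∈ Ico (0:ℝ) τ,
        HasDerivWithinAt (fun t => a t * a t - β t * β t) 0 (Ici x) x := by
      intro x hx
      have h2 := ((hode x hx.1).2.mul (hode x hx.1).2).sub
        ((hode x hx.1).1.mul (hode x hx.1).1)
      rw [show (0:ℝ) = β x * (z - a x * β x + h x) * a x + a x * (β x * (z - a x * β x + h x))
          - (a x * (z - a x * β x + h x) * β x + β x * (a x * (z - a x * β x + h x))) from by ring]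
      exact h2.mono (Ici_subset_Ici.2 hx.1)
    have hc := constant_of_has_deriv_right_zero ((hca.mul hca).sub (hcb.mul hcb)) hder
      τ (right_mem_Icc.2 hτ)
    simp only [Pi.sub_apply, Pi.mul_apply] at hc
    rw [hc, ha0, hβ0, Real.mul_self_sqrt hlam.le]
    try ring
  -- pointwise quadratic facts
  have hFlam : ∀ τ, (0:ℝ) ≤ τ → lam ≤ a τ * a τ + β τ * β τ := fun τ hτ => by
    linarith only [hEc τ hτ, mul_self_nonneg (β τ)]
  have hF0 : ∀ τ, (0:ℝ) ≤ τ → (0:ℝ) ≤ a τ * a τ + β τ * β τ := fun τ hτ =>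
    le_trans hlam.le (hFlam τ hτ)
  have hkey2 : ∀ τ, (0:ℝ) ≤ τ → (a τ - β τ)^2 * (a τ + β τ)^2 = lam * lam := fun τ hτ => by
    have hq := hEc τ hτ
    rw [← hq]; ring
  have hFgt : ∀ τ, (0:ℝ) ≤ τ → 2 * (a τ * β τ) < a τ * a τ + β τ * β τ := fun τ hτ => by
    nlinarith only [hkey2 τ hτ, sq_nonneg (a τ - β τ), sq_nonneg (a τ + β τ),
      mul_pos hlam hlam]
  have hFgt' : ∀ τ, (0:ℝ) ≤ τ → -(a τ * a τ + β τ * β τ) < 2 * (a τ * β τ) := fun τ hτ => by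
    nlinarith only [hkey2 τ hτ, sq_nonneg (a τ - β τ), sq_nonneg (a τ + β τ),
      mul_pos hlam hlam]
  have hhk : ∀ τ, t₀ ≤ τ → -κ ≤ h τ ∧ h τ ≤ κ := fun τ hτ => abs_le.1 (hhb τ hτ)
  -- abbreviations
  set U := |z - a t₀ * β t₀| with hUdef
  have hU0 : (0:ℝ) ≤ U := by rw [hUdef]; exact abs_nonneg _
  set L₁ := max (Real.log (U / lam)) 0 with hL₁def
  set L₂ := max (Real.log (z / (4 * lam))) 0 with hL₂def
  set L₃ := max (Real.log (2 * z / δ)) 0 with hL₃def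
  have hL₁0 : 0 ≤ L₁ := by rw [hL₁def]; exact le_max_right _ _
  have hL₂0 : 0 ≤ L₂ := by rw [hL₂def]; exact le_max_right _ _
  have hL₃0 : 0 ≤ L₃ := by rw [hL₃def]; exact le_max_right _ _
  clear_value U L₁ L₂ L₃
  set μ := min lam (z/4) with hμdef
  have hμpos : 0 < μ := by rw [hμdef]; exact lt_min hlam (by linarith only [hzpos])
  have hμlam : μ ≤ lam := by rw [hμdef]; exact min_le_left _ _
  have hμz : μ ≤ z/4 := by rw [hμdef]; exact min_le_right _ _
  set c₂ := max μ (lam/2) with hc₂def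
  have hc₂pos : 0 < c₂ := by
    rw [hc₂def]; exact lt_of_lt_of_le hμpos (le_max_left _ _)
  have hc₂lam : c₂ ≤ lam := by
    rw [hc₂def]; exact max_le hμlam (by linarith only [hlam])
  have hc₂half : lam/2 ≤ c₂ := by rw [hc₂def]; exact le_max_right _ _
  clear_value c₂
  -- phase times
  set s₁ := t₀ + z⁻¹ * (Real.log 2 + L₁) with hs₁def
  set s₂ := s₁ + z⁻¹ * 2 with hs₂def
  set s₃ := s₂ + z⁻¹ * 4 with hs₃def
  set s₄ := s₃ + z⁻¹ * (2 * L₂) with hs₄def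
  set s₅ := s₄ + z⁻¹ * (2 * L₃) with hs₅def
  clear_value s₁ s₂ s₃ s₄ s₅
  have hlog2 : (0:ℝ) ≤ Real.log 2 := Real.log_nonneg one_le_two
  have hlog2' : Real.log 2 ≤ 1 := by
    linarith only [Real.log_le_sub_one_of_pos (show (0:ℝ) < 2 by norm_num)]
  have ht₀s₁ : t₀ ≤ s₁ := by
    rw [hs₁def]
    linarith only [mul_nonneg hzi (by linarith only [hlog2, hL₁0] :
      (0:ℝ) ≤ Real.log 2 + L₁)]
  have hs₁s₂ : s₁ ≤ s₂ := by
    rw [hs₂def]; linarith only [mul_nonneg hzi (by norm_num : (0:ℝ) ≤ (2:ℝ))]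
  have hs₂s₃ : s₂ ≤ s₃ := by
    rw [hs₃def]; linarith only [mul_nonneg hzi (by norm_num : (0:ℝ) ≤ (4:ℝ))]
  have hs₃s₄ : s₃ ≤ s₄ := by
    rw [hs₄def]; linarith only [mul_nonneg hzi (by linarith only [hL₂0] : (0:ℝ) ≤ 2 * L₂)]
  have hs₄s₅ : s₄ ≤ s₅ := by
    rw [hs₅def]; linarith only [mul_nonneg hzi (by linarith only [hL₃0] : (0:ℝ) ≤ 2 * L₃)]
  -- master derivative providers
  have hgd : ∀ s, t₀ ≤ s → ∀ τ, s ≤ τ → HasDerivWithinAt (fun τ => -(a τ * β τ))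
      (-((a τ * a τ + β τ * β τ) * (z - a τ * β τ + h τ))) (Ici s) τ :=
    fun s hs τ hτ => ((hθd τ (ht₀.trans (hs.trans hτ))).neg).mono
      (Ici_subset_Ici.2 (ht₀.trans hs))
  have hθdm : ∀ s, t₀ ≤ s → ∀ τ, s ≤ τ → HasDerivWithinAt (fun τ => a τ * β τ)
      ((a τ * a τ + β τ * β τ) * (z - a τ * β τ + h τ)) (Ici s) τ :=
    fun s hs τ hτ => (hθd τ (ht₀.trans (hs.trans hτ))).mono
      (Ici_subset_Ici.2 (ht₀.trans hs))
  have hvd : ∀ s, t₀ ≤ s → ∀ τ, s ≤ τ → HasDerivWithinAt (fun τ => z - κ - a τ * β τ)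
      (-((a τ * a τ + β τ * β τ) * (z - a τ * β τ + h τ))) (Ici s) τ := by
    intro s hs τ hτ
    have h3 := (hθdm s hs τ hτ).const_sub (z - κ)
    convert h3 using 2
    try ring
  have hxd : ∀ s, t₀ ≤ s → ∀ τ, s ≤ τ → HasDerivWithinAt (fun τ => a τ * β τ - (z + κ))
      ((a τ * a τ + β τ * β τ) * (z - a τ * β τ + h τ)) (Ici s) τ :=
    fun s hs τ hτ => (hθdm s hs τ hτ).sub_const (z + κ)
  ------------------------------------------------------------------
  -- CHAIN (i)
  ------------------------------------------------------------------
  have hP1 : ∀ τ, s₁ ≤ τ → -(a τ * β τ) ≤ c₂ := by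
    have happ := tool_exp_reach (g := fun τ => -(a τ * β τ))
      (g' := fun τ => -((a τ * a τ + β τ * β τ) * (z - a τ * β τ + h τ)))
      (s := t₀) (c := c₂) (r := z) (G := U) hzpos hc₂pos (hgd t₀ le_rfl) ?_ ?_
    · intro τ hτ
      have hlog1 : max (Real.log (U / c₂)) 0 ≤ Real.log 2 + L₁ := by
        have hUc : U / c₂ ≤ 2 * (U / lam) := by
          have h1 : U / c₂ ≤ U / (lam/2) :=
            div_le_div_of_nonneg_left hU0 (by linarith only [hlam]) hc₂half
          have h2 : U / (lam/2) = 2 * (U / lam) := by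
            field_simp
            try ring
          linarith only [h1, h2]
        calc max (Real.log (U/c₂)) 0 ≤ max (Real.log (2 * (U/lam))) 0 :=
              lnp_mono (div_nonneg hU0 hc₂pos.le) hUc
        _ ≤ max (Real.log 2) 0 + max (Real.log (U/lam)) 0 :=
              lnp_mul (by norm_num) (div_nonneg hU0 hlam.le)
        _ = Real.log 2 + L₁ := by rw [hL₁def, max_eq_left hlog2]
      refine happ τ (le_trans ?_ hτ)
      rw [hs₁def]
      linarith only [mul_le_mul_of_nonneg_left hlog1 hzi]
    · intro τ hτ hcg
      have h0τ : (0:ℝ) ≤ τ := ht₀.trans hτ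
      have hh1 := (hhk τ hτ).1
      have hE : z/2 ≤ z - a τ * β τ + h τ := by
        linarith only [hh1, hcg, hz2, hc₂pos]
      have hF : 2 * (-(a τ * β τ)) ≤ a τ * a τ + β τ * β τ := by
        linarith only [hFgt' τ h0τ]
      have hprod : (2 * (-(a τ * β τ))) * (z/2)
          ≤ (a τ * a τ + β τ * β τ) * (z - a τ * β τ + h τ) :=
        mul_le_mul hF hE (by linarith only [hzpos]) (hF0 τ h0τ)
      linarith only [hprod]
    · calc -(a t₀ * β t₀) ≤ z - a t₀ * β t₀ := by linarith only [hz]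
      _ ≤ U := by rw [hUdef]; exact le_abs_self _
  have hP2 : ∀ τ, s₂ ≤ τ → -(a τ * β τ) ≤ 0 := by
    have happ := tool_lin (g := fun τ => -(a τ * β τ))
      (g' := fun τ => -((a τ * a τ + β τ * β τ) * (z - a τ * β τ + h τ)))
      (s := s₁) (A := 0) (B₀ := c₂) (m := lam * (z/2))
      (mul_pos hlam (by linarith only [hzpos])) hc₂pos.le (hgd s₁ ht₀s₁) ?_ (hP1 s₁ le_rfl)
    · intro τ hτ
      have hq : (c₂ - 0) / (lam * (z/2)) ≤ z⁻¹ * 2 := by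
        rw [div_le_iff₀ (mul_pos hlam (by linarith only [hzpos]))]
        have he : z⁻¹ * 2 * (lam * (z/2)) = lam * (z⁻¹ * z) := by ring
        rw [he, inv_mul_cancel₀ (ne_of_gt hzpos), mul_one]
        linarith only [hc₂lam]
      refine happ τ (le_trans ?_ hτ)
      rw [hs₂def]
      linarith only [hq]
    · intro τ hτ hcg
      have ht₀τ : t₀ ≤ τ := ht₀s₁.trans hτ
      have h0τ : (0:ℝ) ≤ τ := ht₀.trans ht₀τ
      have hh1 := (hhk τ ht₀τ).1
      have hE : z/2 ≤ z - a τ * β τ + h τ := by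
        linarith only [hh1, hcg, hz2]
      have hprod : lam * (z/2) ≤ (a τ * a τ + β τ * β τ) * (z - a τ * β τ + h τ) :=
        mul_le_mul (hFlam τ h0τ) hE (by linarith only [hzpos]) (hF0 τ h0τ)
      linarith only [hprod]
  have hP3 : ∀ τ, s₃ ≤ τ → μ ≤ a τ * β τ := by
    have happ := tool_lin (g := fun τ => -(a τ * β τ))
      (g' := fun τ => -((a τ * a τ + β τ * β τ) * (z - a τ * β τ + h τ)))
      (s := s₂) (A := -μ) (B₀ := 0) (m := lam * (z/4))
      (mul_pos hlam (by linarith only [hzpos])) (by linarith only [hμpos])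
      (hgd s₂ (ht₀s₁.trans hs₁s₂)) ?_ (hP2 s₂ le_rfl)
    · intro τ hτ
      have hq : (0 - -μ) / (lam * (z/4)) ≤ z⁻¹ * 4 := by
        rw [div_le_iff₀ (mul_pos hlam (by linarith only [hzpos]))]
        have he : z⁻¹ * 4 * (lam * (z/4)) = lam * (z⁻¹ * z) := by ring
        rw [he, inv_mul_cancel₀ (ne_of_gt hzpos), mul_one]
        linarith only [hμlam]
      have hdur : s₂ + (0 - -μ) / (lam * (z/4)) ≤ τ := by
        rw [hs₃def] at hτ
        linarith only [hτ, hq]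
      have h5 := happ τ hdur
      linarith only [h5]
    · intro τ hτ hcg
      have ht₀τ : t₀ ≤ τ := ht₀s₁.trans (hs₁s₂.trans hτ)
      have h0τ : (0:ℝ) ≤ τ := ht₀.trans ht₀τ
      have hh1 := (hhk τ ht₀τ).1
      have hE : z/4 ≤ z - a τ * β τ + h τ := by
        linarith only [hh1, hcg, hμz, hz2]
      have hprod : lam * (z/4) ≤ (a τ * a τ + β τ * β τ) * (z - a τ * β τ + h τ) :=
        mul_le_mul (hFlam τ h0τ) hE (by linarith only [hzpos]) (hF0 τ h0τ)
      linarith only [hprod]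
  have ht₀s₃ : t₀ ≤ s₃ := ht₀s₁.trans (hs₁s₂.trans hs₂s₃)
  have hP4 : ∀ τ, s₄ ≤ τ → z/4 ≤ a τ * β τ := by
    have happ := tool_grow (g := fun τ => a τ * β τ)
      (g' := fun τ => (a τ * a τ + β τ * β τ) * (z - a τ * β τ + h τ))
      (s := s₃) (c := z/4) (r := z/2) (G := μ)
      (by linarith only [hzpos]) hμpos (hθdm s₃ ht₀s₃) ?_ ?_ (hP3 s₃ le_rfl)
    · intro τ hτ
      have hln : max (Real.log ((z/4) / μ)) 0 ≤ L₂ := by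
        rcases le_total lam (z/4) with hc | hc
        · have hμeq : μ = lam := by rw [hμdef, min_eq_left hc]
          rw [hμeq]
          have he : (z/4)/lam = z/(4*lam) := by rw [div_div]
          rw [he, hL₂def]
        · have hμeq : μ = z/4 := by rw [hμdef, min_eq_right hc]
          rw [hμeq, div_self (show (z:ℝ)/4 ≠ 0 from ne_of_gt (by linarith only [hzpos])),
            Real.log_one]
          simpa using hL₂0
      have hinv : ((z:ℝ)/2)⁻¹ = z⁻¹ * 2 := by
        rw [inv_div]; ring
      refine happ τ (le_trans ?_ hτ)
      rw [hs₄def, hinv]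
      linarith only [mul_le_mul_of_nonneg_left hln hzi]
    · intro τ hτ hcg
      have ht₀τ : t₀ ≤ τ := ht₀s₃.trans hτ
      have h0τ : (0:ℝ) ≤ τ := ht₀.trans ht₀τ
      have hh1 := (hhk τ ht₀τ).1
      have hE : z/4 ≤ z - a τ * β τ + h τ := by
        linarith only [hh1, hcg, hz2]
      exact mul_nonneg (hF0 τ h0τ) (by linarith only [hE, hzpos])
    · intro τ hτ hpos hcg
      have ht₀τ : t₀ ≤ τ := ht₀s₃.trans hτ
      have h0τ : (0:ℝ) ≤ τ := ht₀.trans ht₀τ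
      have hh1 := (hhk τ ht₀τ).1
      have hE : z/4 ≤ z - a τ * β τ + h τ := by
        linarith only [hh1, hcg, hz2]
      have m1 := mul_le_mul_of_nonneg_left hE (hF0 τ h0τ)
      have m2 := mul_lt_mul_of_pos_right (hFgt τ h0τ)
        (show (0:ℝ) < z/4 by linarith only [hzpos])
      nlinarith only [m1, m2]
  have ht₀s₄ : t₀ ≤ s₄ := ht₀s₃.trans hs₃s₄
  have hP5 : ∀ τ, s₄ ≤ τ → z - κ - a τ * β τ ≤ max δ (z * (3/4) - κ) := by
    have happ := tool_inv (g := fun τ => z - κ - a τ * β τ)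
      (g' := fun τ => -((a τ * a τ + β τ * β τ) * (z - a τ * β τ + h τ)))
      (s := s₄) (c := max δ (z * (3/4) - κ)) (hvd s₄ ht₀s₄) ?_
    · intro τ hτ
      have h5 := happ τ hτ
      have hv4 : z - κ - a s₄ * β s₄ ≤ max δ (z * (3/4) - κ) := by
        have h6 := hP4 s₄ le_rfl
        calc z - κ - a s₄ * β s₄ ≤ z * (3/4) - κ := by linarith only [h6]
        _ ≤ max δ (z * (3/4) - κ) := le_max_right _ _
      rw [max_eq_left hv4] at h5
      exact h5
    · intro τ hτ hcg
      have ht₀τ : t₀ ≤ τ := ht₀s₄.trans hτ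
      have h0τ : (0:ℝ) ≤ τ := ht₀.trans ht₀τ
      have hh1 := (hhk τ ht₀τ).1
      have hδv : δ ≤ z - κ - a τ * β τ := le_trans (le_max_left _ _) hcg
      have hE : 0 ≤ z - a τ * β τ + h τ := by
        linarith only [hh1, hδv, hδ]
      linarith only [mul_nonneg (hF0 τ h0τ) hE]
  have hP6 : ∀ τ, s₅ ≤ τ → z - κ - a τ * β τ ≤ δ := by
    rcases le_or_gt (z * (3/4) - κ) δ with hcase | hcase
    · intro τ hτ
      have h5 := hP5 τ (hs₄s₅.trans hτ)
      rw [max_eq_left hcase] at h5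
      exact h5
    · have happ := tool_exp_reach (g := fun τ => z - κ - a τ * β τ)
        (g' := fun τ => -((a τ * a τ + β τ * β τ) * (z - a τ * β τ + h τ)))
        (s := s₄) (c := δ) (r := z/2) (G := z)
        (by linarith only [hzpos]) hδ (hvd s₄ ht₀s₄) ?_ ?_
      · intro τ hτ
        have hln : max (Real.log (z / δ)) 0 ≤ L₃ := by
          rw [hL₃def]
          exact lnp_mono (div_nonneg hzpos.le hδ.le)
            ((div_le_div_iff_of_pos_right hδ).2 (by linarith only [hzpos]))
        have hinv : ((z:ℝ)/2)⁻¹ = z⁻¹ * 2 := by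
          rw [inv_div]; ring
        refine happ τ (le_trans ?_ hτ)
        rw [hs₅def, hinv]
        linarith only [mul_le_mul_of_nonneg_left hln hzi]
      · intro τ hτ hcg
        have ht₀τ : t₀ ≤ τ := ht₀s₄.trans hτ
        have h0τ : (0:ℝ) ≤ τ := ht₀.trans ht₀τ
        have hh1 := (hhk τ ht₀τ).1
        have hvB := hP5 τ hτ
        rw [max_eq_right hcase.le] at hvB
        have hFz : z/2 ≤ a τ * a τ + β τ * β τ := by
          linarith only [hFgt τ h0τ, hvB]
        have hE : z - κ - a τ * β τ ≤ z - a τ * β τ + h τ := by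
          linarith only [hh1]
        have hprod : (z/2) * (z - κ - a τ * β τ)
            ≤ (a τ * a τ + β τ * β τ) * (z - a τ * β τ + h τ) :=
          mul_le_mul hFz hE (by linarith only [hcg, hδ]) (hF0 τ h0τ)
        linarith only [hprod]
      · have h6 := hP4 s₄ le_rfl
        linarith only [h6, hκ, hzpos]
  ------------------------------------------------------------------
  -- CHAIN (ii)
  ------------------------------------------------------------------
  set M := max lam (2*z) with hMdef
  have hMpos : 0 < M := by rw [hMdef]; exact lt_of_lt_of_le hlam (le_max_left _ _)
  clear_value M
  set s₆ := t₀ + z⁻¹ * (2 * L₁ + 1) with hs₆def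
  set s₇ := s₆ + z⁻¹ * L₃ with hs₇def
  clear_value s₆ s₇
  have ht₀s₆ : t₀ ≤ s₆ := by
    rw [hs₆def]
    linarith only [mul_nonneg hzi (by linarith only [hL₁0] : (0:ℝ) ≤ 2 * L₁ + 1)]
  have hs₆s₇ : s₆ ≤ s₇ := by
    rw [hs₇def]; linarith only [mul_nonneg hzi hL₃0]
  have hQ1 : ∀ τ, s₆ ≤ τ → a τ * β τ - (z + κ) ≤ 2*z := by
    have happ := tool_exp_reach (g := fun τ => a τ * β τ - (z + κ))
      (g' := fun τ => (a τ * a τ + β τ * β τ) * (z - a τ * β τ + h τ))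
      (s := t₀) (c := 2*z) (r := M) (G := U)
      hMpos (by linarith only [hzpos]) (hxd t₀ le_rfl) ?_ ?_
    · intro τ hτ
      have hMt : M⁻¹ * max (Real.log (U / (2*z))) 0 ≤ z⁻¹ * (2 * L₁ + 1) := by
        rcases le_total lam (2*z) with hc | hc
        · have hMeq : M = 2*z := by rw [hMdef, max_eq_right hc]
          have h1 : max (Real.log (U/(2*z))) 0 ≤ L₁ := by
            rw [hL₁def]
            exact lnp_mono (div_nonneg hU0 (by linarith only [hzpos]))
              (div_le_div_of_nonneg_left hU0 hlam hc)
          have h2 : M⁻¹ ≤ z⁻¹ := by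
            rw [hMeq]
            exact inv_anti₀ hzpos (by linarith only [hzpos])
          have h9 := mul_le_mul h2 h1 (lnp_nonneg _) hzi
          linarith only [h9, mul_nonneg hzi hL₁0, hzi]
        · have hMeq : M = lam := by rw [hMdef, max_eq_left hc]
          have hrw : U / (2*z) = (U/lam) * (lam/(2*z)) := by
            field_simp
            try ring
          have h1 : max (Real.log (U/(2*z))) 0 ≤ L₁ + max (Real.log (lam/(2*z))) 0 := by
            rw [hrw, hL₁def]
            exact lnp_mul (div_nonneg hU0 hlam.le) (div_nonneg hlam.le (by linarith only [hzpos]))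
          have h3 : max (Real.log (lam/(2*z))) 0 ≤ lam/(2*z) := by
            apply max_le ?_ (le_of_lt (div_pos hlam (by linarith only [hzpos])))
            linarith only [Real.log_le_sub_one_of_pos
              (div_pos hlam (show (0:ℝ) < 2*z by linarith only [hzpos])),
              div_pos hlam (show (0:ℝ) < 2*z by linarith only [hzpos])]
          have h2 : lam⁻¹ ≤ z⁻¹ := inv_anti₀ hzpos (by linarith only [hc, hzpos])
          have h4 : lam⁻¹ * (lam/(2*z)) = (2*z)⁻¹ := by
            field_simp
          have h5 : M⁻¹ * max (Real.log (U/(2*z))) 0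
              ≤ lam⁻¹ * (L₁ + max (Real.log (lam/(2*z))) 0) := by
            rw [hMeq]
            exact mul_le_mul_of_nonneg_left h1 (inv_nonneg.2 hlam.le)
          have h6 : lam⁻¹ * L₁ ≤ z⁻¹ * L₁ := mul_le_mul_of_nonneg_right h2 hL₁0
          have h7 : lam⁻¹ * max (Real.log (lam/(2*z))) 0 ≤ (2*z)⁻¹ := by
            rw [← h4]
            exact mul_le_mul_of_nonneg_left h3 (inv_nonneg.2 hlam.le)
          have h8 : (2*z)⁻¹ ≤ z⁻¹ := inv_anti₀ hzpos (by linarith only [hzpos])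
          linarith only [h5, h6, h7, h8, mul_nonneg hzi hL₁0, hzi]
      refine happ τ (le_trans ?_ hτ)
      rw [hs₆def]
      linarith only [hMt]
    · intro τ hτ hcg
      have h0τ : (0:ℝ) ≤ τ := ht₀.trans hτ
      have hh2 := (hhk τ hτ).2
      have hxpos : 0 < a τ * β τ - (z + κ) := by linarith only [hcg, hzpos]
      have hE : z - a τ * β τ + h τ ≤ -(a τ * β τ - (z + κ)) := by
        linarith only [hh2]
      have hMF : M ≤ a τ * a τ + β τ * β τ := by
        rw [hMdef]
        apply max_le (hFlam τ h0τ)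
        linarith only [hFgt τ h0τ, hcg, hκ, hzpos]
      have h9 : (a τ * a τ + β τ * β τ) * (z - a τ * β τ + h τ)
          ≤ (a τ * a τ + β τ * β τ) * (-(a τ * β τ - (z + κ))) :=
        mul_le_mul_of_nonneg_left hE (hF0 τ h0τ)
      have h10 := mul_le_mul_of_nonneg_right hMF hxpos.le
      linarith only [h9, h10]
    · have h10 : a t₀ * β t₀ - z ≤ U := by
        rw [hUdef, abs_sub_comm]
        exact le_abs_self _
      linarith only [h10, hκ]
  have hQ2 : ∀ τ, s₇ ≤ τ → a τ * β τ - (z + κ) ≤ δ := by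
    have happ := tool_exp_reach (g := fun τ => a τ * β τ - (z + κ))
      (g' := fun τ => (a τ * a τ + β τ * β τ) * (z - a τ * β τ + h τ))
      (s := s₆) (c := δ) (r := 2*z) (G := 2*z)
      (by linarith only [hzpos]) hδ (hxd s₆ ht₀s₆) ?_ (hQ1 s₆ le_rfl)
    · intro τ hτ
      have h2 : (2*z)⁻¹ ≤ z⁻¹ := inv_anti₀ hzpos (by linarith only [hzpos])
      have h1 : (2*z)⁻¹ * max (Real.log (2*z/δ)) 0 ≤ z⁻¹ * L₃ := by
        rw [hL₃def]
        exact mul_le_mul h2 le_rfl (lnp_nonneg _) hzi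
      refine happ τ (le_trans ?_ hτ)
      rw [hs₇def]
      linarith only [h1]
    · intro τ hτ hcg
      have ht₀τ : t₀ ≤ τ := ht₀s₆.trans hτ
      have h0τ : (0:ℝ) ≤ τ := ht₀.trans ht₀τ
      have hh2 := (hhk τ ht₀τ).2
      have hxpos : 0 < a τ * β τ - (z + κ) := by linarith only [hcg, hδ]
      have hE : z - a τ * β τ + h τ ≤ -(a τ * β τ - (z + κ)) := by
        linarith only [hh2]
      have hMF : 2*z ≤ a τ * a τ + β τ * β τ := by
        linarith only [hFgt τ h0τ, hcg, hδ, hκ, hzpos]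
      have h9 : (a τ * a τ + β τ * β τ) * (z - a τ * β τ + h τ)
          ≤ (a τ * a τ + β τ * β τ) * (-(a τ * β τ - (z + κ))) :=
        mul_le_mul_of_nonneg_left hE (hF0 τ h0τ)
      have h10 := mul_le_mul_of_nonneg_right hMF hxpos.le
      linarith only [h9, h10]
  ------------------------------------------------------------------
  -- Assemble
  ------------------------------------------------------------------
  have hbud_i : s₅ ≤ t := by
    have hin : Real.log 2 + L₁ + 2 + 4 + 2 * L₂ + 2 * L₃
        ≤ 4 * (2 + (1/2) * L₁ + (1/2) * L₂ + L₃) := by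
      linarith only [hlog2', hL₁0, hL₂0, hL₃0]
    have h11 := mul_le_mul_of_nonneg_left hin hzi
    rw [hs₅def, hs₄def, hs₃def, hs₂def, hs₁def]
    linarith only [htT, h11]
  have hbud_ii : s₇ ≤ t := by
    have hin : 2 * L₁ + 1 + L₃ ≤ 4 * (2 + (1/2) * L₁ + (1/2) * L₂ + L₃) := by
      linarith only [hL₁0, hL₂0, hL₃0]
    have h11 := mul_le_mul_of_nonneg_left hin hzi
    rw [hs₇def, hs₆def]
    linarith only [htT, h11]
  have hlow := hP6 t hbud_i
  have hhigh := hQ2 t hbud_ii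
  rw [abs_le]
  constructor
  · linarith only [hhigh]
  · linarith only [hlow]
end

section
/- Retracting from the negative for the perturbed two-layer dynamics: assume z ≥ 0, let t₀ ≥ 0, and suppose |h(t)| ≤ κ for all t ≥ t₀ for some κ > 0. Then θ(t) ≥ −2κ for all t ≥ t₀ + κ⁻¹. -/
open Real Set

/-- Retracting from the negative for the perturbed two-layer dynamics. -/
theorem stmt_7 (lam z κ t₀ : ℝ) (h a β : ℝ → ℝ)
    (hlam : 0 < lam) (hh : ContinuousOn h (Ici 0))
    (ha0 : a 0 = Real.sqrt lam) (hβ0 : β 0 = 0)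
    (hode : ∀ t ∈ Ici (0 : ℝ),
      HasDerivWithinAt β (a t * (z - a t * β t + h t)) (Ici 0) t ∧
      HasDerivWithinAt a (β t * (z - a t * β t + h t)) (Ici 0) t)
    (hz : 0 ≤ z) (ht₀ : 0 ≤ t₀) (hκ : 0 < κ)
    (hhb : ∀ t, t₀ ≤ t → |h t| ≤ κ) :
    ∀ t : ℝ, t₀ + κ⁻¹ ≤ t → -(2 * κ) ≤ a t * β t := by
  set F : ℝ → ℝ := fun t => -(a t * β t) with hF
  have hca : ContinuousOn a (Ici 0) := fun t ht => ((hode t ht).2).continuousWithinAt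
  have hcb : ContinuousOn β (Ici 0) := fun t ht => ((hode t ht).1).continuousWithinAt
  have hcont : ContinuousOn F (Ici 0) := (hca.mul hcb).neg
  -- derivative of F at interior points
  have hder : ∀ t : ℝ, 0 < t → HasDerivAt F
      (-(((β t) ^ 2 + (a t) ^ 2) * (z - a t * β t + h t))) t := by
    intro t ht
    have hmem : t ∈ Ici (0 : ℝ) := le_of_lt ht
    have hn : Ici (0 : ℝ) ∈ nhds t := Ici_mem_nhds ht
    have hb := ((hode t hmem).1).hasDerivAt hn
    have ha' := ((hode t hmem).2).hasDerivAt hn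
    have hm : HasDerivAt (fun x => -(a x * β x)) _ t := (ha'.mul hb).neg
    convert hm using 1
    ring
  -- key inequality : when t ≥ t₀ and F t ≥ 2κ, the derivative is ≤ -(F t)^2
  have hkey : ∀ t : ℝ, t₀ ≤ t → 2 * κ ≤ F t →
      -(((β t) ^ 2 + (a t) ^ 2) * (z - a t * β t + h t)) ≤ -(F t) ^ 2 := by
    intro t ht hFt
    have h1 : -κ ≤ h t := neg_le_of_abs_le (hhb t ht)
    have h2 : (0:ℝ) ≤ (a t + β t) ^ 2 := sq_nonneg _
    simp only [hF] at hFt ⊢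
    nlinarith [sq_nonneg (a t + β t), sq_nonneg (a t - β t), hκ.le]
  intro t₁ ht₁
  have hκi : 0 < κ⁻¹ := inv_pos.mpr hκ
  have ht₀t₁ : t₀ < t₁ := by linarith
  have ht₁0 : 0 < t₁ := by linarith
  by_contra hcon
  push_neg at hcon
  have hFt₁ : 2 * κ < F t₁ := by simp only [hF]; linarith
  have hIcc : Icc t₀ t₁ ⊆ Ici (0 : ℝ) := fun x hx => le_trans ht₀ hx.1
  have hcontIcc : ContinuousOn F (Icc t₀ t₁) := hcont.mono hIcc
  by_cases hA : ∀ s ∈ Icc t₀ t₁, 2 * κ < F s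
  · -- Case A: F > 2κ on all of [t₀, t₁]; then 1/F grows at rate ≥ 1, contradiction
    set ψ : ℝ → ℝ := fun s => (F s)⁻¹ - s with hψ
    have hFne : ∀ s ∈ Icc t₀ t₁, F s ≠ 0 := fun s hs =>
      ne_of_gt (lt_trans (by linarith) (hA s hs))
    have hψder : ∀ x ∈ interior (Icc t₀ t₁), HasDerivAt ψ
        (-(-(((β x) ^ 2 + (a x) ^ 2) * (z - a x * β x + h x))) / (F x) ^ 2 - 1) x := by
      intro x hx
      rw [interior_Icc] at hx
      have hx0 : 0 < x := lt_of_le_of_lt ht₀ hx.1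
      have hxm : x ∈ Icc t₀ t₁ := ⟨hx.1.le, hx.2.le⟩
      exact ((hder x hx0).inv (hFne x hxm)).sub (hasDerivAt_id x) |>.congr_deriv (by ring)
    have hmono : MonotoneOn ψ (Icc t₀ t₁) := by
      apply monotoneOn_of_deriv_nonneg (convex_Icc _ _)
      · exact (hcontIcc.inv₀ hFne).sub continuousOn_id
      · intro x hx
        exact ((hψder x hx).differentiableAt).differentiableWithinAt
      · intro x hx
        rw [(hψder x hx).deriv]
        have hx' := hx
        rw [interior_Icc] at hx'
        have hxm : x ∈ Icc t₀ t₁ := ⟨hx'.1.le, hx'.2.le⟩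
        have hFx : 2 * κ < F x := hA x hxm
        have hkx := hkey x hxm.1 hFx.le
        have hF2 : 0 < (F x) ^ 2 := pow_pos (by linarith) 2
        have : (F x) ^ 2 ≤ -(-(((β x) ^ 2 + (a x) ^ 2) * (z - a x * β x + h x))) := by
          linarith
        have h1le : 1 ≤ -(-(((β x) ^ 2 + (a x) ^ 2) * (z - a x * β x + h x))) / (F x) ^ 2 := by
          rw [le_div_iff₀ hF2]; linarith
        linarith
    have hml := hmono (left_mem_Icc.mpr ht₀t₁.le) (right_mem_Icc.mpr ht₀t₁.le) ht₀t₁.le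
    -- ψ t₀ ≤ ψ t₁ : (F t₀)⁻¹ - t₀ ≤ (F t₁)⁻¹ - t₁
    have hFt₀ : 0 < F t₀ := lt_trans (by linarith) (hA t₀ (left_mem_Icc.mpr ht₀t₁.le))
    have hFt₀i : 0 < (F t₀)⁻¹ := inv_pos.mpr hFt₀
    have hinv : κ⁻¹ < (F t₁)⁻¹ := by
      simp only [hψ] at hml; linarith
    have : F t₁ < κ := by
      have hFt₁pos : 0 < F t₁ := by linarith
      rwa [inv_lt_inv₀ hκ hFt₁pos] at hinv
    linarith
  · -- Case B: F dips ≤ 2κ somewhere in [t₀, t₁]; after the last such time F is antitone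
    push_neg at hA
    obtain ⟨s₀, hs₀mem, hs₀⟩ := hA
    set S : Set ℝ := Icc t₀ t₁ ∩ F ⁻¹' (Iic (2 * κ)) with hS
    have hSne : S.Nonempty := ⟨s₀, hs₀mem, hs₀⟩
    have hSbdd : BddAbove S := ⟨t₁, fun x hx => hx.1.2⟩
    have hSclosed : IsClosed S :=
      hcontIcc.preimage_isClosed_of_isClosed isClosed_Icc isClosed_Iic
    set s1 : ℝ := sSup S with hs1
    have hs1mem : s1 ∈ S := hSclosed.csSup_mem hSne hSbdd
    have hs1Icc : s1 ∈ Icc t₀ t₁ := hs1mem.1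
    have hs1F : F s1 ≤ 2 * κ := hs1mem.2
    have hs1lt : s1 < t₁ := lt_of_le_of_ne hs1Icc.2 (fun e => by rw [e] at hs1F; linarith)
    have hgt : ∀ x ∈ Ioo s1 t₁, 2 * κ < F x := by
      intro x hx
      by_contra hle
      push_neg at hle
      have hxS : x ∈ S := ⟨⟨le_trans hs1Icc.1 hx.1.le, hx.2.le⟩, hle⟩
      exact absurd (le_csSup hSbdd hxS) (not_le.mpr hx.1)
    have hanti : AntitoneOn F (Icc s1 t₁) := by
      apply antitoneOn_of_deriv_nonpos (convex_Icc _ _)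
      · exact hcontIcc.mono (Icc_subset_Icc hs1Icc.1 le_rfl)
      · intro x hx
        rw [interior_Icc] at hx
        have hx0 : 0 < x := lt_of_le_of_lt (le_trans ht₀ hs1Icc.1) hx.1
        exact ((hder x hx0).differentiableAt).differentiableWithinAt
      · intro x hx
        rw [interior_Icc] at hx
        have hx0 : 0 < x := lt_of_le_of_lt (le_trans ht₀ hs1Icc.1) hx.1
        rw [(hder x hx0).deriv]
        have hFx : 2 * κ < F x := hgt x ⟨hx.1, hx.2⟩
        have hkx := hkey x (le_trans hs1Icc.1 hx.1.le) hFx.le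
        nlinarith [sq_nonneg (F x)]
    have := hanti (left_mem_Icc.mpr hs1lt.le) (right_mem_Icc.mpr hs1lt.le) hs1lt.le
    linarith
end

section
/- Retracting into range for the perturbed two-layer dynamics: let t₀ ≥ 0 and suppose |h(t)| ≤ κ for all t ≥ t₀ for some κ > 0 (z ∈ ℝ arbitrary). Then |z − θ(t)| ≤ 2·max(|z|, 2κ) for all t ≥ t₀ + κ⁻¹. -/
open Real Set

/-- Quantitative decay lemma: if `F' ≤ -F²/2` and `F > M > 0` on `[s, T]`, then the
reciprocal grows linearly. -/
lemma lemA (F F' : ℝ → ℝ) (s T M : ℝ) (hsT : s < T)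
    (hcont : ContinuousOn F (Icc s T))
    (hd : ∀ t ∈ Ioo s T, HasDerivAt F (F' t) t)
    (hd2 : ∀ t ∈ Ioo s T, F' t ≤ -(F t) ^ 2 / 2)
    (hM : 0 < M) (hgt : ∀ t ∈ Icc s T, M < F t) :
    (F s)⁻¹ + (T - s) / 2 ≤ (F T)⁻¹ := by
  have hpos : ∀ t ∈ Icc s T, 0 < F t := fun t ht => hM.trans (hgt t ht)
  set Gf : ℝ → ℝ := fun t => (F t)⁻¹ - t / 2 with hGf
  have hmono : MonotoneOn Gf (Icc s T) := by
    apply monotoneOn_of_deriv_nonneg (convex_Icc s T)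
    · exact (hcont.inv₀ (fun t ht => (hpos t ht).ne')).sub
        ((continuous_id.div_const 2).continuousOn)
    · intro x hx
      rw [interior_Icc] at hx
      have hx' : x ∈ Icc s T := Ioo_subset_Icc_self hx
      exact (((hd x hx).inv (hpos x hx').ne').sub
        ((hasDerivAt_id x).div_const 2)).differentiableAt.differentiableWithinAt
    · intro x hx
      rw [interior_Icc] at hx
      have hx' : x ∈ Icc s T := Ioo_subset_Icc_self hx
      have hFx : 0 < F x := hpos x hx'
      have hder : HasDerivAt Gf (-(F' x) / (F x) ^ 2 - 1 / 2) x := by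
        have := ((hd x hx).inv hFx.ne').sub ((hasDerivAt_id x).div_const 2)
        exact this
      rw [hder.deriv]
      have h1 := hd2 x hx
      have h2 : (F x) ^ 2 / 2 ≤ -(F' x) := by linarith
      have h3 : (0:ℝ) < (F x) ^ 2 := by positivity
      rw [sub_nonneg, le_div_iff₀ h3]
      linarith
  have key := hmono ⟨le_refl s, hsT.le⟩ ⟨hsT.le, le_refl T⟩ hsT.le
  simp only [hGf] at key
  linarith

/-- Invariance lemma: if `F' ≤ 0` whenever `F ≥ M` (on `(s,∞)`), and `F s ≤ M`,
then `F ≤ M` on `[s,∞)`. -/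
lemma lemB (F F' : ℝ → ℝ) (s M t₁ : ℝ) (hst : s ≤ t₁)
    (hcont : ContinuousOn F (Ici s))
    (hd : ∀ t ∈ Ioi s, HasDerivAt F (F' t) t)
    (hd2 : ∀ t ∈ Ioi s, M ≤ F t → F' t ≤ 0)
    (hFs : F s ≤ M) : F t₁ ≤ M := by
  by_contra hcon
  push_neg at hcon
  set S : Set ℝ := {t | t ∈ Icc s t₁ ∧ F t ≤ M} with hS
  have hsS : s ∈ S := ⟨⟨le_refl s, hst⟩, hFs⟩
  have hSne : S.Nonempty := ⟨s, hsS⟩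
  have hSbdd : BddAbove S := ⟨t₁, fun x hx => hx.1.2⟩
  have hSclosed : IsClosed S := by
    have hSeq : S = Icc s t₁ ∩ F ⁻¹' Iic M := by
      ext x
      simp only [hS, Set.mem_setOf_eq, Set.mem_inter_iff, Set.mem_preimage, Set.mem_Iic]
    rw [hSeq]
    exact (hcont.mono (Icc_subset_Ici_self)).preimage_isClosed_of_isClosed
      isClosed_Icc isClosed_Iic
  have huS : sSup S ∈ S := hSclosed.csSup_mem hSne hSbdd
  set u := sSup S with hu
  have hus : s ≤ u := huS.1.1
  have hut : u ≤ t₁ := huS.1.2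
  have hFu : F u ≤ M := huS.2
  have hult : u < t₁ := by
    rcases lt_or_eq_of_le hut with hlt | heq
    · exact hlt
    · exfalso; rw [heq] at hFu; linarith
  have hgt : ∀ t ∈ Ioc u t₁, M < F t := by
    intro t ht
    by_contra hc; push_neg at hc
    have htS : t ∈ S := ⟨⟨hus.trans ht.1.le, ht.2⟩, hc⟩
    exact absurd (le_csSup hSbdd htS) (not_le.2 ht.1)
  have hanti : AntitoneOn F (Icc u t₁) := by
    apply antitoneOn_of_deriv_nonpos (convex_Icc u t₁)
    · exact hcont.mono (fun x hx => hus.trans hx.1)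
    · intro x hx
      rw [interior_Icc] at hx
      have hx' : x ∈ Ioi s := lt_of_le_of_lt hus hx.1
      exact (hd x hx').differentiableAt.differentiableWithinAt
    · intro x hx
      rw [interior_Icc] at hx
      have hx' : x ∈ Ioi s := lt_of_le_of_lt hus hx.1
      rw [(hd x hx').deriv]
      exact hd2 x hx' (hgt x ⟨hx.1, hx.2.le⟩).le
  have := hanti ⟨le_refl u, hult.le⟩ ⟨hult.le, le_refl t₁⟩ hult.le
  linarith

/-- One-sided retraction: if `F' = G·(H - F)` with `G ≥ 0`, `G ≥ F` when `F ≥ M`,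
and `|H| ≤ κ ≤ M/4`, then `F ≤ M` after time `t₀ + κ⁻¹`. -/
lemma one_side (t₀ κ M : ℝ) (F G H : ℝ → ℝ) (hκ : 0 < κ) (hM : 4 * κ ≤ M)
    (hcont : ContinuousOn F (Ici t₀))
    (hd : ∀ t ∈ Ioi t₀, HasDerivAt F (G t * (H t - F t)) t)
    (hG0 : ∀ t ∈ Ioi t₀, 0 ≤ G t)
    (hGF : ∀ t ∈ Ioi t₀, M ≤ F t → F t ≤ G t)
    (hH : ∀ t ∈ Ici t₀, |H t| ≤ κ) :
    ∀ t, t₀ + κ⁻¹ ≤ t → F t ≤ M := by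
  have hM0 : 0 < M := lt_of_lt_of_le (by positivity) hM
  set T := t₀ + κ⁻¹ with hT
  have hκinv : (0:ℝ) < κ⁻¹ := by positivity
  have htT : t₀ < T := by simp [hT]; linarith
  -- Step 1: there exists s ∈ [t₀, T] with F s ≤ M.
  have hstep1 : ∃ s, s ∈ Icc t₀ T ∧ F s ≤ M := by
    by_contra hcon
    push_neg at hcon
    have hgt : ∀ t ∈ Icc t₀ T, M < F t := fun t ht => hcon t ht
    have hd2 : ∀ t ∈ Ioo t₀ T, G t * (H t - F t) ≤ -(F t) ^ 2 / 2 := by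
      intro t ht
      have ht1 : t ∈ Ioi t₀ := ht.1
      have ht2 : t ∈ Icc t₀ T := Ioo_subset_Icc_self ht
      have hFt : M < F t := hgt t ht2
      have hGFt : F t ≤ G t := hGF t ht1 hFt.le
      have hG0t : 0 ≤ G t := hG0 t ht1
      have hHt : |H t| ≤ κ := hH t ht2.1
      rw [abs_le] at hHt
      nlinarith [mul_nonneg (sub_nonneg.2 hGFt) (by linarith : (0:ℝ) ≤ F t - H t),
        mul_le_mul_of_nonneg_left hHt.2 (by linarith : (0:ℝ) ≤ F t)]
    have hA := lemA F (fun t => G t * (H t - F t)) t₀ T M htT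
      (hcont.mono Icc_subset_Ici_self) (fun t ht => hd t ht.1) hd2 hM0 hgt
    have hFt₀ : M < F t₀ := hgt t₀ ⟨le_refl t₀, htT.le⟩
    have hFT : M < F T := hgt T ⟨htT.le, le_refl T⟩
    have h1 : (0:ℝ) < (F t₀)⁻¹ := inv_pos.2 (by linarith)
    have h2 : (F T)⁻¹ < (2 * κ)⁻¹ := inv_strictAnti₀ (by positivity) (by linarith)
    have h3 : (2 * κ)⁻¹ = κ⁻¹ / 2 := by
      rw [mul_inv]; ring
    have h4 : T - t₀ = κ⁻¹ := by simp [hT]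
    rw [h4] at hA
    rw [h3] at h2
    linarith
  obtain ⟨s, hsmem, hFsM⟩ := hstep1
  intro t ht
  have hst : s ≤ t := hsmem.2.trans ht
  apply lemB F (fun t => G t * (H t - F t)) s M t hst
    (hcont.mono (fun x hx => hsmem.1.trans hx))
    (fun u hu => hd u (lt_of_le_of_lt hsmem.1 hu))
  · intro u hu hMF
    have hu' : u ∈ Ioi t₀ := lt_of_le_of_lt hsmem.1 hu
    have hHu : |H u| ≤ κ := hH u (le_of_lt (show t₀ < u from hu'))
    rw [abs_le] at hHu
    have : H u - F u ≤ 0 := by linarith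
    exact mul_nonpos_of_nonneg_of_nonpos (hG0 u hu') this
  · exact hFsM

/-- Retracting into range for the perturbed two-layer dynamics. -/
theorem stmt_8 (lam z κ t₀ : ℝ) (h a β : ℝ → ℝ)
    (hlam : 0 < lam) (hh : ContinuousOn h (Ici 0))
    (ha0 : a 0 = Real.sqrt lam) (hβ0 : β 0 = 0)
    (hode : ∀ t ∈ Ici (0 : ℝ),
      HasDerivWithinAt β (a t * (z - a t * β t + h t)) (Ici 0) t ∧
      HasDerivWithinAt a (β t * (z - a t * β t + h t)) (Ici 0) t)
    (ht₀ : 0 ≤ t₀) (hκ : 0 < κ)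
    (hhb : ∀ t, t₀ ≤ t → |h t| ≤ κ) :
    ∀ t : ℝ, t₀ + κ⁻¹ ≤ t →
      |z - a t * β t| ≤ 2 * max |z| (2 * κ) := by
  set M := 2 * max |z| (2 * κ) with hMdef
  have hzM : |z| ≤ M / 2 := by
    have := le_max_left |z| (2 * κ); rw [hMdef]; linarith
  have hzM' : -(M/2) ≤ z ∧ z ≤ M/2 := abs_le.1 hzM
  have hκM : 4 * κ ≤ M := by
    have := le_max_right |z| (2 * κ); rw [hMdef]; linarith
  -- continuity of a and β on Ici 0
  have hca : ContinuousOn a (Ici 0) := fun t htm => ((hode t htm).2).continuousWithinAt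
  have hcb : ContinuousOn β (Ici 0) := fun t htm => ((hode t htm).1).continuousWithinAt
  have hcθ : ContinuousOn (fun t => a t * β t) (Ici 0) := hca.mul hcb
  have hIci : Ici t₀ ⊆ Ici (0:ℝ) := fun x hx => ht₀.trans hx
  -- HasDerivAt of θ at t > 0
  have hθ : ∀ t : ℝ, 0 < t →
      HasDerivAt (fun u => a u * β u)
        ((a t ^ 2 + β t ^ 2) * (z - a t * β t + h t)) t := by
    intro t htp
    have hmem : t ∈ Ici (0:ℝ) := le_of_lt htp
    have hnb : Ici (0:ℝ) ∈ nhds t := Ici_mem_nhds htp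
    have h1 := ((hode t hmem).2).hasDerivAt hnb
    have h2 := ((hode t hmem).1).hasDerivAt hnb
    have := h1.mul h2
    exact this.congr_deriv (by ring)
  have hG0 : ∀ t ∈ Ioi t₀, (0:ℝ) ≤ a t ^ 2 + β t ^ 2 := fun t _ => by positivity
  intro t ht
  have hub : z - a t * β t ≤ M := by
    have := one_side t₀ κ M (fun u => z - a u * β u) (fun u => a u ^ 2 + β u ^ 2)
      (fun u => -h u) hκ hκM
      ((continuousOn_const.sub hcθ).mono hIci)
      (fun u hu => by
        have hup : 0 < u := lt_of_le_of_lt ht₀ hu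
        have := (hθ u hup).const_sub z
        exact this.congr_deriv (by ring))
      hG0
      (fun u hu hMF => by
        have h1 : a u * β u ≤ z - M := by linarith
        nlinarith [sq_nonneg (a u + β u), hzM'.2])
      (fun u hu => by rw [abs_neg]; exact hhb u hu)
      t ht
    exact this
  have hlb : a t * β t - z ≤ M := by
    have := one_side t₀ κ M (fun u => a u * β u - z) (fun u => a u ^ 2 + β u ^ 2)
      h hκ hκM
      ((hcθ.sub continuousOn_const).mono hIci)
      (fun u hu => by
        have hup : 0 < u := lt_of_le_of_lt ht₀ hu
        have := (hθ u hup).sub_const z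
        exact this.congr_deriv (by ring))
      hG0
      (fun u hu hMF => by
        have h1 : M + z ≤ a u * β u := by linarith
        nlinarith [sq_nonneg (a u - β u), hzM'.1])
      (fun u hu => hhb u hu)
      t ht
    exact this
  rw [abs_le]
  constructor <;> [linarith; linarith]
end

section
/- Error control for the perturbed two-layer dynamics: for every t ≥ 0, |β(t)| ≤ λ^{1/2} exp(√2 ∫₀ᵗ (|h(s)| + |z|) ds) and |θ(t)| ≤ √2 · λ · exp(2√2 ∫₀ᵗ (|h(s)| + |z|) ds). -/
open Real Set

/-- Error control for the perturbed two-layer dynamics. -/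
theorem stmt_9 (lam z : ℝ) (h a β : ℝ → ℝ)
    (hlam : 0 < lam) (hh : ContinuousOn h (Ici 0))
    (ha0 : a 0 = Real.sqrt lam) (hβ0 : β 0 = 0)
    (hode : ∀ t ∈ Ici (0 : ℝ),
      HasDerivWithinAt β (a t * (z - a t * β t + h t)) (Ici 0) t ∧
      HasDerivWithinAt a (β t * (z - a t * β t + h t)) (Ici 0) t) :
    ∀ t : ℝ, 0 ≤ t →
      |β t| ≤ Real.sqrt lam *
          Real.exp (Real.sqrt 2 * ∫ s in (0 : ℝ)..t, (|h s| + |z|)) ∧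
      |a t * β t| ≤ Real.sqrt 2 * lam *
          Real.exp (2 * Real.sqrt 2 * ∫ s in (0 : ℝ)..t, (|h s| + |z|)) := by
  have ca : ContinuousOn a (Ici 0) := fun t ht => ((hode t ht).2).continuousWithinAt
  have cβ : ContinuousOn β (Ici 0) := fun t ht => ((hode t ht).1).continuousWithinAt
  have hmax : Continuous (fun s : ℝ => max s 0) := continuous_id.max continuous_const
  have hmem : ∀ s : ℝ, max s 0 ∈ Ici (0 : ℝ) := fun s => le_max_right s 0
  set g : ℝ → ℝ := fun s => z - a (max s 0) * β (max s 0) + h (max s 0) with hg_def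
  have cg : Continuous g := by
    refine Continuous.add (Continuous.sub continuous_const ?_) (hh.comp_continuous hmax hmem)
    exact (ca.comp_continuous hmax hmem).mul (cβ.comp_continuous hmax hmem)
  set k : ℝ → ℝ := fun s => |h (max s 0)| + |z| with hk_def
  have ck : Continuous k := ((hh.comp_continuous hmax hmem).abs).add continuous_const
  set G : ℝ → ℝ := fun t => ∫ s in (0 : ℝ)..t, g s with hG_def
  set H : ℝ → ℝ := fun t => ∫ s in (0 : ℝ)..t, k s with hH_def
  have hG' : ∀ t : ℝ, HasDerivAt G (g t) t := fun t =>
    (cg.integral_hasStrictDerivAt 0 t).hasDerivAt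
  have hH' : ∀ t : ℝ, HasDerivAt H (k t) t := fun t =>
    (ck.integral_hasStrictDerivAt 0 t).hasDerivAt
  have cG : Continuous G := continuous_iff_continuousAt.2 fun t => (hG' t).continuousAt
  have hGt : ∀ t, 0 ≤ t → g t = z - a t * β t + h t := by
    intro t ht
    simp only [hg_def, max_eq_left ht]
  have hkt : ∀ t, 0 ≤ t → k t = |h t| + |z| := by
    intro t ht
    simp only [hk_def, max_eq_left ht]
  have hG0 : G 0 = 0 := intervalIntegral.integral_same
  have hH0 : H 0 = 0 := intervalIntegral.integral_same
  have hHnn : ∀ t, 0 ≤ t → 0 ≤ H t := fun t ht =>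
    intervalIntegral.integral_nonneg ht fun u _ => by positivity
  have hIci : ∀ x : ℝ, 0 ≤ x → Ici x ⊆ Ici (0 : ℝ) := fun x hx => Ici_subset_Ici.2 hx
  -- u = √λ exp G, v = √λ exp (-G) on [0, T]
  have key : ∀ T : ℝ, 0 ≤ T → ∀ t ∈ Icc (0 : ℝ) T,
      a t + β t = Real.sqrt lam * Real.exp (G t) ∧
      a t - β t = Real.sqrt lam * Real.exp (-G t) := by
    intro T hT
    have hsub : Icc (0 : ℝ) T ⊆ Ici 0 := Icc_subset_Ici_self
    have hφ := constant_of_has_deriv_right_zero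
      (f := fun t => (a t + β t) * Real.exp (-G t)) (a := 0) (b := T)
      (((ca.mono hsub).add (cβ.mono hsub)).mul
        ((Real.continuous_exp.comp cG.neg).continuousOn))
      (by
        intro x hx
        have hx0 : (0 : ℝ) ≤ x := hx.1
        have h1 : HasDerivWithinAt (fun t => a t + β t)
            ((a x + β x) * g x) (Ici x) x := by
          have := (((hode x hx0).2).fun_add ((hode x hx0).1)).mono (hIci x hx0)
          refine this.congr_deriv ?_
          rw [hGt x hx0]; ring
        have h2 : HasDerivWithinAt (fun t => Real.exp (-G t))
            (Real.exp (-G x) * -g x) (Ici x) x :=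
          (((hG' x).hasDerivWithinAt (s := Ici x)).neg).exp
        have := h1.fun_mul h2
        refine this.congr_deriv ?_
        ring)
    have hψ := constant_of_has_deriv_right_zero
      (f := fun t => (a t - β t) * Real.exp (G t)) (a := 0) (b := T)
      (((ca.mono hsub).sub (cβ.mono hsub)).mul
        ((Real.continuous_exp.comp cG).continuousOn))
      (by
        intro x hx
        have hx0 : (0 : ℝ) ≤ x := hx.1
        have h1 : HasDerivWithinAt (fun t => a t - β t)
            (-((a x - β x) * g x)) (Ici x) x := by
          have := (((hode x hx0).2).fun_sub ((hode x hx0).1)).mono (hIci x hx0)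
          refine this.congr_deriv ?_
          rw [hGt x hx0]; ring
        have h2 : HasDerivWithinAt (fun t => Real.exp (G t))
            (Real.exp (G x) * g x) (Ici x) x :=
          ((hG' x).hasDerivWithinAt (s := Ici x)).exp
        have := h1.fun_mul h2
        refine this.congr_deriv ?_
        ring)
    intro t ht
    have e1 := hφ t ht
    have e2 := hψ t ht
    rw [ha0, hβ0, hG0] at e1 e2
    simp only [neg_zero, Real.exp_zero, add_zero, sub_zero, mul_one] at e1 e2
    have hne : Real.exp (-G t) ≠ 0 := (Real.exp_pos _).ne'
    have hne' : Real.exp (G t) ≠ 0 := (Real.exp_pos _).ne'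
    constructor
    · have := congrArg (fun y => y * Real.exp (G t)) e1
      rw [mul_assoc, ← Real.exp_add, neg_add_cancel, Real.exp_zero, mul_one] at this
      rw [this]
    · have := congrArg (fun y => y * Real.exp (-G t)) e2
      rw [mul_assoc, ← Real.exp_add, add_neg_cancel, Real.exp_zero, mul_one] at this
      rw [this]
  -- identities for β and a*β on [0, ∞)
  have hbid : ∀ t : ℝ, 0 ≤ t →
      β t = Real.sqrt lam * Real.sinh (G t) ∧
      a t * β t = lam * Real.sinh (2 * G t) / 2 := by
    intro t ht
    obtain ⟨e1, e2⟩ := key t ht t ⟨ht, le_refl t⟩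
    have hsq : Real.sqrt lam * Real.sqrt lam = lam := Real.mul_self_sqrt hlam.le
    have he : Real.exp (G t) * Real.exp (G t) = Real.exp (2 * G t) := by
      rw [← Real.exp_add]; ring_nf
    have he' : Real.exp (-G t) * Real.exp (-G t) = Real.exp (-(2 * G t)) := by
      rw [← Real.exp_add]; ring_nf
    constructor
    · have hb : β t = ((a t + β t) - (a t - β t)) / 2 := by ring
      rw [hb, e1, e2, Real.sinh_eq]
      ring
    · have hab : a t * β t =
          ((a t + β t) * (a t + β t) - (a t - β t) * (a t - β t)) / 4 := by ring
      have h4 : Real.sqrt lam * Real.exp (G t) * (Real.sqrt lam * Real.exp (G t)) -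
          Real.sqrt lam * Real.exp (-G t) * (Real.sqrt lam * Real.exp (-G t)) =
          lam * (Real.exp (2 * G t) - Real.exp (-(2 * G t))) := by
        linear_combination (Real.exp (G t) * Real.exp (G t) -
          Real.exp (-G t) * Real.exp (-G t)) * hsq + lam * he - lam * he'
      rw [hab, e1, e2, h4, Real.sinh_eq]
      ring
  -- comparison: |G t| ≤ H t
  have habs : ∀ T : ℝ, 0 ≤ T → |G T| ≤ H T := by
    intro T hT
    have main : ∀ ε : ℝ, 0 < ε →
        G T ≤ H T + ε * (1 + T) ∧ -G T ≤ H T + ε * (1 + T) := by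
      intro ε hε
      have hB' : ∀ x : ℝ, HasDerivAt (fun t => H t + ε * (1 + t)) (k x + ε) x := by
        intro x
        have h2 : HasDerivAt (fun t : ℝ => ε * (1 + t)) ε x := by
          have := ((hasDerivAt_id x).const_add (1 : ℝ)).const_mul ε
          simpa using this
        exact (hH' x).add h2
      have hB0 : (0 : ℝ) ≤ H 0 + ε * (1 + 0) := by
        rw [hH0]; nlinarith
      have hsinh0 : ∀ x, 0 ≤ x → x ≤ T → a x * β x = lam * Real.sinh (2 * G x) / 2 :=
        fun x hx _ => (hbid x hx).2
      constructor
      · have := image_le_of_deriv_right_lt_deriv_boundary (f := G) (f' := g)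
          (a := 0) (b := T) (B := fun t => H t + ε * (1 + t)) (B' := fun t => k t + ε)
          (cG.continuousOn) (fun x _ => (hG' x).hasDerivWithinAt)
          (by rw [hG0]; exact hB0) hB'
          (by
            intro x hx heq
            have hx0 : (0 : ℝ) ≤ x := hx.1
            have hGpos : 0 < G x := by
              have hH := hHnn x hx0
              have h1x : (1 : ℝ) ≤ 1 + x := by linarith
              have := mul_le_mul_of_nonneg_left h1x hε.le
              nlinarith [heq]
            have hsp : 0 < Real.sinh (2 * G x) := Real.sinh_pos_iff.2 (by linarith)
            rw [hGt x hx0, hkt x hx0, hsinh0 x hx0 hx.2.le]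
            have hz : z ≤ |z| := le_abs_self z
            have hhx : h x ≤ |h x| := le_abs_self (h x)
            nlinarith [mul_pos hlam hsp])
          (right_mem_Icc.2 hT)
        exact this
      · have := image_le_of_deriv_right_lt_deriv_boundary (f := fun t => -G t)
          (f' := fun t => -g t)
          (a := 0) (b := T) (B := fun t => H t + ε * (1 + t)) (B' := fun t => k t + ε)
          (cG.neg.continuousOn) (fun x _ => (hG' x).hasDerivWithinAt.neg)
          (by simp only [hG0, neg_zero]; exact hB0) hB'
          (by
            intro x hx heq
            have hx0 : (0 : ℝ) ≤ x := hx.1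
            have hGneg : G x < 0 := by
              have hH := hHnn x hx0
              have h1x : (1 : ℝ) ≤ 1 + x := by linarith
              have := mul_le_mul_of_nonneg_left h1x hε.le
              nlinarith [heq]
            have hsp : Real.sinh (2 * G x) < 0 := by
              rw [← Real.sinh_zero]
              exact Real.sinh_lt_sinh.2 (by linarith)
            rw [hGt x hx0, hkt x hx0]
            have habx : a x * β x = lam * Real.sinh (2 * G x) / 2 := hsinh0 x hx0 hx.2.le
            rw [habx]
            have hz : -z ≤ |z| := neg_le_abs z
            have hhx : -h x ≤ |h x| := neg_le_abs (h x)
            nlinarith [mul_pos hlam (neg_pos.2 hsp)])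
          (right_mem_Icc.2 hT)
        exact this
    have h1T : (0 : ℝ) < 1 + T := by linarith
    have hle : ∀ u : ℝ, (∀ ε : ℝ, 0 < ε → u ≤ H T + ε * (1 + T)) → u ≤ H T := by
      intro u hu
      refine le_of_forall_pos_le_add fun ε' hε' => ?_
      have := hu (ε' / (1 + T)) (by positivity)
      rwa [div_mul_cancel₀ _ h1T.ne'] at this
    have g1 : G T ≤ H T := hle _ fun ε hε => (main ε hε).1
    have g2 : -G T ≤ H T := hle _ fun ε hε => (main ε hε).2
    exact abs_le.2 ⟨by linarith, g1⟩
  -- conclusion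
  intro t ht
  have hJ : (∫ s in (0 : ℝ)..t, (|h s| + |z|)) = H t := by
    refine intervalIntegral.integral_congr fun s hs => ?_
    rw [uIcc_of_le ht] at hs
    exact (hkt s hs.1).symm
  have hGH := habs t ht
  have hHt : 0 ≤ H t := hHnn t ht
  obtain ⟨eb, eab⟩ := hbid t ht
  have hs2 : (1 : ℝ) ≤ Real.sqrt 2 := by
    rw [show (1 : ℝ) = Real.sqrt 1 from (Real.sqrt_one).symm]
    exact Real.sqrt_le_sqrt one_le_two
  have hsinh_le_exp : ∀ y : ℝ, Real.sinh y ≤ Real.exp y := by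
    intro y
    rw [Real.sinh_eq]
    have := Real.exp_pos (-y)
    have := Real.exp_pos y
    linarith
  rw [hJ]
  constructor
  · rw [eb, abs_mul, abs_of_nonneg (Real.sqrt_nonneg lam), Real.abs_sinh]
    have h1 : Real.sinh |G t| ≤ Real.sinh (H t) := Real.sinh_le_sinh.2 hGH
    have h2 : Real.sinh (H t) ≤ Real.exp (H t) := hsinh_le_exp _
    have h3 : Real.exp (H t) ≤ Real.exp (Real.sqrt 2 * H t) :=
      Real.exp_le_exp.2 (by nlinarith)
    exact mul_le_mul_of_nonneg_left (h1.trans (h2.trans h3)) (Real.sqrt_nonneg lam)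
  · rw [eab]
    have habs2 : |lam * Real.sinh (2 * G t) / 2| = lam * Real.sinh |2 * G t| / 2 := by
      rw [abs_div, abs_mul, abs_of_pos hlam, ← Real.abs_sinh]
      norm_num
    rw [habs2]
    have h0 : |2 * G t| = 2 * |G t| := by
      rw [abs_mul]; norm_num
    rw [h0]
    have h1 : Real.sinh (2 * |G t|) ≤ Real.sinh (2 * H t) :=
      Real.sinh_le_sinh.2 (by linarith)
    have h2 : Real.sinh (2 * H t) ≤ Real.exp (2 * H t) := hsinh_le_exp _
    have h3 : Real.exp (2 * H t) ≤ Real.exp (2 * Real.sqrt 2 * H t) :=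
      Real.exp_le_exp.2 (by nlinarith)
    have h4 : 0 < Real.exp (2 * Real.sqrt 2 * H t) := Real.exp_pos _
    have hsnn : 0 ≤ Real.sinh (2 * |G t|) :=
      Real.sinh_nonneg_iff.2 (by positivity)
    have hX : Real.sinh (2 * |G t|) ≤ Real.exp (2 * Real.sqrt 2 * H t) :=
      h1.trans (h2.trans h3)
    nlinarith [mul_le_mul_of_nonneg_left hX hlam.le, mul_pos hlam h4,
      mul_nonneg hlam.le hsnn]
end

section
/- Approaching from above for the perturbed multilayer dynamics: assume z ≥ 0, let t₀ ≥ 0, suppose |h(t)| ≤ κ for all t ≥ t₀ for some κ > 0, and suppose θ(t₀) ≥ z. Then, writing m = 2·max(z, 2κ), one has |z − θ(t)| ≤ m for all t ≥ t₀ + ((D+2)/(D+1)) · D^{D/(D+2)} · m^{−(2D+2)/(D+2)}. -/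
open Real Set

lemma aux_mono {f f' : ℝ → ℝ} {x y : ℝ} (hxy : x ≤ y)
    (hd : ∀ t ∈ Icc x y, HasDerivWithinAt f (f' t) (Icc x y) t)
    (h0 : ∀ t ∈ Ioo x y, 0 ≤ f' t) : f x ≤ f y := by
  have hc : ContinuousOn f (Icc x y) := fun t ht => (hd t ht).continuousWithinAt
  have hM := monotoneOn_of_hasDerivWithinAt_nonneg (convex_Icc x y) hc
    (f' := f') ?_ ?_
  · exact hM (left_mem_Icc.2 hxy) (right_mem_Icc.2 hxy) hxy
  · intro t ht
    rw [interior_Icc] at ht ⊢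
    exact (hd t (Ioo_subset_Icc_self ht)).mono Ioo_subset_Icc_self
  · intro t ht; rw [interior_Icc] at ht; exact h0 t ht

lemma aux_anti {f f' : ℝ → ℝ} {x y : ℝ} (hxy : x ≤ y)
    (hd : ∀ t ∈ Icc x y, HasDerivWithinAt f (f' t) (Icc x y) t)
    (h0 : ∀ t ∈ Ioo x y, f' t ≤ 0) : f y ≤ f x := by
  have hc : ContinuousOn f (Icc x y) := fun t ht => (hd t ht).continuousWithinAt
  have hM := antitoneOn_of_hasDerivWithinAt_nonpos (convex_Icc x y) hc
    (f' := f') ?_ ?_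
  · exact hM (left_mem_Icc.2 hxy) (right_mem_Icc.2 hxy) hxy
  · intro t ht
    rw [interior_Icc] at ht ⊢
    exact (hd t (Ioo_subset_Icc_self ht)).mono Ioo_subset_Icc_self
  · intro t ht; rw [interior_Icc] at ht; exact h0 t ht

lemma aux_const {f f' : ℝ → ℝ} (hd : ∀ t ∈ Ici (0:ℝ), HasDerivWithinAt f (f' t) (Ici 0) t)
    (h0 : ∀ t ∈ Ici (0:ℝ), f' t = 0) : ∀ t ∈ Ici (0:ℝ), f t = f 0 := by
  intro t ht
  have hsub : Icc (0:ℝ) t ⊆ Ici 0 := Icc_subset_Ici_self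
  have hd' : ∀ s ∈ Icc (0:ℝ) t, HasDerivWithinAt f (f' s) (Icc 0 t) s :=
    fun s hs => (hd s (hsub hs)).mono hsub
  have h1 := aux_mono ht hd'
    (fun s hs => le_of_eq (h0 s (hsub (Ioo_subset_Icc_self hs))).symm)
  have h2 := aux_anti ht hd'
    (fun s hs => le_of_eq (h0 s (hsub (Ioo_subset_Icc_self hs))))
  exact le_antisymm h2 h1

lemma aux_lb {f f' : ℝ → ℝ} {x y C : ℝ} (hxy : x ≤ y)
    (hd : ∀ t ∈ Icc x y, HasDerivWithinAt f (f' t) (Icc x y) t)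
    (h0 : ∀ t ∈ Ioo x y, C ≤ f' t) : C * (y - x) ≤ f y - f x := by
  have hd' : ∀ t ∈ Icc x y, HasDerivWithinAt (fun s => f s - C * s) (f' t - C) (Icc x y) t := by
    intro t ht
    exact ((hd t ht).sub ((hasDerivWithinAt_id t (Icc x y)).const_mul C)).congr_deriv (by ring)
  have hM := aux_mono hxy hd' (fun t ht => sub_nonneg.2 (h0 t ht))
  nlinarith [hM]

lemma aux_rpow (n k : ℕ) {c x s : ℝ} (hc : 0 ≤ c) (hx : 0 ≤ x) (hs : 0 ≤ s)
    (h : c ^ n * x ^ k ≤ s ^ (n + 2)) :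
    c ^ ((n : ℝ) / ((n : ℝ) + 2)) * x ^ ((k : ℝ) / ((n : ℝ) + 2)) ≤ s := by
  have hn : (0:ℝ) < (n:ℝ) + 2 := by positivity
  have h2 := Real.rpow_le_rpow (by positivity) h (le_of_lt (inv_pos.2 hn))
  calc c ^ ((n : ℝ) / ((n : ℝ) + 2)) * x ^ ((k : ℝ) / ((n : ℝ) + 2))
      = (c ^ n * x ^ k) ^ (((n:ℝ) + 2)⁻¹) := by
        rw [Real.mul_rpow (by positivity) (by positivity),
          ← Real.rpow_natCast c n, ← Real.rpow_natCast x k,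
          ← Real.rpow_mul hc, ← Real.rpow_mul hx, div_eq_mul_inv, div_eq_mul_inv]
    _ ≤ (s ^ (n + 2)) ^ (((n:ℝ) + 2)⁻¹) := h2
    _ = s := by
        rw [← Real.rpow_natCast s (n + 2), ← Real.rpow_mul hs]
        push_cast
        rw [mul_inv_cancel₀ (by positivity), Real.rpow_one]

/-- Approaching from above for the perturbed multilayer dynamics. -/
theorem stmt_12 (D : ℕ) (lam b0 z κ t₀ : ℝ) (h a b β : ℝ → ℝ)
    (hD : 1 ≤ D) (hlam : 0 < lam) (hb0pos : 0 < b0)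
    (hh : ContinuousOn h (Ici 0))
    (ha0 : a 0 = Real.sqrt lam) (hbinit : b 0 = b0) (hβ0 : β 0 = 0)
    (hode : ∀ t ∈ Ici (0 : ℝ),
      HasDerivWithinAt a
        (b t ^ D * β t * (z - a t * b t ^ D * β t + h t)) (Ici 0) t ∧
      HasDerivWithinAt b
        ((D : ℝ) * a t * b t ^ (D - 1) * β t * (z - a t * b t ^ D * β t + h t)) (Ici 0) t ∧
      HasDerivWithinAt β
        (a t * b t ^ D * (z - a t * b t ^ D * β t + h t)) (Ici 0) t)
    (hz : 0 ≤ z) (ht₀ : 0 ≤ t₀) (hκ : 0 < κ)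
    (hhb : ∀ t, t₀ ≤ t → |h t| ≤ κ)
    (hinit : z ≤ a t₀ * b t₀ ^ D * β t₀) :
    ∀ t : ℝ, t₀ + ((D : ℝ) + 2) / ((D : ℝ) + 1) * (D : ℝ) ^ ((D : ℝ) / ((D : ℝ) + 2)) *
        (2 * max z (2 * κ)) ^ (-(2 * (D : ℝ) + 2) / ((D : ℝ) + 2)) ≤ t →
      |z - a t * b t ^ D * β t| ≤ 2 * max z (2 * κ) := by
  obtain ⟨d, rfl⟩ : ∃ d, D = d + 1 := ⟨D - 1, (Nat.succ_pred_eq_of_pos hD).symm⟩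
  simp only [Nat.add_sub_cancel] at hode
  set m : ℝ := 2 * max z (2 * κ) with hmdef
  clear_value m
  have hm4 : 4 * κ ≤ m := by
    have := le_max_right z (2 * κ); simp only [hmdef]; linarith
  have hmz : 2 * z ≤ m := by
    have := le_max_left z (2 * κ); simp only [hmdef]; linarith
  have hmpos : 0 < m := by linarith
  set θ : ℝ → ℝ := fun t => a t * b t ^ (d + 1) * β t with hθdef
  set E : ℝ → ℝ := fun t => z - θ t + h t with hEdef
  set S : ℝ → ℝ := fun t => (b t ^ 2) ^ (d + 1) * β t ^ 2
      + ((d : ℝ) + 1) ^ 2 * (a t ^ 2 * ((b t ^ 2) ^ d * β t ^ 2))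
      + a t ^ 2 * (b t ^ 2) ^ (d + 1) with hSdef
  have hinitθ : z ≤ θ t₀ := hinit
  clear_value θ E S
  -- derivative of θ
  have hθ' : ∀ t ∈ Ici (0:ℝ), HasDerivWithinAt θ (S t * E t) (Ici 0) t := by
    intro t ht
    obtain ⟨h1, h2, h3⟩ := hode t ht
    have hb' := h2.pow (d + 1)
    have H := (h1.mul hb').mul h3
    rw [hθdef]
    refine H.congr_deriv ?_
    simp only [hSdef, hEdef, hθdef, Nat.add_sub_cancel, Pi.mul_apply, Pi.pow_apply]
    push_cast
    ring
  have hθc : ContinuousOn θ (Ici 0) := fun t ht => (hθ' t ht).continuousWithinAt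
  have hS0 : ∀ t, 0 ≤ S t := by
    intro t; simp only [hSdef]; positivity
  -- conservation laws
  have hab : ∀ t ∈ Ici (0:ℝ), a t ^ 2 = β t ^ 2 + lam := by
    have hdz : ∀ t ∈ Ici (0:ℝ),
        HasDerivWithinAt (fun s => a s ^ 2 - β s ^ 2) ((fun _ => (0:ℝ)) t) (Ici 0) t := by
      intro t ht
      obtain ⟨h1, h2, h3⟩ := hode t ht
      have H := (h1.pow 2).sub (h3.pow 2)
      refine H.congr_deriv ?_
      simp only [pow_one, Nat.add_sub_cancel]
      push_cast
      ring
    have hc := aux_const hdz (fun t _ => rfl)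
    intro t ht
    have := hc t ht
    simp only [ha0, hβ0, Real.sq_sqrt hlam.le] at this
    linarith
  have hbb : ∀ t ∈ Ici (0:ℝ), b t ^ 2 = ((d:ℝ) + 1) * β t ^ 2 + b0 ^ 2 := by
    have hdz : ∀ t ∈ Ici (0:ℝ),
        HasDerivWithinAt (fun s => b s ^ 2 - ((d:ℝ) + 1) * β s ^ 2)
          ((fun _ => (0:ℝ)) t) (Ici 0) t := by
      intro t ht
      obtain ⟨h1, h2, h3⟩ := hode t ht
      have H := (h2.pow 2).sub ((h3.pow 2).const_mul ((d:ℝ) + 1))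
      refine H.congr_deriv ?_
      simp only [pow_one, Nat.add_sub_cancel]
      push_cast
      ring
    have hc := aux_const hdz (fun t _ => rfl)
    intro t ht
    have := hc t ht
    simp only [hβ0, hbinit] at this
    linarith
  -- key algebraic inequality
  have hSkey : ∀ t ∈ Ici (0:ℝ),
      ((d:ℝ) + 1) ^ (d + 1) * (θ t) ^ (2 * d + 4) ≤ S t ^ (d + 3) := by
    intro t ht
    have hu : (0:ℝ) ≤ β t ^ 2 := sq_nonneg _
    have hA : (0:ℝ) ≤ a t ^ 2 := sq_nonneg _
    have hBnn : (0:ℝ) ≤ b t ^ 2 := sq_nonneg _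
    have hB : ((d:ℝ) + 1) * β t ^ 2 ≤ b t ^ 2 := by
      rw [hbb t ht]; nlinarith [sq_nonneg b0]
    have hθsq : (θ t) ^ 2 = a t ^ 2 * (b t ^ 2) ^ (d + 1) * β t ^ 2 := by
      simp only [hθdef]; ring
    -- X := a² B^{d+1} ≤ S
    have hXS : a t ^ 2 * (b t ^ 2) ^ (d + 1) ≤ S t := by
      have hrest : (0:ℝ) ≤ (b t ^ 2) ^ (d + 1) * β t ^ 2
          + ((d : ℝ) + 1) ^ 2 * (a t ^ 2 * ((b t ^ 2) ^ d * β t ^ 2)) := by positivity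
      simp only [hSdef]; linarith
    have hX0 : (0:ℝ) ≤ a t ^ 2 * (b t ^ 2) ^ (d + 1) := by positivity
    -- (d+1)^{d+1} u^{d+2} ≤ S
    have h2 : ((d:ℝ) + 1) ^ (d + 1) * (β t ^ 2) ^ (d + 1) ≤ (b t ^ 2) ^ (d + 1) := by
      calc ((d:ℝ) + 1) ^ (d + 1) * (β t ^ 2) ^ (d + 1)
          = (((d:ℝ) + 1) * β t ^ 2) ^ (d + 1) := (mul_pow _ _ _).symm
        _ ≤ (b t ^ 2) ^ (d + 1) := pow_le_pow_left₀ (by positivity) hB _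
    have h3 : ((d:ℝ) + 1) ^ (d + 1) * (β t ^ 2) ^ (d + 2) ≤ S t := by
      have hfirst : (b t ^ 2) ^ (d + 1) * β t ^ 2 ≤ S t := by
        have hrest : (0:ℝ) ≤ ((d : ℝ) + 1) ^ 2 * (a t ^ 2 * ((b t ^ 2) ^ d * β t ^ 2))
            + a t ^ 2 * (b t ^ 2) ^ (d + 1) := by positivity
        simp only [hSdef]; linarith
      calc ((d:ℝ) + 1) ^ (d + 1) * (β t ^ 2) ^ (d + 2)
          = (((d:ℝ) + 1) ^ (d + 1) * (β t ^ 2) ^ (d + 1)) * β t ^ 2 := by ring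
        _ ≤ (b t ^ 2) ^ (d + 1) * β t ^ 2 := mul_le_mul_of_nonneg_right h2 hu
        _ ≤ S t := hfirst
    have hθpow : (θ t) ^ (2 * d + 4) = ((θ t) ^ 2) ^ (d + 2) := by
      rw [← pow_mul]; ring_nf
    calc ((d:ℝ) + 1) ^ (d + 1) * (θ t) ^ (2 * d + 4)
        = (a t ^ 2 * (b t ^ 2) ^ (d + 1)) ^ (d + 2)
            * (((d:ℝ) + 1) ^ (d + 1) * (β t ^ 2) ^ (d + 2)) := by
          rw [hθpow, hθsq]; ring
      _ ≤ S t ^ (d + 2) * S t :=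
          mul_le_mul (pow_le_pow_left₀ hX0 hXS _) h3 (by positivity) (pow_nonneg (hS0 t) _)
      _ = S t ^ (d + 3) := by rw [← pow_succ]
  have hIci : ∀ {s : ℝ}, t₀ ≤ s → s ∈ Ici (0:ℝ) := fun {s} hs => le_trans ht₀ hs
  -- lower barrier
  have hlow : ∀ t, t₀ ≤ t → z - κ ≤ θ t := by
    intro t1 ht1
    by_contra hcon
    push_neg at hcon
    set K : Set ℝ := Icc t₀ t1 ∩ θ ⁻¹' (Ici (z - κ)) with hKdef
    have hKne : K.Nonempty := ⟨t₀, ⟨le_refl _, ht1⟩, by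
      simp only [mem_preimage, mem_Ici]; linarith⟩
    have hKbdd : BddAbove K := ⟨t1, fun s hs => hs.1.2⟩
    have hKcl : IsClosed K :=
      (hθc.mono (Icc_subset_Ici_self.trans (Ici_subset_Ici.2 ht₀))).preimage_isClosed_of_isClosed
        isClosed_Icc isClosed_Ici
    set s := sSup K with hsdef
    have hsK : s ∈ K := hKcl.csSup_mem hKne hKbdd
    have hst0 : t₀ ≤ s := hsK.1.1
    have hst1 : s ≤ t1 := hsK.1.2
    have hsθ : z - κ ≤ θ s := hsK.2
    have hgt : ∀ r, s < r → r ≤ t1 → θ r < z - κ := by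
      intro r hr hr1
      by_contra hrc
      push_neg at hrc
      exact absurd (le_csSup hKbdd ⟨⟨le_trans hst0 hr.le, hr1⟩, hrc⟩) (not_le.2 hr)
    have hslt : s < t1 := by
      rcases lt_or_eq_of_le hst1 with hlt | heq
      · exact hlt
      · rw [heq] at hsθ; linarith
    have hnn : ∀ r ∈ Ioo s t1, 0 ≤ S r * E r := by
      intro r hr
      have hrt0 : t₀ ≤ r := le_trans hst0 hr.1.le
      have hhr := abs_le.1 (hhb r hrt0)
      have hθr : θ r < z - κ := hgt r hr.1 hr.2.le
      have hEr : 0 ≤ E r := by simp only [hEdef]; linarith [hhr.1]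
      exact mul_nonneg (hS0 r) hEr
    have hmono := aux_mono (f := θ) (f' := fun r => S r * E r) hst1
      (fun r hr => (hθ' r (hIci (le_trans hst0 hr.1))).mono
        (Icc_subset_Ici_self.trans (Ici_subset_Ici.2 (le_trans ht₀ hst0)))) hnn
    linarith [hgt t1 hslt le_rfl]
  -- upper barrier persistence
  have hup : ∀ t1 t2, t₀ ≤ t1 → t1 ≤ t2 → θ t1 ≤ z + m → θ t2 ≤ z + m := by
    intro t1 t2 ht1 h12 hθt1
    by_contra hcon
    push_neg at hcon
    set K : Set ℝ := Icc t1 t2 ∩ θ ⁻¹' (Iic (z + m)) with hKdef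
    have hKne : K.Nonempty := ⟨t1, ⟨le_refl _, h12⟩, by
      simp only [mem_preimage, mem_Iic]; linarith⟩
    have hKbdd : BddAbove K := ⟨t2, fun s hs => hs.1.2⟩
    have hKcl : IsClosed K :=
      (hθc.mono (Icc_subset_Ici_self.trans (Ici_subset_Ici.2 (le_trans ht₀ ht1)))).preimage_isClosed_of_isClosed
        isClosed_Icc isClosed_Iic
    set s := sSup K with hsdef
    have hsK : s ∈ K := hKcl.csSup_mem hKne hKbdd
    have hst1 : t1 ≤ s := hsK.1.1
    have hst2 : s ≤ t2 := hsK.1.2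
    have hsθ : θ s ≤ z + m := hsK.2
    have hgt : ∀ r, s < r → r ≤ t2 → z + m < θ r := by
      intro r hr hr2
      by_contra hrc
      push_neg at hrc
      exact absurd (le_csSup hKbdd ⟨⟨le_trans hst1 hr.le, hr2⟩, hrc⟩) (not_le.2 hr)
    have hnp : ∀ r ∈ Ioo s t2, S r * E r ≤ 0 := by
      intro r hr
      have hrt0 : t₀ ≤ r := le_trans ht1 (le_trans hst1 hr.1.le)
      have hhr := abs_le.1 (hhb r hrt0)
      have hθr : z + m < θ r := hgt r hr.1 hr.2.le
      have hEr : E r ≤ 0 := by simp only [hEdef]; linarith [hhr.2]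
      exact mul_nonpos_of_nonneg_of_nonpos (hS0 r) hEr
    have hanti := aux_anti (f := θ) (f' := fun r => S r * E r) hst2
      (fun r hr => (hθ' r (hIci (le_trans ht1 (le_trans hst1 hr.1)))).mono
        (Icc_subset_Ici_self.trans (Ici_subset_Ici.2 (le_trans ht₀ (le_trans ht1 hst1))))) hnp
    linarith
  -- constants
  set q : ℝ := (2 * (d:ℝ) + 4) / ((d:ℝ) + 3) with hqdef
  set c₀ : ℝ := ((d:ℝ) + 1) ^ (((d:ℝ) + 1) / ((d:ℝ) + 3)) with hc₀def
  set T : ℝ := ((d:ℝ) + 3) / ((d:ℝ) + 2) * c₀ * m ^ (-q) with hTdef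
  clear_value q c₀ T
  have hd1pos : (0:ℝ) < (d:ℝ) + 1 := by positivity
  have hq0 : 0 < q := by rw [hqdef]; positivity
  have hc₀pos : 0 < c₀ := by rw [hc₀def]; positivity
  have hc₀1 : 1 ≤ c₀ := by
    rw [hc₀def]; exact Real.one_le_rpow (by linarith) (by positivity)
  have hmq : 0 < m ^ (-q) := Real.rpow_pos_of_pos hmpos _
  have hT0 : 0 < T := by
    rw [hTdef]; positivity
  -- pointwise lower bound on S
  have hSw : ∀ t ∈ Ici (0:ℝ), z ≤ θ t → c₀ * (θ t - z) ^ q ≤ S t := by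
    intro t ht hθz
    have hθnn : 0 ≤ θ t := le_trans hz hθz
    have hkey : ((d:ℝ) + 1) ^ (d + 1) * (θ t) ^ (2 * d + 4) ≤ S t ^ ((d + 1) + 2) := by
      rw [show d + 1 + 2 = d + 3 from by omega]
      exact hSkey t ht
    have H := aux_rpow (d + 1) (2 * d + 4) (le_of_lt hd1pos) hθnn (hS0 t) hkey
    have e1 : ((d + 1 : ℕ) : ℝ) = (d:ℝ) + 1 := by push_cast; ring
    have e2 : ((2 * d + 4 : ℕ) : ℝ) = 2 * (d:ℝ) + 4 := by push_cast; ring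
    rw [e1, e2] at H
    have e5 : (d:ℝ) + 1 + 2 = (d:ℝ) + 3 := by ring
    have e3 : ((d:ℝ) + 1) / ((d:ℝ) + 1 + 2) = ((d:ℝ) + 1) / ((d:ℝ) + 3) := by rw [e5]
    have e4 : (2 * (d:ℝ) + 4) / ((d:ℝ) + 1 + 2) = q := by rw [e5, hqdef]
    rw [e3, e4, ← hc₀def] at H
    refine le_trans (mul_le_mul_of_nonneg_left ?_ hc₀pos.le) H
    exact Real.rpow_le_rpow (by linarith) (by linarith) hq0.le

  -- hitting time
  have hhit : ∃ ts ∈ Icc t₀ (t₀ + T), θ ts ≤ z + m := by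
    by_contra hcon
    push_neg at hcon
    set V : ℝ → ℝ := fun s => (θ s - z) ^ (-q) with hVdef
    clear_value V
    have hIccsub : Icc t₀ (t₀ + T) ⊆ Ici (0:ℝ) :=
      Icc_subset_Ici_self.trans (Ici_subset_Ici.2 ht₀)
    have hV' : ∀ s ∈ Icc t₀ (t₀ + T),
        HasDerivWithinAt V ((S s * E s) * (-q) * (θ s - z) ^ (-q - 1)) (Icc t₀ (t₀ + T)) s := by
      intro s hs
      have hws : m < θ s - z := by linarith [hcon s hs]
      rw [hVdef]
      exact (((hθ' s (hIci hs.1)).mono hIccsub).sub_const z).rpow_const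
        (Or.inl (ne_of_gt (by linarith : (0:ℝ) < θ s - z)))
    have hC : ∀ s ∈ Ioo t₀ (t₀ + T), q * c₀ / 2 ≤ (S s * E s) * (-q) * (θ s - z) ^ (-q - 1) := by
      intro s hs
      have hs' : s ∈ Icc t₀ (t₀ + T) := Ioo_subset_Icc_self hs
      have hws : m < θ s - z := by linarith [hcon s hs']
      set w : ℝ := θ s - z with hwdef
      have hwpos : 0 < w := lt_trans hmpos hws
      have hθnn : 0 ≤ θ s := by linarith
      have hSlb : c₀ * w ^ q ≤ S s := hSw s (hIci hs'.1) (by linarith)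
      have hhs := abs_le.1 (hhb s hs'.1)
      have hhalf : w / 2 ≤ -(E s) := by simp only [hEdef]; linarith
      have hpow : (0:ℝ) ≤ w ^ (-q - 1) := Real.rpow_nonneg hwpos.le _
      have hprod : c₀ * w ^ q * (w / 2) ≤ S s * (-(E s)) :=
        mul_le_mul hSlb hhalf (by positivity) (hS0 s)
      have hone : w ^ q * w * w ^ (-q - 1) = 1 := by
        calc w ^ q * w * w ^ (-q - 1) = w ^ q * w ^ (1:ℝ) * w ^ (-q - 1) := by
              rw [Real.rpow_one]
          _ = w ^ (q + 1 + (-q - 1)) := by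
              rw [← Real.rpow_add hwpos, ← Real.rpow_add hwpos]
          _ = 1 := by rw [show q + 1 + (-q - 1) = 0 from by ring, Real.rpow_zero]
      have h5 : q * (c₀ * w ^ q * (w / 2)) * w ^ (-q - 1)
          ≤ q * (S s * (-(E s))) * w ^ (-q - 1) :=
        mul_le_mul_of_nonneg_right (mul_le_mul_of_nonneg_left hprod hq0.le) hpow
      have h6 : q * (c₀ * w ^ q * (w / 2)) * w ^ (-q - 1)
          = q * c₀ / 2 * (w ^ q * w * w ^ (-q - 1)) := by ring
      have h7 : (S s * E s) * (-q) * w ^ (-q - 1)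
          = q * (S s * (-(E s))) * w ^ (-q - 1) := by ring
      rw [h7]
      rw [h6, hone, mul_one] at h5
      exact h5
    have hlb := aux_lb (le_of_lt (by linarith : t₀ < t₀ + T)) hV' hC
    have hVnn : 0 ≤ V t₀ := by
      simp only [hVdef]
      exact Real.rpow_nonneg (by linarith [hcon t₀ (left_mem_Icc.2 (by linarith : t₀ ≤ t₀ + T))]) _
    have hcst : q * c₀ / 2 * (t₀ + T - t₀) = c₀ * c₀ * m ^ (-q) := by
      have h9 : t₀ + T - t₀ = T := by ring
      have hd3 : ((d:ℝ) + 3) ≠ 0 := by positivity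
      have hd2 : ((d:ℝ) + 2) ≠ 0 := by positivity
      have h10 : T = ((d:ℝ) + 3) / ((d:ℝ) + 2) * c₀ * m ^ (-q) := hTdef
      have h11 : q = (2 * (d:ℝ) + 4) / ((d:ℝ) + 3) := hqdef
      generalize m ^ (-q) = M at h10 ⊢
      rw [h9, h10, h11]
      field_simp
      ring
    have hVup : V (t₀ + T) < m ^ (-q) := by
      have hw1 : m < θ (t₀ + T) - z := by
        linarith [hcon (t₀ + T) (right_mem_Icc.2 (by linarith : t₀ ≤ t₀ + T))]
      have := Real.rpow_lt_rpow_of_neg hmpos hw1 (show -q < 0 by linarith)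
      simpa only [hVdef] using this
    have hfin : m ^ (-q) ≤ V (t₀ + T) := by
      have h8 : c₀ * c₀ * m ^ (-q) ≤ V (t₀ + T) := by
        rw [← hcst]; linarith [hlb, hVnn]
      have hcc : (1:ℝ) ≤ c₀ * c₀ := by
        simpa using mul_le_mul hc₀1 hc₀1 zero_le_one (le_trans zero_le_one hc₀1)
      have h9 : m ^ (-q) ≤ c₀ * c₀ * m ^ (-q) := le_mul_of_one_le_left hmq.le hcc
      exact le_trans h9 h8
    exact absurd hfin (not_le.2 hVup)
  -- conclusion
  intro t htT
  have hTeq : (((d + 1 : ℕ) : ℝ) + 2) / (((d + 1 : ℕ) : ℝ) + 1)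
      * ((d + 1 : ℕ) : ℝ) ^ (((d + 1 : ℕ) : ℝ) / (((d + 1 : ℕ) : ℝ) + 2))
      * m ^ (-(2 * ((d + 1 : ℕ) : ℝ) + 2) / (((d + 1 : ℕ) : ℝ) + 2)) = T := by
    have e1 : ((d + 1 : ℕ) : ℝ) = (d:ℝ) + 1 := by push_cast; ring
    have e5 : (d:ℝ) + 1 + 2 = (d:ℝ) + 3 := by ring
    have e6 : (d:ℝ) + 1 + 1 = (d:ℝ) + 2 := by ring
    have e7 : -(2 * ((d:ℝ) + 1) + 2) = -(2 * (d:ℝ) + 4) := by ring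
    rw [e1, e5, e6, e7, neg_div, ← hqdef, ← hc₀def, ← hTdef]
  rw [hTeq] at htT
  have ht₀t : t₀ ≤ t := by linarith
  obtain ⟨ts, hts, hθts⟩ := hhit
  have h1 : θ t ≤ z + m := hup ts t hts.1 (by linarith [hts.2]) hθts
  have h2 : z - κ ≤ θ t := hlow t ht₀t
  simp only [hθdef] at h1 h2
  rw [abs_le]
  constructor <;> linarith
end

section
/- Retracting from the negative for the perturbed multilayer dynamics: assume z ≥ 0, let t₀ ≥ 0, and suppose |h(t)| ≤ κ for all t ≥ t₀ for some κ > 0. Then θ(t) ≥ −2κ for all t ≥ t₀ + ((D+2)/(D+1)) · D^{D/(D+2)} · (2κ)^{−(2D+2)/(D+2)}. -/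
open Real Set

/-- Retracting from the negative for the perturbed multilayer dynamics. -/
theorem stmt_14 (D : ℕ) (lam b0 z κ t₀ : ℝ) (h a b β : ℝ → ℝ)
    (hD : 1 ≤ D) (hlam : 0 < lam) (hb0pos : 0 < b0)
    (hh : ContinuousOn h (Ici 0))
    (ha0 : a 0 = Real.sqrt lam) (hbinit : b 0 = b0) (hβ0 : β 0 = 0)
    (hode : ∀ t ∈ Ici (0 : ℝ),
      HasDerivWithinAt a
        (b t ^ D * β t * (z - a t * b t ^ D * β t + h t)) (Ici 0) t ∧
      HasDerivWithinAt b
        ((D : ℝ) * a t * b t ^ (D - 1) * β t * (z - a t * b t ^ D * β t + h t)) (Ici 0) t ∧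
      HasDerivWithinAt β
        (a t * b t ^ D * (z - a t * b t ^ D * β t + h t)) (Ici 0) t)
    (hz : 0 ≤ z) (ht₀ : 0 ≤ t₀) (hκ : 0 < κ)
    (hhb : ∀ t, t₀ ≤ t → |h t| ≤ κ) :
    ∀ t : ℝ, t₀ + ((D : ℝ) + 2) / ((D : ℝ) + 1) * (D : ℝ) ^ ((D : ℝ) / ((D : ℝ) + 2)) *
        (2 * κ) ^ (-(2 * (D : ℝ) + 2) / ((D : ℝ) + 2)) ≤ t →
      -(2 * κ) ≤ a t * b t ^ D * β t := by
  obtain ⟨k, rfl⟩ : ∃ k, D = k + 1 := ⟨D - 1, (Nat.succ_pred_eq_of_pos hD).symm⟩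
  set Dr : ℝ := ((k + 1 : ℕ) : ℝ) with hDrdef
  have hDr : Dr = (k : ℝ) + 1 := by push_cast [hDrdef]; ring
  clear_value Dr
  have hDrpos : 0 < Dr := by rw [hDr]; positivity
  have hDr1 : 1 ≤ Dr := by rw [hDr]; have : (0:ℝ) ≤ (k:ℝ) := Nat.cast_nonneg k; linarith
  set θ : ℝ → ℝ := fun t => a t * b t ^ (k + 1) * β t with hθdef
  set S : ℝ → ℝ := fun t => z - θ t + h t with hSdef
  set E : ℝ → ℝ := fun t =>
    (b t ^ (k + 1) * β t) ^ 2 + Dr ^ 2 * (a t * b t ^ k * β t) ^ 2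
      + (a t * b t ^ (k + 1)) ^ 2 with hEdef
  set p : ℝ := Dr / (Dr + 2) with hpdef
  set r : ℝ := (2 * Dr + 2) / (Dr + 2) with hrdef
  clear_value θ S E p r
  have hp0 : 0 ≤ p := by rw [hpdef, hDr]; positivity
  have hr0 : 0 < r := by rw [hrdef, hDr]; positivity
  have hDp : 0 < Dr ^ p := Real.rpow_pos_of_pos hDrpos p
  have h2κ : (0:ℝ) < 2 * κ := by linarith
  -- continuity
  have hconta : ContinuousOn a (Ici 0) := fun t ht => ((hode t ht).1).continuousWithinAt
  have hcontb : ContinuousOn b (Ici 0) := fun t ht => ((hode t ht).2.1).continuousWithinAt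
  have hcontβ : ContinuousOn β (Ici 0) := fun t ht => ((hode t ht).2.2).continuousWithinAt
  have hcontθ : ContinuousOn θ (Ici 0) := by
    rw [hθdef]; exact (hconta.mul (hcontb.pow _)).mul hcontβ
  -- derivative of θ
  have hθ' : ∀ t ∈ Ici (0 : ℝ), HasDerivWithinAt θ (E t * S t) (Ici 0) t := by
    intro t ht
    obtain ⟨h1, h2, h3⟩ := hode t ht
    have h2p := h2.pow (k + 1)
    have hder := (h1.mul h2p).mul h3
    rw [hθdef]
    refine hder.congr_deriv ?_
    simp only [hEdef, hSdef, hθdef, Nat.add_sub_cancel, hDr, Pi.mul_apply, Pi.pow_apply]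
    push_cast
    ring
  -- invariants
  have hinv1 : ∀ t ∈ Ici (0 : ℝ), a t ^ 2 = lam + β t ^ 2 := by
    intro t ht
    have key := constant_of_has_deriv_right_zero (f := fun s => a s ^ 2 - β s ^ 2)
        (a := 0) (b := t)
        (((hconta.mono Icc_subset_Ici_self).pow 2).sub ((hcontβ.mono Icc_subset_Ici_self).pow 2))
        (fun x hx => by
          obtain ⟨h1, _, h3⟩ := hode x hx.1
          have hd := ((h1.pow 2).sub (h3.pow 2)).mono (Ici_subset_Ici.2 hx.1)
          refine hd.congr_deriv ?_
          push_cast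
          ring) t ⟨ht, le_rfl⟩
    simp only [ha0, hβ0] at key
    rw [Real.sq_sqrt hlam.le] at key
    norm_num at key
    linarith
  have hinv2 : ∀ t ∈ Ici (0 : ℝ), b t ^ 2 = b0 ^ 2 + Dr * β t ^ 2 := by
    intro t ht
    have key := constant_of_has_deriv_right_zero (f := fun s => b s ^ 2 - Dr * a s ^ 2)
        (a := 0) (b := t)
        (((hcontb.mono Icc_subset_Ici_self).pow 2).sub
          (continuousOn_const.mul ((hconta.mono Icc_subset_Ici_self).pow 2)))
        (fun x hx => by
          obtain ⟨h1, h2, _⟩ := hode x hx.1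
          have hd := ((h2.pow 2).sub ((h1.pow 2).const_mul Dr)).mono (Ici_subset_Ici.2 hx.1)
          refine hd.congr_deriv ?_
          simp only [Nat.add_sub_cancel]
          push_cast
          ring) t ⟨ht, le_rfl⟩
    have hat := hinv1 t ht
    have ha00 := hinv1 0 self_mem_Ici
    simp only [hbinit, hβ0] at key ha00
    norm_num at ha00
    linear_combination key + Dr * hat - Dr * ha00
  -- positivity of a and b
  have hapos : ∀ t ∈ Ici (0 : ℝ), 0 < a t := by
    intro t ht
    by_contra hle
    push_neg at hle
    have h0 : (0:ℝ) ∈ Icc (a t) (a 0) := ⟨hle, by rw [ha0]; exact Real.sqrt_nonneg _⟩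
    obtain ⟨c, hc, hc0⟩ := intermediate_value_Icc' ht (hconta.mono Icc_subset_Ici_self) h0
    have hi := hinv1 c hc.1
    rw [hc0] at hi
    norm_num at hi
    linarith [sq_nonneg (β c)]
  have hbpos : ∀ t ∈ Ici (0 : ℝ), 0 < b t := by
    intro t ht
    by_contra hle
    push_neg at hle
    have h0 : (0:ℝ) ∈ Icc (b t) (b 0) := ⟨hle, by rw [hbinit]; exact hb0pos.le⟩
    obtain ⟨c, hc, hc0⟩ := intermediate_value_Icc' ht (hcontb.mono Icc_subset_Ici_self) h0
    have hi := hinv2 c hc.1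
    rw [hc0] at hi
    norm_num at hi
    linarith [mul_nonneg hDrpos.le (sq_nonneg (β c)), pow_pos hb0pos 2]
  -- key inequality
  have hkey : ∀ t ∈ Ici (0 : ℝ), θ t < 0 → Dr ^ p * (-θ t) ^ r ≤ E t := by
    intro t ht hneg
    have hat := hapos t ht
    have hbt := hbpos t ht
    have ha2 := hinv1 t ht
    have hb2 := hinv2 t ht
    obtain ⟨u, hu⟩ : ∃ u : ℝ, u = -θ t := ⟨_, rfl⟩
    obtain ⟨X, hX⟩ : ∃ X : ℝ, X = (a t * b t ^ (k+1))^2 := ⟨_, rfl⟩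
    have hu0 : 0 < u := by rw [hu]; linarith
    have hXpos : 0 < X := by rw [hX]; exact pow_pos (mul_pos hat (pow_pos hbt _)) 2
    have hXE : X ≤ E t := by
      have h1 : 0 ≤ (b t ^ (k+1) * β t)^2 + Dr^2 * (a t * b t ^ k * β t)^2 := by positivity
      rw [hX]
      simp only [hEdef]
      linarith
    have hu2 : u ^ 2 = X * β t ^ 2 := by rw [hu, hX, hθdef]; ring
    have step1 : Dr ^ (k+1) * (β t ^ 2) ^ (k+2) ≤ X := by
      have h1 : β t ^ 2 ≤ a t ^ 2 := by linarith [ha2]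
      have h2 : Dr * β t ^ 2 ≤ b t ^ 2 := by linarith [hb2, sq_nonneg b0]
      have h2' : (Dr * β t ^ 2) ^ (k+1) ≤ (b t ^ 2) ^ (k+1) :=
        pow_le_pow_left₀ (mul_nonneg hDrpos.le (sq_nonneg _)) h2 _
      calc Dr ^ (k+1) * (β t ^ 2) ^ (k+2) = β t ^ 2 * (Dr * β t ^ 2) ^ (k+1) := by ring
        _ ≤ a t ^ 2 * (b t ^ 2) ^ (k+1) :=
            mul_le_mul h1 h2' (pow_nonneg (mul_nonneg hDrpos.le (sq_nonneg _)) _) (sq_nonneg _)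
        _ = X := by rw [hX]; ring
    have step2 : Dr ^ (k+1) * u ^ (2*k+4) ≤ X ^ (k+3) := by
      calc Dr ^ (k+1) * u ^ (2*k+4) = Dr ^ (k+1) * ((u^2) ^ (k+2)) := by ring
        _ = Dr ^ (k+1) * (β t ^ 2) ^ (k+2) * X ^ (k+2) := by rw [hu2]; ring
        _ ≤ X * X ^ (k+2) := mul_le_mul_of_nonneg_right step1 (pow_nonneg hXpos.le _)
        _ = X ^ (k+3) := by ring
    have h13 : (0:ℝ) < 1 / ((k:ℝ)+3) := by positivity
    have hstep := Real.rpow_le_rpow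
      (mul_nonneg (pow_nonneg hDrpos.le _) (pow_nonneg hu0.le _)) step2 h13.le
    rw [Real.mul_rpow (pow_nonneg hDrpos.le _) (pow_nonneg hu0.le _)] at hstep
    rw [← Real.rpow_natCast Dr (k+1), ← Real.rpow_natCast u (2*k+4),
        ← Real.rpow_natCast X (k+3), ← Real.rpow_mul hDrpos.le, ← Real.rpow_mul hu0.le,
        ← Real.rpow_mul hXpos.le] at hstep
    have e1 : ((k+1:ℕ):ℝ) * (1/((k:ℝ)+3)) = p := by
      rw [hpdef, hDr]; push_cast; rw [mul_one_div]; ring_nf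
    have e2 : ((2*k+4:ℕ):ℝ) * (1/((k:ℝ)+3)) = r := by
      rw [hrdef, hDr]; push_cast; rw [mul_one_div]; ring_nf
    have e3 : ((k+3:ℕ):ℝ) * (1/((k:ℝ)+3)) = 1 := by
      push_cast; field_simp
    rw [e1, e2, e3, Real.rpow_one] at hstep
    rw [hu] at hstep
    exact le_trans hstep hXE
  -- derivative at interior points
  have hDA : ∀ x : ℝ, 0 < x → HasDerivAt θ (E x * S x) x := fun x hx =>
    (hθ' x hx.le).hasDerivAt (Ici_mem_nhds hx)
  -- barrier
  have hbar : ∀ s, t₀ ≤ s → -(2 * κ) ≤ θ s → ∀ t, s ≤ t → -(2 * κ) ≤ θ t := by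
    intro s hs hθs t hst
    by_contra hlt
    push_neg at hlt
    have hs0 : (0:ℝ) ≤ s := le_trans ht₀ hs
    have hsubset : Icc s t ⊆ Ici (0:ℝ) := fun u hu => le_trans hs0 hu.1
    have hclosed : IsClosed (Icc s t ∩ θ ⁻¹' Ici (-(2*κ))) :=
      (hcontθ.mono hsubset).preimage_isClosed_of_isClosed isClosed_Icc isClosed_Ici
    have hne : (Icc s t ∩ θ ⁻¹' Ici (-(2*κ))).Nonempty := ⟨s, ⟨le_rfl, hst⟩, hθs⟩
    have hbdd : BddAbove (Icc s t ∩ θ ⁻¹' Ici (-(2*κ))) := ⟨t, fun u hu => hu.1.2⟩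
    set c := sSup (Icc s t ∩ θ ⁻¹' Ici (-(2*κ))) with hcdef
    have hcmem : c ∈ Icc s t ∩ θ ⁻¹' Ici (-(2*κ)) := hclosed.csSup_mem hne hbdd
    have hsc : s ≤ c := hcmem.1.1
    have hct : c ≤ t := hcmem.1.2
    have hθc : -(2*κ) ≤ θ c := hcmem.2
    have hIoo : ∀ x ∈ Ioo c t, HasDerivAt θ (E x * S x) x := fun x hx =>
      hDA x (lt_of_le_of_lt (le_trans hs0 hsc) hx.1)
    have hmono : MonotoneOn θ (Icc c t) := by
      apply monotoneOn_of_deriv_nonneg (convex_Icc _ _)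
        (hcontθ.mono (fun u hu => le_trans (le_trans hs0 hsc) hu.1))
      · rw [interior_Icc]
        exact fun x hx => ((hIoo x hx).differentiableAt).differentiableWithinAt
      · rw [interior_Icc]
        intro x hx
        rw [(hIoo x hx).deriv]
        have hθx : θ x < -(2*κ) := by
          by_contra hge
          push_neg at hge
          have hmem : x ∈ Icc s t ∩ θ ⁻¹' Ici (-(2*κ)) :=
            ⟨⟨le_trans hsc hx.1.le, hx.2.le⟩, hge⟩
          exact absurd (le_csSup hbdd hmem) (not_le.2 hx.1)
        have hhx := abs_le.1 (hhb x (le_trans hs (le_trans hsc hx.1.le)))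
        have hSx : 0 ≤ S x := by
          simp only [hSdef]
          linarith [hhx.1]
        have hEx : 0 ≤ E x := by simp only [hEdef]; positivity
        exact mul_nonneg hEx hSx
    have := hmono ⟨le_rfl, hct⟩ ⟨hct, le_rfl⟩ hct
    linarith
  -- escape
  have hesc : ∃ s ∈ Icc t₀ (t₀ + (Dr + 2) / (Dr + 1) * Dr ^ p * (2 * κ) ^ (-r)),
      -(2 * κ) ≤ θ s := by
    set C : ℝ := (Dr + 2) / (Dr + 1) * Dr ^ p * (2 * κ) ^ (-r) with hCdef
    clear_value C
    have hκr : 0 < (2 * κ) ^ (-r) := Real.rpow_pos_of_pos h2κ (-r)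
    have hCpos : 0 < C := by
      rw [hCdef]
      exact mul_pos (mul_pos (div_pos (by linarith) (by linarith)) hDp) hκr
    set T : ℝ := t₀ + C with hTdef
    clear_value T
    have hT : t₀ ≤ T := by rw [hTdef]; linarith
    by_contra hcon
    push_neg at hcon
    set c0 : ℝ := r/2 * Dr ^ p with hc0def
    set φ : ℝ → ℝ := fun t => (-θ t) ^ (-r) - c0 * t with hφdef
    clear_value c0 φ
    have hIccsub : Icc t₀ T ⊆ Ici (0:ℝ) := fun u hu => le_trans ht₀ hu.1
    have hu0 : ∀ x ∈ Icc t₀ T, 2*κ < -θ x := by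
      intro x hx
      have := hcon x hx
      linarith
    have hder : ∀ x ∈ Ioo t₀ T, HasDerivAt φ
        (E x * S x * (r * (-θ x) ^ (-r-1)) - c0) x := by
      intro x hx
      have hx0 : 0 < x := lt_of_le_of_lt ht₀ hx.1
      have hθx := hDA x hx0
      have hxI : x ∈ Icc t₀ T := ⟨hx.1.le, hx.2.le⟩
      have hne : -θ x ≠ 0 := ne_of_gt (lt_trans h2κ (hu0 x hxI))
      have h1 := (hθx.neg.rpow_const (p := -r) (Or.inl hne))
      have h2 := (hasDerivAt_id x).const_mul c0
      have h3 := h1.sub h2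
      rw [hφdef]
      refine h3.congr_deriv ?_
      simp only [Pi.neg_apply]
      ring
    have hcontφ : ContinuousOn φ (Icc t₀ T) := by
      rw [hφdef]
      apply ContinuousOn.sub
      · apply ContinuousOn.rpow_const ((hcontθ.mono hIccsub).neg)
        intro x hx
        exact Or.inl (ne_of_gt (lt_trans h2κ (hu0 x hx)))
      · exact (continuous_const.mul continuous_id).continuousOn
    have hmono : MonotoneOn φ (Icc t₀ T) := by
      apply monotoneOn_of_deriv_nonneg (convex_Icc _ _) hcontφ
      · rw [interior_Icc]
        exact fun x hx => ((hder x hx).differentiableAt).differentiableWithinAt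
      · rw [interior_Icc]
        intro x hx
        rw [(hder x hx).deriv]
        have hxmem : x ∈ Icc t₀ T := ⟨hx.1.le, hx.2.le⟩
        have hx0 : x ∈ Ici (0:ℝ) := hIccsub hxmem
        have hux := hu0 x hxmem
        have huxpos : 0 < -θ x := by linarith
        have hθneg : θ x < 0 := by linarith
        have hk := hkey x hx0 hθneg
        have hhx := abs_le.1 (hhb x hx.1.le)
        have hSx : (-θ x)/2 ≤ S x := by
          simp only [hSdef]
          linarith [hhx.1]
        have hur : 0 < (-θ x) ^ r := Real.rpow_pos_of_pos huxpos r
        have hlhs0 : 0 ≤ Dr ^ p * (-θ x) ^ r := mul_nonneg hDp.le hur.le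
        have hprod : Dr ^ p * (-θ x) ^ r * ((-θ x)/2) ≤ E x * S x :=
          mul_le_mul hk hSx (by linarith) (le_trans hlhs0 hk)
        have hw : 0 < (-θ x) ^ (-r-1) := Real.rpow_pos_of_pos huxpos _
        have hid : Dr ^ p * (-θ x) ^ r * ((-θ x)/2) * (r * (-θ x) ^ (-r-1)) = c0 := by
          have hθne : -θ x ≠ 0 := ne_of_gt huxpos
          have e1 : (-θ x) ^ r * (-θ x) ^ (-r-1) = (-θ x)⁻¹ := by
            rw [← Real.rpow_add huxpos, show r + (-r-1) = -1 by ring, Real.rpow_neg_one]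
          calc Dr ^ p * (-θ x) ^ r * ((-θ x)/2) * (r * (-θ x) ^ (-r-1))
              = r/2 * Dr ^ p * ((-θ x) ^ r * (-θ x) ^ (-r-1)) * (-θ x) := by ring
            _ = r/2 * Dr ^ p * (-θ x)⁻¹ * (-θ x) := by rw [e1]
            _ = r/2 * Dr ^ p := by rw [mul_assoc, inv_mul_cancel₀ hθne, mul_one]
            _ = c0 := hc0def.symm
        have hfin := mul_le_mul_of_nonneg_right hprod (mul_nonneg hr0.le hw.le)
        rw [hid] at hfin
        linarith
    have hmem0 : t₀ ∈ Icc t₀ T := ⟨le_rfl, hT⟩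
    have hmemT : T ∈ Icc t₀ T := ⟨hT, le_rfl⟩
    have hφle := hmono hmem0 hmemT hT
    simp only [hφdef] at hφle
    have hu0' := hu0 t₀ hmem0
    have huT := hu0 T hmemT
    have hφ0pos : 0 < (-θ t₀) ^ (-r) :=
      Real.rpow_pos_of_pos (by linarith) _
    have hφT : (-θ T) ^ (-r) ≤ (2*κ) ^ (-r) :=
      Real.rpow_le_rpow_of_nonpos h2κ huT.le (by linarith)
    have hcC : (2*κ) ^ (-r) ≤ c0 * C := by
      have hone : (1:ℝ) ≤ Dr ^ p := Real.one_le_rpow hDr1 hp0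
      have h2p : (1:ℝ) ≤ Dr ^ p * Dr ^ p := by
        simpa using mul_le_mul hone hone zero_le_one (le_trans zero_le_one hone)
      have hfrac : r/2 * ((Dr+2)/(Dr+1)) = 1 := by
        rw [hrdef]
        have h1 : Dr + 2 ≠ 0 := by intro hc; linarith
        have h2 : Dr + 1 ≠ 0 := by intro hc; linarith
        field_simp
      have hκr : 0 < (2 * κ) ^ (-r) := Real.rpow_pos_of_pos h2κ (-r)
      have heq : c0 * C = (r/2 * ((Dr+2)/(Dr+1))) * (Dr ^ p * Dr ^ p * (2*κ) ^ (-r)) := by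
        rw [hc0def, hCdef]; ring
      rw [heq, hfrac, one_mul]
      exact le_mul_of_one_le_left hκr.le h2p
    have hTc : c0 * T = c0 * t₀ + c0 * C := by rw [hTdef]; ring
    linarith
  intro t ht
  rw [neg_div, ← hrdef] at ht
  obtain ⟨s, hs, hθs⟩ := hesc
  have : -(2 * κ) ≤ θ t := hbar s hs.1 hθs t (le_trans hs.2 ht)
  rw [hθdef] at this
  exact this
end
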